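/- arXiv:2006.08277 — 5 statements merged into one kernel-verified Lean document; each statement's English description precedes it below -/
import Mathlib

section
/- If B is a non-meager subset of Cantor space 2^ℕ with the Baire property, then B is not G₀-independent; that is, there exist x, y ∈ B with (x, y) ∈ G₀. -/
open Filter Topology

/-- Concatenation of a finite binary string with a point of Cantor space. -/
def cat01 (l : List Bool) (c : ℕ → Bool) : ℕ → Bool :=
  fun k => if h : k < l.length then l.get ⟨k, h⟩ else c (k - l.length)

/-- The digraph `G₀` on Cantor space determined by the sequence of strings `s`. -/
def G0 (s : ℕ → List Bool) : Set ((ℕ → Bool) × (ℕ → Bool)) :=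
  {p | ∃ n : ℕ, ∃ c : ℕ → Bool,
    p = (cat01 (s n ++ [false]) c, cat01 (s n ++ [true]) c)}

/-- The basic clopen cylinder determined by a finite string. -/
def Cyl (l : List Bool) : Set (ℕ → Bool) := {x | ∀ i, (h : i < l.length) → x i = l.get ⟨i, h⟩}

lemma isOpen_cyl (l : List Bool) : IsOpen (Cyl l) := by
  have : Cyl l = ⋂ i : Fin l.length, (fun x : ℕ → Bool => x i) ⁻¹' {l.get i} := by
    ext x
    simp only [Cyl, Set.mem_setOf_eq, Set.mem_iInter, Set.mem_preimage, Set.mem_singleton_iff]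
    exact ⟨fun h i => h i i.2, fun h i hi => h ⟨i, hi⟩⟩
  rw [this]
  exact isOpen_iInter_of_finite fun i =>
    (isOpen_discrete _).preimage (continuous_apply (i : ℕ))

lemma cyl_mono {l l' : List Bool} (h : l <+: l') : Cyl l' ⊆ Cyl l := by
  intro x hx i hi
  have hi' : i < l'.length := lt_of_lt_of_le hi h.length_le
  rw [hx i hi']
  simp only [List.get_eq_getElem]
  exact (h.getElem hi).symm

lemma cat01_mem_cyl (l : List Bool) (c : ℕ → Bool) : cat01 l c ∈ Cyl l := by
  intro i hi
  simp [cat01, hi]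

lemma cat01_eq_of_mem {l : List Bool} {x : ℕ → Bool} (hx : x ∈ Cyl l) :
    cat01 l (fun k => x (k + l.length)) = x := by
  funext k
  by_cases h : k < l.length
  · simp only [cat01, dif_pos h]
    exact (hx k h).symm
  · simp only [cat01, dif_neg h]
    congr 1
    omega

/-- A point of an open set lies in a cylinder contained in the open set. -/
lemma exists_cyl_subset {U : Set (ℕ → Bool)} (hU : IsOpen U) {u : ℕ → Bool} (hu : u ∈ U) :
    ∃ l : List Bool, u ∈ Cyl l ∧ Cyl l ⊆ U := by
  obtain ⟨I, v, hIv, hsub⟩ := isOpen_pi_iff.mp hU u hu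
  classical
  set n : ℕ := (I.sup id) + 1 with hn
  refine ⟨List.ofFn (fun i : Fin n => u i), ?_, ?_⟩
  · intro i hi
    simp only [List.length_ofFn] at hi
    simp only [List.get_eq_getElem, List.getElem_ofFn]
  · intro x hx
    apply hsub
    intro i hi
    have hin : i < n := by
      have : i ≤ I.sup id := Finset.le_sup (f := id) hi
      omega
    have hlen : i < (List.ofFn (fun i : Fin n => u i)).length := by
      simp only [List.length_ofFn]; exact hin
    have := hx i hlen
    simp only [List.get_ofFn] at this
    simp only [this]
    exact (hIv i hi).2

/-- The homeomorphism of Cantor space flipping the `n`-th coordinate. -/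
def flipAt (n : ℕ) : (ℕ → Bool) ≃ₜ (ℕ → Bool) where
  toFun x := fun k => if k = n then !(x k) else x k
  invFun x := fun k => if k = n then !(x k) else x k
  left_inv x := by funext k; by_cases h : k = n <;> simp [h]
  right_inv x := by funext k; by_cases h : k = n <;> simp [h]
  continuous_toFun := continuous_pi fun k => by
    by_cases h : k = n
    · simp only [h, if_pos]
      exact (continuous_of_discreteTopology (f := Bool.not)).comp (continuous_apply n)
    · simp only [if_neg h]
      exact continuous_apply k
  continuous_invFun := continuous_pi fun k => by
    by_cases h : k = n
    · simp only [h, if_pos]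
      exact (continuous_of_discreteTopology (f := Bool.not)).comp (continuous_apply n)
    · simp only [if_neg h]
      exact continuous_apply k

lemma isMeagre_union {X : Type*} [TopologicalSpace X] {s t : Set X}
    (hs : IsMeagre s) (ht : IsMeagre t) : IsMeagre (s ∪ t) := by
  rw [IsMeagre, Set.compl_union]
  exact Filter.inter_mem hs ht

lemma open_nonempty_not_meagre {U : Set (ℕ → Bool)} (hU : IsOpen U) (hne : U.Nonempty) :
    ¬ IsMeagre U := by
  intro hm
  obtain ⟨x, hx, hxU⟩ := (dense_of_mem_residual hm).exists_mem_open hU hne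
  exact hx hxU

lemma flip_cat01 {n : ℕ} {l : List Bool} (hl : l.length = n) (c : ℕ → Bool) :
    flipAt n (cat01 (l ++ [false]) c) = cat01 (l ++ [true]) c := by
  funext k
  show (if k = n then !(cat01 (l ++ [false]) c k) else cat01 (l ++ [false]) c k)
      = cat01 (l ++ [true]) c k
  have hlen : (l ++ [false]).length = n + 1 := by simp [hl]
  have hlen' : (l ++ [true]).length = n + 1 := by simp [hl]
  by_cases hk : k = n
  · subst hk
    have h1 : k < (l ++ [false]).length := by omega
    have h2 : k < (l ++ [true]).length := by omega
    simp only [if_pos rfl, cat01, dif_pos h1, dif_pos h2, List.get_eq_getElem]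
    have e1 : (l ++ [false])[k] = false := by
      rw [List.getElem_append_right (by omega)]
      simp [hl]
    have e2 : (l ++ [true])[k] = true := by
      rw [List.getElem_append_right (by omega)]
      simp [hl]
    rw [e1, e2]
    rfl
  · rw [if_neg hk]
    by_cases h2 : k < n
    · have h1 : k < (l ++ [false]).length := by omega
      have h1' : k < (l ++ [true]).length := by omega
      have hkl : k < l.length := by omega
      simp only [cat01, dif_pos h1, dif_pos h1', List.get_eq_getElem]
      rw [List.getElem_append_left hkl, List.getElem_append_left hkl]
    · have h1 : ¬ k < (l ++ [false]).length := by omega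
      have h1' : ¬ k < (l ++ [true]).length := by omega
      simp only [cat01, hlen, hlen', dif_neg (show ¬ k < n+1 by omega)]

/-- A non-meager subset of Cantor space with the Baire property is not `G₀`-independent. -/
theorem stmt_0 (s : ℕ → List Bool)
    (hlen : ∀ n, (s n).length = n)
    (hdense : ∀ l : List Bool, ∃ n, l <+: s n)
    (B : Set (ℕ → Bool))
    (hBP : ∃ U : Set (ℕ → Bool), IsOpen U ∧ IsMeagre (symmDiff B U))
    (hB : ¬ IsMeagre B) :
    ∃ x ∈ B, ∃ y ∈ B, (x, y) ∈ G0 s := by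
  obtain ⟨U, hU, hM⟩ := hBP
  -- U is not meagre, hence nonempty
  have hUnm : ¬ IsMeagre U := by
    intro hUm
    apply hB
    refine (isMeagre_union hM hUm).mono ?_
    intro x hx
    by_cases h : x ∈ U
    · exact Or.inr h
    · exact Or.inl (Or.inl ⟨hx, h⟩)
  have hUne : U.Nonempty := by
    rcases Set.eq_empty_or_nonempty U with h | h
    · exact absurd (h ▸ IsMeagre.empty) hUnm
    · exact h
  obtain ⟨u, hu⟩ := hUne
  obtain ⟨t, hut, htU⟩ := exists_cyl_subset hU hu
  obtain ⟨n, htn⟩ := hdense t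
  -- the meagre "error" set inside Cyl t
  set M : Set (ℕ → Bool) := Cyl t \ B with hMdef
  have hMm : IsMeagre M := by
    refine hM.mono ?_
    intro x hx
    exact Or.inr ⟨htU hx.1, hx.2⟩
  have e := flipAt n
  have hMm' : IsMeagre ((flipAt n) ⁻¹' M) :=
    hMm.preimage_of_isOpenMap (flipAt n).continuous (flipAt n).isOpenMap
  -- the good set is nonempty
  have hopen : IsOpen (Cyl (s n ++ [false])) := isOpen_cyl _
  have hcne : (Cyl (s n ++ [false])).Nonempty := ⟨cat01 _ (fun _ => false), cat01_mem_cyl _ _⟩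
  have hA : (Cyl (s n ++ [false]) \ (M ∪ (flipAt n) ⁻¹' M)).Nonempty := by
    by_contra h
    rw [Set.not_nonempty_iff_eq_empty, Set.diff_eq_empty] at h
    exact open_nonempty_not_meagre hopen hcne ((isMeagre_union hMm hMm').mono h)
  obtain ⟨x, hxc, hxM⟩ := hA
  rw [Set.mem_union] at hxM
  push_neg at hxM
  -- x represents as a concatenation
  have hlen0 : (s n ++ [false]).length = n + 1 := by simp [hlen n]
  set c : ℕ → Bool := fun k => x (k + (s n ++ [false]).length) with hcdef
  have hxeq : cat01 (s n ++ [false]) c = x := cat01_eq_of_mem hxc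
  have hyeq : flipAt n x = cat01 (s n ++ [true]) c := by
    rw [← hxeq]
    exact flip_cat01 (hlen n) c
  -- memberships in B
  have hpre0 : t <+: s n ++ [false] := htn.trans (List.prefix_append _ _)
  have hpre1 : t <+: s n ++ [true] := htn.trans (List.prefix_append _ _)
  have hxB : x ∈ B := by
    by_contra h
    exact hxM.1 ⟨cyl_mono hpre0 hxc, h⟩
  have hyc : flipAt n x ∈ Cyl (s n ++ [true]) := hyeq ▸ cat01_mem_cyl _ _
  have hyB : flipAt n x ∈ B := by
    by_contra h
    exact hxM.2 ⟨cyl_mono hpre1 hyc, h⟩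
  exact ⟨x, hxB, flipAt n x, hyB, n, c, by rw [hxeq, hyeq]⟩
end

section
/- Let X be a Hausdorff space, G an analytic digraph on X (an irreflexive relation that is analytic as a subset of X × X), and R a reflexive Gδ binary relation on X. Then at least one of the following holds: (1) for every R-clique Y ⊆ X there is a countable coloring of the restriction of G to Y (a function c : Y → ℕ with c(x) ≠ c(y) whenever (x,y) ∈ G and x,y ∈ Y); or (2) there is a continuous map φ : 2^ℕ → X which is a homomorphism from G₀ to G (i.e., (φ(x), φ(y)) ∈ G whenever (x,y) ∈ G₀) and whose image is an R-clique. -/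
open Filter Topology

namespace G0D


/-- `l` is an initial segment of the sequence `z`. -/
def pre (l : List ℕ) (z : ℕ → ℕ) : Prop := ∀ i, i < l.length → l.getD i 0 = z i

/-- first `m` values of `z` as a list. -/
def tk (m : ℕ) (z : ℕ → ℕ) : List ℕ := (List.range m).map z

@[simp] lemma tk_length (m : ℕ) (z : ℕ → ℕ) : (tk m z).length = m := by simp [tk]

lemma tk_getD {m i : ℕ} (z : ℕ → ℕ) (h : i < m) : (tk m z).getD i 0 = z i := by
  rw [List.getD_eq_getElem _ _ (by simpa using h)]
  simp [tk]

lemma pre_tk (m : ℕ) (z : ℕ → ℕ) : pre (tk m z) z := by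
  intro i hi
  exact tk_getD z (by simpa using hi)

lemma tk_prefix {m m' : ℕ} (h : m ≤ m') (z : ℕ → ℕ) : tk m z <+: tk m' z := by
  have : tk m z = (tk m' z).take m := by
    rw [tk, tk, ← List.map_take, List.take_range, Nat.min_eq_left h]
  rw [this]
  exact List.take_prefix _ _

lemma pre_mono {l l' : List ℕ} {z : ℕ → ℕ} (h : l <+: l') (h' : pre l' z) : pre l z := by
  intro i hi
  have h2 : i < l'.length := lt_of_lt_of_le hi h.length_le
  rw [List.getD_eq_getElem _ _ hi, List.IsPrefix.getElem h hi, ← List.getD_eq_getElem _ _ h2]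
  exact h' i h2

lemma pre_prefix_tk {l : List ℕ} {z : ℕ → ℕ} {m : ℕ} (h : pre l z) (hm : l.length ≤ m) :
    l <+: tk m z := by
  have : l = tk l.length z := by
    apply List.ext_getElem (by simp)
    intro i h1 h2
    have := h i h1
    rw [List.getD_eq_getElem _ _ h1] at this
    rw [this]
    simp [tk]
  rw [this]
  exact tk_prefix hm z

/-- truncation of an infinite binary string after `n` bits. -/
def bnorm (n : ℕ) (t : ℕ → Bool) : ℕ → Bool := fun i => if i < n then t i else false

lemma bnorm_eq_of_agree {n : ℕ} {t t' : ℕ → Bool} (h : ∀ i < n, t i = t' i) :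
    bnorm n t = bnorm n t' := by
  funext i; by_cases hi : i < n <;> simp [bnorm, hi, h]

lemma bnorm_bnorm {n m : ℕ} (h : n ≤ m) (t : ℕ → Bool) :
    bnorm n (bnorm m t) = bnorm n t := by
  funext i; by_cases hi : i < n <;> simp [bnorm, hi]
  intro h'; omega

/-- Level-`n` approximations. -/
def Apx (n : ℕ) : Type :=
  ((Fin n → Bool) → List ℕ) × (∀ k : Fin n, ((Fin (n - k - 1) → Bool) → List ℕ))

instance (n : ℕ) : Countable (Apx n) := by
  unfold Apx; infer_instance

/-- vertex-string component of an approximation, as a function of infinite strings. -/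
def AU {n : ℕ} (a : Apx n) (t : ℕ → Bool) : List ℕ := a.1 (fun i => t i)

/-- witness-string component of an approximation. -/
def AV {n : ℕ} (a : Apx n) (k : ℕ) (w : ℕ → Bool) : List ℕ :=
  if h : k < n then a.2 ⟨k, h⟩ (fun i => w i) else []

lemma AU_ext {n : ℕ} (a : Apx n) {t t' : ℕ → Bool} (h : ∀ i < n, t i = t' i) :
    AU a t = AU a t' := by
  exact congrArg a.1 (funext fun i => h i i.2)

lemma AU_bnorm {n : ℕ} (a : Apx n) {m : ℕ} (h : n ≤ m) (t : ℕ → Bool) :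
    AU a (bnorm m t) = AU a t := by
  apply AU_ext; intro i hi; simp [bnorm]; intro h'; omega

lemma AV_ext {n : ℕ} (a : Apx n) {k : ℕ} {w w' : ℕ → Bool}
    (h : ∀ i < n - k - 1, w i = w' i) : AV a k w = AV a k w' := by
  unfold AV
  by_cases hk : k < n
  · rw [dif_pos hk, dif_pos hk]
    exact congrArg _ (funext fun i => h i i.2)
  · rw [dif_neg hk, dif_neg hk]

lemma AV_bnorm {n : ℕ} (a : Apx n) {k m : ℕ} (h : n - k - 1 ≤ m) (w : ℕ → Bool) :
    AV a k (bnorm m w) = AV a k w := by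
  apply AV_ext; intro i hi; simp [bnorm]; intro h'; omega



section Strings

variable (s : ℕ → List Bool)

def vx (k : ℕ) (i : Bool) (w : ℕ → Bool) : ℕ → Bool := cat01 (s k ++ [i]) w

def snp (n : ℕ) : ℕ → Bool := fun j => (s n).getD j false

lemma vx_apply_lt (hlen : ∀ n, (s n).length = n) {k j : ℕ} (i : Bool) (w : ℕ → Bool)
    (h : j < k) : vx s k i w j = (s k).getD j false := by
  have hj : j < (s k).length := by rw [hlen]; exact h
  have hl : j < (s k ++ [i]).length := by simp; omega
  unfold vx cat01
  rw [dif_pos hl, List.get_eq_getElem, List.getElem_append_left hj,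
    List.getD_eq_getElem _ _ hj]

lemma vx_apply_eq (hlen : ∀ n, (s n).length = n) {k : ℕ} (i : Bool) (w : ℕ → Bool) :
    vx s k i w k = i := by
  have hl : k < (s k ++ [i]).length := by simp [hlen]
  unfold vx cat01
  rw [dif_pos hl, List.get_eq_getElem]
  exact List.getElem_concat_length (hlen k).symm _

lemma vx_apply_gt (hlen : ∀ n, (s n).length = n) {k j : ℕ} (i : Bool) (w : ℕ → Bool)
    (h : k < j) : vx s k i w j = w (j - k - 1) := by
  have hl : ¬ j < (s k ++ [i]).length := by simp [hlen]; omega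
  unfold vx cat01
  rw [dif_neg hl]
  have hL : (s k ++ [i]).length = k + 1 := by simp [hlen]
  rw [hL]
  exact congrArg w (by omega)

lemma bnorm_vx (hlen : ∀ n, (s n).length = n) {n k : ℕ} (hk : k < n) (i : Bool)
    (w : ℕ → Bool) : bnorm n (vx s k i w) = vx s k i (bnorm (n - k - 1) w) := by
  funext j
  rcases lt_trichotomy j k with hj | hj | hj
  · have hjn : j < n := by omega
    simp only [bnorm, if_pos hjn]
    rw [vx_apply_lt s hlen i _ hj, vx_apply_lt s hlen i _ hj]
  · subst hj
    have hjn : j < n := hk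
    simp only [bnorm, if_pos hjn]
    rw [vx_apply_eq s hlen, vx_apply_eq s hlen]
  · rw [vx_apply_gt s hlen i _ hj]
    by_cases hjn : j < n
    · simp only [bnorm, if_pos hjn]
      rw [vx_apply_gt s hlen i _ hj]
      have : j - k - 1 < n - k - 1 := by omega
      simp [bnorm, this]
    · have h3 : ¬ (j - k - 1 < n - k - 1) := by omega
      simp only [bnorm, if_neg hjn, if_neg h3]

lemma bnorm_vx_top (hlen : ∀ n, (s n).length = n) {n : ℕ} (i : Bool) (w : ℕ → Bool) :
    bnorm n (vx s n i w) = snp s n := by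
  funext j
  by_cases hj : j < n
  · simp only [bnorm, if_pos hj, snp]
    rw [vx_apply_lt s hlen i _ hj]
  · simp only [bnorm, if_neg hj, snp]
    rw [List.getD_eq_default]
    rw [hlen]; omega

end Strings


section Core

variable {X : Type*} (s : ℕ → List Bool) (F : (ℕ → ℕ) → X × X) (pp : (ℕ → ℕ) → X)

/-- Configurations of level `n` over the set `B`. -/
def IsConf (n : ℕ) (B : Set X) (φ : (ℕ → Bool) → ℕ → ℕ) (ψ : ℕ → (ℕ → Bool) → ℕ → ℕ) :
    Prop :=
  (∀ k, k < n → ∀ w, F (ψ k w) = (pp (φ (vx s k false w)), pp (φ (vx s k true w)))) ∧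
  (∀ t, pp (φ t) ∈ B)

/-- Compatibility of a configuration with an approximation. -/
def Compat (n : ℕ) (a : Apx n) (φ : (ℕ → Bool) → ℕ → ℕ)
    (ψ : ℕ → (ℕ → Bool) → ℕ → ℕ) : Prop :=
  (∀ t, pre (AU a t) (φ (bnorm n t))) ∧
  (∀ k, k < n → ∀ w, pre (AV a k w) (ψ k (bnorm (n - k - 1) w)))

/-- One-step extension of approximations. -/
def OneStep {n : ℕ} (a : Apx n) (b : Apx (n + 1)) : Prop :=
  (∀ t, AU a t <+: AU b t) ∧ (∀ k, k < n → ∀ w, AV a k w <+: AV b k w)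

/-- `a` is terminal over `B`: no configuration is compatible with a one-step extension. -/
def Term (n : ℕ) (B : Set X) (a : Apx n) : Prop :=
  ¬ ∃ (b : Apx (n + 1)) (φ : (ℕ → Bool) → ℕ → ℕ) (ψ : ℕ → (ℕ → Bool) → ℕ → ℕ),
      OneStep a b ∧ IsConf s F pp (n + 1) B φ ψ ∧ Compat (n + 1) b φ ψ

/-- values realizable at the top position of a configuration compatible with `a`. -/
def Aset (n : ℕ) (B : Set X) (a : Apx n) : Set X :=
  {x | ∃ (φ : (ℕ → Bool) → ℕ → ℕ) (ψ : ℕ → (ℕ → Bool) → ℕ → ℕ),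
      IsConf s F pp n B φ ψ ∧ Compat n a φ ψ ∧ pp (φ (snp s n)) = x}

lemma IsConf.mono {n : ℕ} {B B' : Set X} (h : B ⊆ B') {φ ψ}
    (hc : IsConf s F pp n B φ ψ) : IsConf s F pp n B' φ ψ :=
  ⟨hc.1, fun t => h (hc.2 t)⟩

lemma Aset_mono {n : ℕ} {B B' : Set X} (h : B ⊆ B') (a : Apx n) :
    Aset s F pp n B a ⊆ Aset s F pp n B' a := by
  rintro x ⟨φ, ψ, h1, h2, h3⟩
  exact ⟨φ, ψ, h1.mono s F pp h, h2, h3⟩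

lemma Term_anti {n : ℕ} {B B' : Set X} (h : B ⊆ B') (a : Apx n)
    (ht : Term s F pp n B' a) : Term s F pp n B a := by
  rintro ⟨b, φ, ψ, h1, h2, h3⟩
  exact ht ⟨b, φ, ψ, h1, h2.mono s F pp h, h3⟩

/-- The combination lemma: a terminal approximation's value set is `G`-independent. -/
lemma combine (hlen : ∀ n, (s n).length = n) {n : ℕ} {B : Set X} {a : Apx n} {x y : X}
    (hx : x ∈ Aset s F pp n B a) (hy : y ∈ Aset s F pp n B a) {z₀ : ℕ → ℕ}
    (hz : F z₀ = (x, y)) : ¬ Term s F pp n B a := by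
  obtain ⟨φx, ψx, confx, compx, topx⟩ := hx
  obtain ⟨φy, ψy, confy, compy, topy⟩ := hy
  intro hterm
  refine hterm ⟨⟨fun t => a.1 (fun i => t ⟨i.1, Nat.lt_succ_of_lt i.2⟩),
    fun k w => if h : (k : ℕ) < n then
      a.2 ⟨k.1, h⟩ (fun i => w ⟨i.1, by have h2 : i.1 < n - k.1 - 1 := i.2; omega⟩) else []⟩,
    fun t => cond (t n) (φy (bnorm n t)) (φx (bnorm n t)),
    fun k w => if k < n then
        cond (w (n - k - 1)) (ψy k (bnorm (n - k - 1) w)) (ψx k (bnorm (n - k - 1) w))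
      else z₀, ?_, ?_, ?_⟩
  case _ => -- OneStep
    constructor
    · intro t
      exact List.prefix_refl _
    · intro k hk w
      have e : AV (⟨fun t => a.1 (fun i => t ⟨i.1, Nat.lt_succ_of_lt i.2⟩),
          fun k w => if h : (k : ℕ) < n then
            a.2 ⟨k.1, h⟩ (fun i => w ⟨i.1, by have h2 : i.1 < n - k.1 - 1 := i.2; omega⟩)
          else []⟩ : Apx (n+1)) k w = AV a k w := by
        unfold AV
        rw [dif_pos (show k < n + 1 by omega)]
      rw [e]
  case _ => -- IsConf
    constructor
    · intro k hk w
      rcases Nat.lt_succ_iff_lt_or_eq.mp hk with hk' | hk'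
      · have e1 : ∀ i : Bool, (fun t => cond (t n) (φy (bnorm n t)) (φx (bnorm n t)))
            (vx s k i w) = cond (w (n - k - 1)) (φy (vx s k i (bnorm (n - k - 1) w)))
            (φx (vx s k i (bnorm (n - k - 1) w))) := by
          intro i
          show cond (vx s k i w n) (φy (bnorm n (vx s k i w))) (φx (bnorm n (vx s k i w))) = _
          rw [vx_apply_gt s hlen i w hk', bnorm_vx s hlen hk']
        have e2 : (fun k w => if k < n then
            cond (w (n - k - 1)) (ψy k (bnorm (n - k - 1) w)) (ψx k (bnorm (n - k - 1) w))
            else z₀) k w = cond (w (n - k - 1)) (ψy k (bnorm (n - k - 1) w))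
            (ψx k (bnorm (n - k - 1) w)) := by
          show (if k < n then _ else _) = _
          rw [if_pos hk']
        rw [e2, e1 false, e1 true]
        cases hw : w (n - k - 1)
        · exact confx.1 k hk' _
        · exact confy.1 k hk' _
      · subst hk'
        have e2 : (fun k' w' => if k' < k then
            cond (w' (k - k' - 1)) (ψy k' (bnorm (k - k' - 1) w')) (ψx k' (bnorm (k - k' - 1) w'))
            else z₀) k w = z₀ := by
          show (if k < k then _ else _) = _
          rw [if_neg (lt_irrefl k)]
        have e1 : ∀ i : Bool, (fun t => cond (t k) (φy (bnorm k t)) (φx (bnorm k t)))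
            (vx s k i w) = cond i (φy (snp s k)) (φx (snp s k)) := by
          intro i
          show cond (vx s k i w k) (φy (bnorm k (vx s k i w))) (φx (bnorm k (vx s k i w))) = _
          rw [vx_apply_eq s hlen, bnorm_vx_top s hlen]
        rw [e2, e1 false, e1 true, hz]
        rw [show cond false (φy (snp s k)) (φx (snp s k)) = φx (snp s k) from rfl,
          show cond true (φy (snp s k)) (φx (snp s k)) = φy (snp s k) from rfl, topx, topy]
    · intro t
      show pp (cond (t n) (φy (bnorm n t)) (φx (bnorm n t))) ∈ B
      cases t n
      · exact confx.2 _
      · exact confy.2 _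
  case _ => -- Compat
    constructor
    · intro t
      show pre (AU a t) (cond (bnorm (n+1) t n) (φy (bnorm n (bnorm (n+1) t)))
        (φx (bnorm n (bnorm (n+1) t))))
      have hb : bnorm (n+1) t n = t n := by simp [bnorm]
      rw [hb, bnorm_bnorm (Nat.le_succ n)]
      cases t n
      · exact compx.1 t
      · exact compy.1 t
    · intro k hk w
      rcases Nat.lt_succ_iff_lt_or_eq.mp hk with hk' | hk'
      · have e : AV (⟨fun t => a.1 (fun i => t ⟨i.1, Nat.lt_succ_of_lt i.2⟩),
            fun k w => if h : (k : ℕ) < n then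
              a.2 ⟨k.1, h⟩ (fun i => w ⟨i.1, by have h2 : i.1 < n - k.1 - 1 := i.2; omega⟩)
            else []⟩ : Apx (n+1)) k w = AV a k w := by
          unfold AV
          rw [dif_pos (show k < n + 1 by omega)]
        rw [e]
        show pre (AV a k w) ((fun k w => if k < n then
            cond (w (n - k - 1)) (ψy k (bnorm (n - k - 1) w)) (ψx k (bnorm (n - k - 1) w))
            else z₀) k (bnorm (n + 1 - k - 1) w))
        have h1 : n + 1 - k - 1 = n - k := by omega
        rw [h1]
        have e2 : (fun k w => if k < n then
            cond (w (n - k - 1)) (ψy k (bnorm (n - k - 1) w)) (ψx k (bnorm (n - k - 1) w))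
            else z₀) k (bnorm (n - k) w) = cond (w (n - k - 1))
            (ψy k (bnorm (n - k - 1) w)) (ψx k (bnorm (n - k - 1) w)) := by
          show (if k < n then cond ((bnorm (n - k) w) (n - k - 1))
              (ψy k (bnorm (n - k - 1) (bnorm (n - k) w)))
              (ψx k (bnorm (n - k - 1) (bnorm (n - k) w))) else z₀) = _
          have hb : (bnorm (n - k) w) (n - k - 1) = w (n - k - 1) := by
            have : n - k - 1 < n - k := by omega
            simp [bnorm, this]
          rw [if_pos hk', hb, bnorm_bnorm (by omega : n - k - 1 ≤ n - k)]
        rw [e2]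
        cases hw : w (n - k - 1)
        · exact compx.2 k hk' w
        · exact compy.2 k hk' w
      · subst hk'
        have e : AV (⟨fun t => a.1 (fun i => t ⟨i.1, Nat.lt_succ_of_lt i.2⟩),
            fun k' w' => if h : (k' : ℕ) < k then
              a.2 ⟨k'.1, h⟩ (fun i => w' ⟨i.1, by have h2 : i.1 < k - k'.1 - 1 := i.2; omega⟩)
            else []⟩ : Apx (k+1)) k w = [] := by
          unfold AV
          rw [dif_pos (show k < k + 1 by omega)]
          show (if h : k < k then _ else ([] : List ℕ)) = _
          rw [dif_neg (lt_irrefl k)]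
        rw [e]
        intro i hi
        simp at hi

end Core

section Deriv

universe u

variable {X : Type u} (s : ℕ → List Bool) (F : (ℕ → ℕ) → X × X) (pp : (ℕ → ℕ) → X)
  (Y : Set X)

/-- One step of the derivative: remove all values of terminal approximations. -/
def Dop (B : Set X) : Set X :=
  (B ∩ Y) \ ⋃ (n : ℕ) (a : Apx n) (_ : Term s F pp n (B ∩ Y) a), Aset s F pp n (B ∩ Y) a

lemma Dop_subset (B : Set X) : Dop s F pp Y B ⊆ B ∩ Y := Set.diff_subset

/-- Transfinite iteration of the derivative. -/
noncomputable def hh : Ordinal.{u} → Set X :=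
  WellFounded.fix Ordinal.lt_wf
    (fun o ih => Dop s F pp Y (⋂ (o' : {o' // o' < o}), ih o' o'.2))

lemma hh_eq (o : Ordinal.{u}) :
    hh s F pp Y o = Dop s F pp Y (⋂ (o' : {o' // o' < o}), hh s F pp Y o') := by
  rw [hh, WellFounded.fix_eq]

lemma hh_anti {o' o : Ordinal.{u}} (h : o' < o) : hh s F pp Y o ⊆ hh s F pp Y o' := by
  rw [hh_eq s F pp Y o]
  refine subset_trans (subset_trans (Dop_subset s F pp Y _) Set.inter_subset_left) ?_
  exact Set.iInter_subset (fun o'' : {o'' // o'' < o} => hh s F pp Y o'') ⟨o', h⟩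

lemma hh_anti' {o' o : Ordinal.{u}} (h : o' ≤ o) : hh s F pp Y o ⊆ hh s F pp Y o' := by
  rcases eq_or_lt_of_le h with rfl | h
  · exact subset_rfl
  · exact hh_anti s F pp Y h

lemma exists_stab : ∃ o : Ordinal.{u},
    hh s F pp Y o = Dop s F pp Y (hh s F pp Y o) := by
  by_contra hcon
  push_neg at hcon
  have key : ∀ o₁ o₂ : Ordinal.{u}, o₁ < o₂ → hh s F pp Y o₁ = hh s F pp Y o₂ → False := by
    intro o₁ o₂ hlt he
    have hstep : hh s F pp Y (Order.succ o₁) = Dop s F pp Y (hh s F pp Y o₁) := by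
      have hiB : (⋂ (o'' : {o'' // o'' < Order.succ o₁}), hh s F pp Y o'') =
          hh s F pp Y o₁ := by
        refine subset_antisymm
          (Set.iInter_subset (fun o'' : {o'' // o'' < Order.succ o₁} => hh s F pp Y o'')
            ⟨o₁, Order.lt_succ o₁⟩) (Set.subset_iInter ?_)
        intro o''
        exact hh_anti' s F pp Y (Order.lt_succ_iff.mp o''.2)
      rw [hh_eq s F pp Y (Order.succ o₁), hiB]
    have h1 : hh s F pp Y o₂ ⊆ hh s F pp Y (Order.succ o₁) :=
      hh_anti' s F pp Y (Order.succ_le_of_lt hlt)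
    have h2 : hh s F pp Y (Order.succ o₁) ⊆ hh s F pp Y o₁ :=
      hh_anti s F pp Y (Order.lt_succ o₁)
    refine hcon o₁ (subset_antisymm ?_ ?_)
    · rw [← hstep]; rw [he]; exact h1
    · rw [← hstep]; exact h2
  have hinj : Function.Injective (hh s F pp Y) := by
    intro o₁ o₂ he
    by_contra hne
    rcases Ne.lt_or_gt hne with hlt | hlt
    · exact key o₁ o₂ hlt he
    · exact key o₂ o₁ hlt he.symm
  classical
  let m : Set X → Ordinal.{u} := fun A => if h : ∃ o, hh s F pp Y o = A then h.choose else 0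
  have hm : ∀ o, m (hh s F pp Y o) = o := by
    intro o
    have h1 : ∃ o', hh s F pp Y o' = hh s F pp Y o := ⟨o, rfl⟩
    simp only [m, dif_pos h1]
    exact hinj h1.choose_spec
  have h3 := Ordinal.lt_lsub m (hh s F pp Y (Ordinal.lsub m))
  rw [hm] at h3
  exact lt_irrefl _ h3

end Deriv

section Coloring

universe u

variable {X : Type u} (s : ℕ → List Bool) (F : (ℕ → ℕ) → X × X) (pp : (ℕ → ℕ) → X)
  (Y : Set X)

lemma coloring_of_empty_fix (hlen : ∀ n, (s n).length = n) {G : Set (X × X)}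
    (hG : Set.range F = G)
    (hpp1 : ∀ p ∈ G, ∃ z, pp z = p.1) (hpp2 : ∀ p ∈ G, ∃ z, pp z = p.2)
    {o₁ : Ordinal.{u}} (hA : ∀ z : ℕ → ℕ, pp z ∉ hh s F pp Y o₁) :
    ∃ c : Y → ℕ, ∀ x y : Y, ((x : X), (y : X)) ∈ G → c x ≠ c y := by
  classical
  have key : ∀ x : X, x ∈ Y → (∃ z, pp z = x) →
      ∃ (n : ℕ) (a : Apx n) (o : Ordinal.{u}),
        Term s F pp n ((⋂ (o' : {o' // o' < o}), hh s F pp Y o') ∩ Y) a ∧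
        x ∈ Aset s F pp n ((⋂ (o' : {o' // o' < o}), hh s F pp Y o') ∩ Y) a := by
    intro x hxY hz
    have hxE : ∃ o, x ∉ hh s F pp Y o := by
      refine ⟨o₁, fun hmem => ?_⟩
      obtain ⟨z, hz⟩ := hz
      exact hA z (hz ▸ hmem)
    set o := Ordinal.lt_wf.min {o | x ∉ hh s F pp Y o} hxE with ho
    have hxo : x ∉ hh s F pp Y o := Ordinal.lt_wf.min_mem _ hxE
    have hxlt : ∀ o' < o, x ∈ hh s F pp Y o' := by
      intro o' h'
      by_contra hcon
      exact Ordinal.lt_wf.not_lt_min _ hcon h'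
    have hxB : x ∈ (⋂ (o' : {o' // o' < o}), hh s F pp Y o') ∩ Y := by
      refine ⟨Set.mem_iInter.mpr fun o' => hxlt o' o'.2, hxY⟩
    rw [hh_eq] at hxo
    have hxU : x ∈ ⋃ (n : ℕ) (a : Apx n)
        (_ : Term s F pp n ((⋂ (o' : {o' // o' < o}), hh s F pp Y o') ∩ Y) a),
        Aset s F pp n ((⋂ (o' : {o' // o' < o}), hh s F pp Y o') ∩ Y) a := by
      by_contra hcon
      exact hxo ⟨hxB, hcon⟩
    simp only [Set.mem_iUnion] at hxU
    obtain ⟨n, a, hT, hAx⟩ := hxU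
    exact ⟨n, a, o, hT, hAx⟩
  choose nf af of hT hA2 using key
  obtain ⟨inj, hinj⟩ := Countable.exists_injective_nat (Option (Σ n, Apx n))
  refine ⟨fun x => if h : ∃ z, pp z = (x : X) then
    inj (some ⟨nf x x.2 h, af x x.2 h⟩) else inj none, ?_⟩
  intro x y hxy hceq
  have hx' : ∃ z, pp z = (x : X) := hpp1 _ hxy
  have hy' : ∃ z, pp z = (y : X) := hpp2 _ hxy
  dsimp only at hceq
  rw [dif_pos hx', dif_pos hy'] at hceq
  have hsome := hinj hceq
  have hsig : (⟨nf x x.2 hx', af x x.2 hx'⟩ : Σ n, Apx n) = ⟨nf y y.2 hy', af y y.2 hy'⟩ :=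
    Option.some.inj hsome
  obtain ⟨z₀, hz₀⟩ : ((x : X), (y : X)) ∈ Set.range F := by rw [hG]; exact hxy
  set Cx : Set X := (⋂ (o' : {o' // o' < of x x.2 hx'}), hh s F pp Y o') ∩ Y with hCx
  set Cy : Set X := (⋂ (o' : {o' // o' < of y y.2 hy'}), hh s F pp Y o') ∩ Y with hCy
  set σ₁ : Σ n, Apx n := ⟨nf x x.2 hx', af x x.2 hx'⟩ with hσ₁
  set σ₂ : Σ n, Apx n := ⟨nf y y.2 hy', af y y.2 hy'⟩ with hσ₂
  have hTx : Term s F pp σ₁.1 Cx σ₁.2 := hT x x.2 hx'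
  have hAx : (x : X) ∈ Aset s F pp σ₁.1 Cx σ₁.2 := hA2 x x.2 hx'
  have hTy : Term s F pp σ₂.1 Cy σ₂.2 := hT y y.2 hy'
  have hAy : (y : X) ∈ Aset s F pp σ₂.1 Cy σ₂.2 := hA2 y y.2 hy'
  rw [← hsig] at hTy hAy
  rcases le_total (of x x.2 hx') (of y y.2 hy') with hle | hle
  · have hsub : Cy ⊆ Cx := by
      refine Set.inter_subset_inter_left _ (Set.subset_iInter ?_)
      intro o'
      exact Set.iInter_subset (fun o'' : {o'' // o'' < of y y.2 hy'} => hh s F pp Y o'')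
        ⟨o'.1, lt_of_lt_of_le o'.2 hle⟩
    exact combine s F pp hlen hAx (Aset_mono s F pp hsub σ₁.2 hAy) hz₀ hTx
  · have hsub : Cx ⊆ Cy := by
      refine Set.inter_subset_inter_left _ (Set.subset_iInter ?_)
      intro o'
      exact Set.iInter_subset (fun o'' : {o'' // o'' < of x x.2 hx'} => hh s F pp Y o'')
        ⟨o'.1, lt_of_lt_of_le o'.2 hle⟩
    exact combine s F pp hlen (Aset_mono s F pp hsub σ₁.2 hAx) hAy hz₀ hTy

end Coloring

section Chain

universe u

variable {X : Type u} [TopologicalSpace X] (s : ℕ → List Bool) (F : (ℕ → ℕ) → X × X)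
  (pp : (ℕ → ℕ) → X) (V : ℕ → Set (X × X))

/-- Nice approximations: long strings and `V n`-small pairwise boxes. -/
def Nice (n : ℕ) (a : Apx n) : Prop :=
  (∀ t, n ≤ (AU a t).length) ∧ (∀ k, k < n → ∀ w, n ≤ (AV a k w).length) ∧
  (∀ t t' z z', n ≠ 0 → pre (AU a t) z → pre (AU a t') z' → (pp z, pp z') ∈ V n)

lemma cyl {f : (ℕ → ℕ) → X} (hf : Continuous f) {z : ℕ → ℕ} {W : Set X} (hW : IsOpen W)
    (hz : f z ∈ W) : ∃ m, ∀ z', (∀ i < m, z' i = z i) → f z' ∈ W := by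
  have h1 : IsOpen (f ⁻¹' W) := hW.preimage hf
  rw [isOpen_pi_iff] at h1
  obtain ⟨I, uu, hu, hsub⟩ := h1 z hz
  refine ⟨(I.sup id) + 1, fun z' hz' => ?_⟩
  apply hsub
  intro i hi
  have he : z' i = z i := hz' i (by have := Finset.le_sup (f := id) hi; simp only [id] at this; omega)
  rw [he]
  exact (hu i hi).2

lemma step_lemma (hlen : ∀ n, (s n).length = n) {S : Set X}
    (hNT : ∀ (n : ℕ) (a : Apx n) φ ψ, IsConf s F pp n S φ ψ → Compat n a φ ψ →
      ¬ Term s F pp n S a)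
    (hHV : ∀ m, ∀ x ∈ S, ∀ y ∈ S, (x, y) ∈ V m)
    (hVopen : ∀ m, IsOpen (V m)) (hppc : Continuous pp)
    {n : ℕ} {a : Apx n} {φ : (ℕ → Bool) → ℕ → ℕ} {ψ : ℕ → (ℕ → Bool) → ℕ → ℕ}
    (hconf : IsConf s F pp n S φ ψ) (hcomp : Compat n a φ ψ) :
    ∃ (b : Apx (n + 1)) (φ' : (ℕ → Bool) → ℕ → ℕ) (ψ' : ℕ → (ℕ → Bool) → ℕ → ℕ),
      OneStep a b ∧ Nice pp V (n + 1) b ∧ IsConf s F pp (n + 1) S φ' ψ' ∧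
      Compat (n + 1) b φ' ψ' := by
  classical
  obtain ⟨b₀, φ', ψ', hOS, hconf', hcomp'⟩ := Classical.not_not.mp (hNT n a φ ψ hconf hcomp)
  -- padding of finite binary strings
  set padB : (Fin (n + 1) → Bool) → ℕ → Bool :=
    fun t i => if h : i < n + 1 then t ⟨i, h⟩ else false with hpadB
  have hpadB_bnorm : ∀ t : ℕ → Bool, padB (fun i => t i) = bnorm (n + 1) t := by
    intro t
    funext i
    by_cases h : i < n + 1 <;> simp [padB, bnorm, h] <;> (intro h'; omega)
  have hpadB_id : ∀ t : Fin (n + 1) → Bool, bnorm (n + 1) (padB t) = padB t := by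
    intro t
    funext i
    by_cases h : i < n + 1 <;> simp [padB, bnorm, h] <;> (intro h'; omega)
  -- choose cylinder bounds for all ordered pairs
  have hWex : ∀ t t' : Fin (n + 1) → Bool, ∃ m1 m2 : ℕ, ∀ z z',
      (∀ i < m1, z i = φ' (padB t) i) → (∀ i < m2, z' i = φ' (padB t') i) →
      (pp z, pp z') ∈ V (n + 1) := by
    intro t t'
    obtain ⟨uo, vo, hu, hv, hpu, hpv, huv⟩ := isOpen_prod_iff.mp (hVopen (n + 1))
      (pp (φ' (padB t))) (pp (φ' (padB t')))
      (hHV (n + 1) _ (hconf'.2 _) _ (hconf'.2 _))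
    obtain ⟨m1, hm1⟩ := cyl hppc hu hpu
    obtain ⟨m2, hm2⟩ := cyl hppc hv hpv
    exact ⟨m1, m2, fun z z' h1 h2 => huv (Set.mk_mem_prod (hm1 z h1) (hm2 z' h2))⟩
  choose m1 m2 hm using hWex
  set L : (Fin (n + 1) → Bool) → ℕ := fun t =>
    (n + 1) + (AU b₀ (padB t)).length +
      Finset.univ.sup (fun t' => max (m1 t t') (m2 t' t)) with hL
  set padV : ∀ k : Fin (n + 1), (Fin (n + 1 - k - 1) → Bool) → ℕ → Bool :=
    fun k w i => if h : i < n + 1 - k - 1 then w ⟨i, h⟩ else false with hpadV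
  set bb : Apx (n + 1) := ⟨fun t => tk (L t) (φ' (padB t)),
    fun k w => tk ((n + 1) + (AV b₀ (k : ℕ) (padV k w)).length) (ψ' (k : ℕ) (padV k w))⟩
    with hbb
  have hAUbb : ∀ t : ℕ → Bool,
      AU bb t = tk (L (fun i => t i)) (φ' (bnorm (n + 1) t)) := by
    intro t
    show tk (L (fun i => t i)) (φ' (padB (fun i => t i))) = _
    rw [hpadB_bnorm]
  have hpadVb : ∀ (k : ℕ) (hk : k < n + 1) (w : ℕ → Bool),
      padV ⟨k, hk⟩ (fun i => w i) = bnorm (n + 1 - k - 1) w := by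
    intro k hk w
    funext i
    show (if h : i < n + 1 - k - 1 then w i else false) = _
    by_cases h : i < n + 1 - k - 1 <;> simp [bnorm, h]
  have hAVbb : ∀ (k : ℕ), k < n + 1 → ∀ (w : ℕ → Bool),
      AV bb k w = tk ((n + 1) + (AV b₀ k (bnorm (n + 1 - k - 1) w)).length)
        (ψ' k (bnorm (n + 1 - k - 1) w)) := by
    intro k hk w
    show (if h : k < n + 1 then bb.2 ⟨k, h⟩ (fun i => w i) else []) = _
    rw [dif_pos hk]
    show tk ((n + 1) + (AV b₀ k (padV ⟨k, hk⟩ (fun i => w i))).length)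
      (ψ' k (padV ⟨k, hk⟩ (fun i => w i))) = _
    rw [hpadVb k hk w]
  refine ⟨bb, φ', ψ', ?_, ?_, hconf', ?_⟩
  · -- OneStep
    constructor
    · intro t
      refine (hOS.1 t).trans ?_
      rw [hAUbb t]
      refine pre_prefix_tk (hcomp'.1 t) ?_
      have he : AU b₀ (padB (fun i => t i)) = AU b₀ t := by
        apply AU_ext
        intro i hi
        simp [padB, hi]; intro; omega
      simp only [hL]
      rw [he]
      omega
    · intro k hk w
      refine (hOS.2 k hk w).trans ?_
      rw [hAVbb k (by omega) w]
      have h2 : AV b₀ k (bnorm (n + 1 - k - 1) w) = AV b₀ k w :=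
        AV_bnorm b₀ (le_refl _) w
      rw [h2]
      exact pre_prefix_tk (hcomp'.2 k (by omega) w) (by omega)
  · -- Nice
    refine ⟨?_, ?_, ?_⟩
    · intro t
      rw [hAUbb t, tk_length]
      simp only [hL]
      omega
    · intro k hk w
      rw [hAVbb k hk w, tk_length]
      omega
    · intro t t' z z' _ hz hz'
      rw [hAUbb t] at hz
      rw [hAUbb t'] at hz'
      set tf : Fin (n + 1) → Bool := fun i => t i with htf
      set tf' : Fin (n + 1) → Bool := fun i => t' i with htf'
      have h5 : max (m1 tf tf') (m2 tf' tf) ≤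
          Finset.univ.sup (fun t'' => max (m1 tf t'') (m2 t'' tf)) :=
        Finset.le_sup (f := fun t'' => max (m1 tf t'') (m2 t'' tf)) (Finset.mem_univ tf')
      have h5' : max (m1 tf' tf) (m2 tf tf') ≤
          Finset.univ.sup (fun t'' => max (m1 tf' t'') (m2 t'' tf')) :=
        Finset.le_sup (f := fun t'' => max (m1 tf' t'') (m2 t'' tf')) (Finset.mem_univ tf)
      have h6 : m1 tf tf' ≤ max (m1 tf tf') (m2 tf' tf) := le_max_left _ _
      have h6' : m2 tf tf' ≤ max (m1 tf' tf) (m2 tf tf') := le_max_right _ _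
      have hL1 : m1 tf tf' ≤ L tf := by
        simp only [hL]
        omega
      have hL2 : m2 tf tf' ≤ L tf' := by
        simp only [hL]
        omega
      apply hm tf tf' z z'
      · intro i hi
        have hiL : i < L tf := lt_of_lt_of_le hi hL1
        have h3 := hz i (by rw [tk_length]; exact hiL)
        rw [tk_getD _ hiL] at h3
        rw [← h3, ← hpadB_bnorm t]
      · intro i hi
        have hiL : i < L tf' := lt_of_lt_of_le hi hL2
        have h3 := hz' i (by rw [tk_length]; exact hiL)
        rw [tk_getD _ hiL] at h3
        rw [← h3, ← hpadB_bnorm t']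
  · -- Compat
    constructor
    · intro t
      rw [hAUbb t]
      exact pre_tk _ _
    · intro k hk w
      rw [hAVbb k hk w]
      exact pre_tk _ _

end Chain

section Limit

universe u

variable {X : Type u} [TopologicalSpace X] [T2Space X] (s : ℕ → List Bool)
  (F : (ℕ → ℕ) → X × X) (pp : (ℕ → ℕ) → X) (V : ℕ → Set (X × X))

lemma getD_prefix {l l' : List ℕ} (h : l <+: l') {i : ℕ} (hi : i < l.length) :
    l.getD i 0 = l'.getD i 0 := by
  rw [List.getD_eq_getElem _ _ hi,
    List.getD_eq_getElem _ _ (lt_of_lt_of_le hi h.length_le)]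
  exact List.IsPrefix.getElem h hi

lemma homo_of_fix (hlen : ∀ n, (s n).length = n) {G : Set (X × X)}
    (hG : Set.range F = G) (hFc : Continuous F) (hppc : Continuous pp)
    (hVopen : ∀ m, IsOpen (V m)) (hVanti : ∀ m n', m ≤ n' → V n' ⊆ V m)
    {R : Set (X × X)} (hVR : ∀ p : X × X, (∀ m, p ∈ V m) → p ∈ R)
    {S Y : Set X} (hfix : S = Dop s F pp Y S)
    (hHV : ∀ m, ∀ x ∈ S, ∀ y ∈ S, (x, y) ∈ V m)
    (hne : ∃ z, pp z ∈ S) :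
    ∃ φ : (ℕ → Bool) → X, Continuous φ ∧
      (∀ p ∈ G0 s, (φ p.1, φ p.2) ∈ G) ∧
      (∀ x ∈ Set.range φ, ∀ y ∈ Set.range φ, x ≠ y → (x, y) ∈ R) := by
  classical
  obtain ⟨z₀, hz₀⟩ := hne
  -- no approximation compatible with a configuration over S is terminal
  have hSY : S ⊆ Y := by
    rw [hfix]
    exact (Dop_subset s F pp Y S).trans Set.inter_subset_right
  have hSS : S ∩ Y = S := Set.inter_eq_left.mpr hSY
  have hNT : ∀ (n : ℕ) (a : Apx n) φ ψ, IsConf s F pp n S φ ψ → Compat n a φ ψ →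
      ¬ Term s F pp n S a := by
    intro n a φ ψ hconf hcomp hterm
    have hx : pp (φ (snp s n)) ∈ Aset s F pp n S a := ⟨φ, ψ, hconf, hcomp, rfl⟩
    have hxS : pp (φ (snp s n)) ∈ S := hconf.2 _
    have h2 : pp (φ (snp s n)) ∈ Dop s F pp Y S := hfix ▸ hxS
    refine h2.2 ?_
    rw [hSS]
    simp only [Set.mem_iUnion]
    exact ⟨n, a, hterm, hx⟩
  -- the base of the chain
  set a₀ : Apx 0 := ⟨fun _ => [], fun k => k.elim0⟩ with ha₀
  have hN₀ : Nice pp V 0 a₀ :=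
    ⟨fun t => Nat.zero_le _, fun k hk => absurd hk (Nat.not_lt_zero k),
     fun t t' z z' h0 => absurd rfl h0⟩
  have hC₀ : IsConf s F pp 0 S (fun _ => z₀) (fun _ _ => z₀) :=
    ⟨fun k hk => absurd hk (Nat.not_lt_zero k), fun t => hz₀⟩
  have hCp₀ : Compat 0 a₀ (fun _ => z₀) (fun _ _ => z₀) := by
    constructor
    · intro t i hi
      exact absurd hi (by simp [AU, ha₀])
    · intro k hk
      exact absurd hk (Nat.not_lt_zero k)
  -- build the chain by dependent choice
  have hstep : ∀ (n : ℕ)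
      (q : {q : Apx n × ((ℕ → Bool) → ℕ → ℕ) × (ℕ → (ℕ → Bool) → ℕ → ℕ) //
        Nice pp V n q.1 ∧ IsConf s F pp n S q.2.1 q.2.2 ∧ Compat n q.1 q.2.1 q.2.2}),
      ∃ q' : {q' : Apx (n+1) × ((ℕ → Bool) → ℕ → ℕ) × (ℕ → (ℕ → Bool) → ℕ → ℕ) //
        Nice pp V (n+1) q'.1 ∧ IsConf s F pp (n+1) S q'.2.1 q'.2.2 ∧
          Compat (n+1) q'.1 q'.2.1 q'.2.2},
      OneStep q.1.1 q'.1.1 := by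
    intro n q
    obtain ⟨b, φ', ψ', hOS, hN, hC, hCp⟩ :=
      step_lemma s F pp V hlen hNT hHV hVopen hppc q.2.2.1 q.2.2.2
    exact ⟨⟨⟨b, φ', ψ'⟩, hN, hC, hCp⟩, hOS⟩
  obtain ⟨g, hgs⟩ : ∃ g : ∀ n, {q : Apx n × ((ℕ → Bool) → ℕ → ℕ) ×
      (ℕ → (ℕ → Bool) → ℕ → ℕ) //
        Nice pp V n q.1 ∧ IsConf s F pp n S q.2.1 q.2.2 ∧ Compat n q.1 q.2.1 q.2.2},
      ∀ n, OneStep (g n).1.1 (g (n+1)).1.1 :=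
    ⟨fun n => Nat.rec ⟨⟨a₀, fun _ => z₀, fun _ _ => z₀⟩, hN₀, hC₀, hCp₀⟩
      (fun n q => (hstep n q).choose) n, fun n => (hstep n _).choose_spec⟩
  set A : ∀ n, Apx n := fun n => (g n).1.1 with hA
  set Φ : ℕ → (ℕ → Bool) → ℕ → ℕ := fun n => (g n).1.2.1 with hΦ
  set Ψ : ℕ → ℕ → (ℕ → Bool) → ℕ → ℕ := fun n => (g n).1.2.2 with hΨ
  have hNice : ∀ n, Nice pp V n (A n) := fun n => (g n).2.1
  have hconf : ∀ n, IsConf s F pp n S (Φ n) (Ψ n) := fun n => (g n).2.2.1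
  have hcomp : ∀ n, Compat n (A n) (Φ n) (Ψ n) := fun n => (g n).2.2.2
  -- coherence of the chain
  have hmono : ∀ (n m : ℕ), n ≤ m → ∀ t, AU (A n) t <+: AU (A m) t := by
    intro n m h t
    induction m, h using Nat.le_induction with
    | base => exact List.prefix_refl _
    | succ m hm ih => exact ih.trans ((hgs m).1 t)
  have hmonoV : ∀ (k n m : ℕ), k < n → n ≤ m → ∀ w, AV (A n) k w <+: AV (A m) k w := by
    intro k n m hk h w
    induction m, h using Nat.le_induction with
    | base => exact List.prefix_refl _
    | succ m hm ih => exact ih.trans ((hgs m).2 k (by omega) w)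
  -- the limit branches
  set zf : (ℕ → Bool) → ℕ → ℕ := fun c i => (AU (A (i+1)) c).getD i 0 with hzfdef
  have hzf : ∀ n c, pre (AU (A n) c) (zf c) := by
    intro n c i hi
    rcases le_total n (i+1) with h | h
    · exact getD_prefix (hmono n (i+1) h c) hi
    · exact (getD_prefix (hmono (i+1) n h c)
        (lt_of_lt_of_le (Nat.lt_succ_self i) ((hNice (i+1)).1 c))).symm
  have hzc : Continuous zf := by
    apply continuous_pi
    intro i
    have : (fun c => zf c i) =
        (fun v : Fin (i+1) → Bool => ((A (i+1)).1 v).getD i 0) ∘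
          (fun c (j : Fin (i+1)) => c j) := rfl
    rw [this]
    exact Continuous.comp continuous_of_discreteTopology
      (continuous_pi (fun j => continuous_apply (j : ℕ)))
  refine ⟨fun c => pp (zf c), hppc.comp hzc, ?_, ?_⟩
  · -- homomorphism property
    rintro p ⟨k, c, rfl⟩
    have hv1 : cat01 (s k ++ [false]) c = vx s k false c := rfl
    have hv2 : cat01 (s k ++ [true]) c = vx s k true c := rfl
    simp only [hv1, hv2]
    set ζ : ℕ → ℕ := fun i => (AV (A (k+i+2)) k c).getD i 0 with hζdef
    have hζ : ∀ n, k < n → pre (AV (A n) k c) ζ := by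
      intro n hkn i hi
      rcases le_total n (k+i+2) with h | h
      · exact getD_prefix (hmonoV k n (k+i+2) hkn h c) hi
      · exact (getD_prefix (hmonoV k (k+i+2) n (by omega) h c)
          (lt_of_lt_of_le (by omega) ((hNice (k+i+2)).2.1 k (by omega) c))).symm
    have h1 : Filter.Tendsto (fun n => Ψ n k (bnorm (n - k - 1) c)) Filter.atTop
        (nhds ζ) := by
      rw [tendsto_pi_nhds]
      intro i
      refine Filter.Tendsto.congr' ?_
        (tendsto_const_nhds : Filter.Tendsto (fun _ => ζ i) Filter.atTop _)
      rw [Filter.eventuallyEq_iff_exists_mem]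
      refine ⟨{n | max (k+1) (i+1) ≤ n}, Filter.mem_atTop _, ?_⟩
      intro n hn
      have hkn : k < n := by simp at hn; omega
      have hin : i < n := by simp at hn; omega
      have h3 := (hcomp n).2 k hkn c i
        (lt_of_lt_of_le hin ((hNice n).2.1 k hkn c))
      have h4 := hζ n hkn i (lt_of_lt_of_le hin ((hNice n).2.1 k hkn c))
      dsimp only
      rw [← h3, h4]
    have h2 : Filter.Tendsto (fun n => F (Ψ n k (bnorm (n - k - 1) c))) Filter.atTop
        (nhds (F ζ)) := (hFc.tendsto ζ).comp h1
    have hseq : ∀ i : Bool, Filter.Tendsto (fun n => pp (Φ n (bnorm n (vx s k i c))))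
        Filter.atTop (nhds (pp (zf (vx s k i c)))) := by
      intro i
      refine (hppc.tendsto _).comp ?_
      rw [tendsto_pi_nhds]
      intro j
      refine Filter.Tendsto.congr' ?_
        (tendsto_const_nhds : Filter.Tendsto (fun _ => zf (vx s k i c) j) Filter.atTop _)
      rw [Filter.eventuallyEq_iff_exists_mem]
      refine ⟨{n | j + 1 ≤ n}, Filter.mem_atTop _, ?_⟩
      intro n hn
      have hjn : j < n := hn
      have h5 := (hcomp n).1 (vx s k i c) j
        (lt_of_lt_of_le hjn ((hNice n).1 (vx s k i c)))
      have h6 := hzf n (vx s k i c) j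
        (lt_of_lt_of_le hjn ((hNice n).1 (vx s k i c)))
      dsimp only
      rw [← h5, h6]
    have h7 : Filter.Tendsto (fun n => F (Ψ n k (bnorm (n - k - 1) c))) Filter.atTop
        (nhds (pp (zf (vx s k false c)), pp (zf (vx s k true c)))) := by
      refine Filter.Tendsto.congr' ?_ ((hseq false).prodMk_nhds (hseq true))
      rw [Filter.eventuallyEq_iff_exists_mem]
      refine ⟨{n | k + 1 ≤ n}, Filter.mem_atTop _, ?_⟩
      intro n hn
      have hkn : k < n := hn
      have h8 := (hconf n).1 k hkn (bnorm (n - k - 1) c)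
      rw [← bnorm_vx s hlen hkn false c, ← bnorm_vx s hlen hkn true c] at h8
      dsimp only
      exact h8.symm
    have h9 : F ζ = (pp (zf (vx s k false c)), pp (zf (vx s k true c))) :=
      tendsto_nhds_unique h2 h7
    show (pp (zf (vx s k false c)), pp (zf (vx s k true c))) ∈ G
    rw [← h9, ← hG]
    exact ⟨ζ, rfl⟩
  · -- the range is an `R`-clique
    rintro x ⟨c, rfl⟩ y ⟨d, rfl⟩ hne'
    apply hVR
    intro m
    exact hVanti m (m+1) (by omega)
      ((hNice (m+1)).2.2 c d (zf c) (zf d) (by omega) (hzf (m+1) c) (hzf (m+1) d))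

end Limit

end G0D

open G0D in
/-- The `G₀`-dichotomy within cliques. -/
theorem stmt_2 {X : Type*} [TopologicalSpace X] [T2Space X]
    (s : ℕ → List Bool)
    (hlen : ∀ n, (s n).length = n)
    (hdense : ∀ l : List Bool, ∃ n, l <+: s n)
    (G : Set (X × X)) (hGirr : ∀ x : X, (x, x) ∉ G)
    (hGanal : MeasureTheory.AnalyticSet G)
    (R : Set (X × X)) (hRrefl : ∀ x : X, (x, x) ∈ R) (hRGδ : IsGδ R) :
    (∀ Y : Set X, (∀ x ∈ Y, ∀ y ∈ Y, x ≠ y → (x, y) ∈ R) →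
      ∃ c : Y → ℕ, ∀ x y : Y, ((x : X), (y : X)) ∈ G → c x ≠ c y) ∨
    (∃ φ : (ℕ → Bool) → X, Continuous φ ∧
      (∀ p ∈ G0 s, (φ p.1, φ p.2) ∈ G) ∧
      (∀ x ∈ Set.range φ, ∀ y ∈ Set.range φ, x ≠ y → (x, y) ∈ R)) := by
  classical
  -- the Gδ structure of `R`
  obtain ⟨U, hUopen, hUeq⟩ := IsGδ.eq_iInter_nat hRGδ
  set V : ℕ → Set (X × X) :=
    fun m => ⋂ j ∈ Finset.range (m + 1), (U j ∩ Prod.swap ⁻¹' (U j)) with hV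
  have hVopen : ∀ m, IsOpen (V m) := by
    intro m
    exact isOpen_biInter_finset
      (fun j _ => (hUopen j).inter ((hUopen j).preimage continuous_swap))
  have hVanti : ∀ m n', m ≤ n' → V n' ⊆ V m := by
    intro m n' hmn p hp
    simp only [hV, Set.mem_iInter] at hp ⊢
    intro j hj
    exact hp j (by simp at hj ⊢; omega)
  have hVR : ∀ p : X × X, (∀ m, p ∈ V m) → p ∈ R := by
    intro p hp
    rw [hUeq]
    refine Set.mem_iInter.mpr fun j => ?_
    have := hp j
    simp only [hV, Set.mem_iInter] at this
    exact (this j (by simp)).1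
  have hVclique : ∀ (Y : Set X), (∀ x ∈ Y, ∀ y ∈ Y, x ≠ y → (x, y) ∈ R) →
      ∀ m, ∀ x ∈ Y, ∀ y ∈ Y, (x, y) ∈ V m := by
    intro Y hY m x hx y hy
    simp only [hV, Set.mem_iInter]
    intro j _
    by_cases hxy : x = y
    · subst hxy
      have h1 : (x, x) ∈ R := hRrefl x
      rw [hUeq] at h1
      have h2 := Set.mem_iInter.mp h1 j
      exact ⟨h2, h2⟩
    · have h1 : (x, y) ∈ R := hY x hx y hy hxy
      have h2 : (y, x) ∈ R := hY y hy x hx (Ne.symm hxy)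
      rw [hUeq] at h1 h2
      exact ⟨Set.mem_iInter.mp h1 j, Set.mem_iInter.mp h2 j⟩
  -- the empty case
  by_cases hGe : G = ∅
  · left
    intro Y hY
    exact ⟨fun _ => 0, fun x y hxy => by rw [hGe] at hxy; exact hxy.elim⟩
  -- the parametrization of `G`
  rw [MeasureTheory.AnalyticSet] at hGanal
  obtain ⟨F, hFc, hFrange⟩ := hGanal.resolve_left hGe
  -- the vertex parametrization
  set pp : (ℕ → ℕ) → X := fun z =>
    if z 0 = 0 then (F (fun i => z (i + 1))).1 else (F (fun i => z (i + 1))).2 with hpp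
  have htail : Continuous (fun z : ℕ → ℕ => (fun i => z (i + 1))) :=
    continuous_pi (fun i => continuous_apply (i + 1))
  have hppc : Continuous pp := by
    refine continuous_if (fun a ha => ?_) ?_ ?_
    · exfalso
      have hclopen : IsClopen {z : ℕ → ℕ | z 0 = 0} :=
        (isClopen_discrete ({0} : Set ℕ)).preimage (continuous_apply 0)
      rw [hclopen.frontier_eq] at ha
      exact ha
    · exact (continuous_fst.comp (hFc.comp htail)).continuousOn
    · exact (continuous_snd.comp (hFc.comp htail)).continuousOn
  have hpp1 : ∀ p ∈ G, ∃ z, pp z = p.1 := by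
    rintro p hp
    rw [← hFrange] at hp
    obtain ⟨w, rfl⟩ := hp
    refine ⟨fun i => Nat.casesOn i 0 (fun j => w j), ?_⟩
    rw [hpp]
    rfl
  have hpp2 : ∀ p ∈ G, ∃ z, pp z = p.2 := by
    rintro p hp
    rw [← hFrange] at hp
    obtain ⟨w, rfl⟩ := hp
    refine ⟨fun i => Nat.casesOn i 1 (fun j => w j), ?_⟩
    rw [hpp]
    rfl
  -- main case split
  by_cases hHom : ∃ φ : (ℕ → Bool) → X, Continuous φ ∧
      (∀ p ∈ G0 s, (φ p.1, φ p.2) ∈ G) ∧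
      (∀ x ∈ Set.range φ, ∀ y ∈ Set.range φ, x ≠ y → (x, y) ∈ R)
  · exact Or.inr hHom
  left
  intro Y hY
  obtain ⟨o₁, ho₁⟩ := exists_stab s F pp Y
  by_cases hSne : ∃ z, pp z ∈ hh s F pp Y o₁
  · exfalso
    apply hHom
    refine homo_of_fix s F pp V hlen hFrange hFc hppc hVopen hVanti hVR ho₁ ?_ hSne
    · intro m x hx y hy
      have hSY : hh s F pp Y o₁ ⊆ Y := by
        rw [ho₁]
        exact (Dop_subset s F pp Y _).trans Set.inter_subset_right
      exact hVclique Y hY m x (hSY hx) y (hSY hy)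
  · push_neg at hSne
    exact coloring_of_empty_fix s F pp Y hlen hFrange hpp1 hpp2 hSne
end

section
/- Every Li–Yorke chaotic Polish dynamical system admits a scrambled Cantor set: if (X, f) is a dynamical system on a Polish metric space X with an uncountable scrambled set, then there exists a Cantor set C ⊆ X that is scrambled. -/
open Filter Topology

/-- `x` and `y` are proximal under `f`. -/
def Proximal {X : Type*} [MetricSpace X] (f : X → X) (x y : X) : Prop :=
  Filter.liminf (fun n => edist (f^[n] x) (f^[n] y)) Filter.atTop = 0

/-- `x` and `y` are asymptotic under `f`. -/
def Asymptotic {X : Type*} [MetricSpace X] (f : X → X) (x y : X) : Prop :=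
  Filter.limsup (fun n => edist (f^[n] x) (f^[n] y)) Filter.atTop = 0

/-- A set is scrambled if all pairs of distinct points in it are Li–Yorke. -/
def Scrambled {X : Type*} [MetricSpace X] (f : X → X) (Y : Set X) : Prop :=
  ∀ x ∈ Y, ∀ y ∈ Y, x ≠ y → Proximal f x y ∧ ¬ Asymptotic f x y

open scoped ENNReal

namespace LY

noncomputable def phi {X : Type*} [MetricSpace X] (f : X → X) (u v : X) : ℝ≥0∞ :=
  Filter.limsup (fun n => edist (f^[n] u) (f^[n] v)) Filter.atTop

variable {X : Type*} [MetricSpace X]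

lemma phi_self (f : X → X) (u : X) : phi f u u = 0 := by
  simp [phi]

lemma phi_comm (f : X → X) (u v : X) : phi f u v = phi f v u := by
  simp [phi, edist_comm]

lemma limsup_add_le' (u v : ℕ → ℝ≥0∞) :
    Filter.limsup (fun n => u n + v n) Filter.atTop ≤
      Filter.limsup u Filter.atTop + Filter.limsup v Filter.atTop := by
  set A := Filter.limsup u Filter.atTop with hAdef
  set B := Filter.limsup v Filter.atTop with hBdef
  rcases eq_top_or_lt_top A with hA | hA
  · rw [hA, top_add]; exact le_top
  rcases eq_top_or_lt_top B with hB | hB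
  · rw [hB, add_top]; exact le_top
  refine ENNReal.le_of_forall_pos_le_add fun ε hε hfin => ?_
  have hε2 : ((ε:ℝ≥0∞)/2) ≠ 0 := by
    simp [ENNReal.div_eq_zero_iff]
    exact_mod_cast hε.ne'
  have h1 : ∀ᶠ n in Filter.atTop, u n < A + (ε:ℝ≥0∞)/2 :=
    Filter.eventually_lt_of_limsup_lt (ENNReal.lt_add_right hA.ne hε2)
  have h2 : ∀ᶠ n in Filter.atTop, v n < B + (ε:ℝ≥0∞)/2 :=
    Filter.eventually_lt_of_limsup_lt (ENNReal.lt_add_right hB.ne hε2)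
  have h3 : Filter.limsup (fun n => u n + v n) Filter.atTop ≤ (A + (ε:ℝ≥0∞)/2) + (B + (ε:ℝ≥0∞)/2) :=
    Filter.limsup_le_of_le (by isBoundedDefault)
      ((h1.and h2).mono fun n hn => (add_le_add hn.1.le hn.2.le))
  calc Filter.limsup (fun n => u n + v n) Filter.atTop
      ≤ (A + (ε:ℝ≥0∞)/2) + (B + (ε:ℝ≥0∞)/2) := h3
    _ = A + B + ((ε:ℝ≥0∞)/2 + (ε:ℝ≥0∞)/2) := by ring
    _ = A + B + (ε:ℝ≥0∞) := by rw [ENNReal.add_halves]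

lemma phi_triangle (f : X → X) (u v w : X) : phi f u w ≤ phi f u v + phi f v w := by
  have h1 : phi f u w ≤ Filter.limsup
      (fun n => edist (f^[n] u) (f^[n] v) + edist (f^[n] v) (f^[n] w)) Filter.atTop :=
    Filter.limsup_le_limsup (Eventually.of_forall fun n => edist_triangle _ _ _)
  exact h1.trans (limsup_add_le' _ _)

lemma frequently_small_of_liminf_zero {u : ℕ → ℝ≥0∞}
    (h : Filter.liminf u Filter.atTop = 0) {ε : ℝ≥0∞} (hε : 0 < ε) :
    ∃ᶠ n in Filter.atTop, u n < ε := by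
  by_contra hc
  rw [Filter.not_frequently] at hc
  have h2 : ε ≤ Filter.liminf u Filter.atTop :=
    Filter.le_liminf_of_le (by isBoundedDefault) (hc.mono fun n hn => not_lt.mp hn)
  rw [h] at h2
  exact hε.not_ge h2

lemma frequently_big_of_lt_limsup {u : ℕ → ℝ≥0∞} {δ : ℝ≥0∞}
    (h : δ < Filter.limsup u Filter.atTop) :
    ∃ᶠ n in Filter.atTop, δ < u n := by
  by_contra hc
  rw [Filter.not_frequently] at hc
  have h2 : Filter.limsup u Filter.atTop ≤ δ :=
    Filter.limsup_le_of_le (by isBoundedDefault) (hc.mono fun n hn => not_lt.mp hn)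
  exact h.not_ge h2

lemma exists_uncountable_split {α : Type*} {S : Set α} (hS : ¬ S.Countable) :
    ∃ A B : Set α, A ⊆ S ∧ B ⊆ S ∧ Disjoint A B ∧ ¬ A.Countable ∧ ¬ B.Countable := by
  have h1 : ¬ Countable (↥S) := fun h => hS (Set.countable_coe_iff.mp h)
  have hinf : Infinite ↥S := by
    by_contra h
    rw [not_infinite_iff_finite] at h
    exact h1 h.to_countable
  have hcard : (Cardinal.mk (Sum ↥S ↥S)) = Cardinal.mk ↥S := by
    rw [Cardinal.mk_sum]
    simp [Cardinal.add_eq_self (Cardinal.infinite_iff.mpr hinf)]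
  obtain ⟨e⟩ := Cardinal.eq.mp hcard
  refine ⟨Set.range (fun t : ↥S => (e (Sum.inl t) : α)),
    Set.range (fun t : ↥S => (e (Sum.inr t) : α)), ?_, ?_, ?_, ?_, ?_⟩
  · rintro _ ⟨t, rfl⟩; exact (e (Sum.inl t)).2
  · rintro _ ⟨t, rfl⟩; exact (e (Sum.inr t)).2
  · rw [Set.disjoint_left]
    rintro _ ⟨t, rfl⟩ ⟨t', ht'⟩
    have : e (Sum.inr t') = e (Sum.inl t) := Subtype.coe_injective ht'
    exact absurd (e.injective this) (by simp)
  · intro hA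
    have ginj : Function.Injective (fun t : ↥S => (e (Sum.inl t) : α)) := fun a b h =>
      Sum.inl.inj (e.injective (Subtype.coe_injective h))
    haveI := hA.to_subtype
    exact h1 (Countable.of_equiv _ (Equiv.ofInjective _ ginj).symm)
  · intro hB
    have ginj : Function.Injective (fun t : ↥S => (e (Sum.inr t) : α)) := fun a b h =>
      Sum.inr.inj (e.injective (Subtype.coe_injective h))
    haveI := hB.to_subtype
    exact h1 (Countable.of_equiv _ (Equiv.ofInjective _ ginj).symm)

lemma exists_condensation_point [TopologicalSpace.SeparableSpace X] {S : Set X}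
    (hS : ¬ S.Countable) :
    ∃ p ∈ S, ∀ r : ℝ, 0 < r → ¬ (S ∩ Metric.ball p r).Countable := by
  haveI : SecondCountableTopology X :=
    UniformSpace.secondCountable_of_separable X
  set B := TopologicalSpace.countableBasis X with hB
  set bad := {x ∈ S | ∃ U ∈ B, x ∈ U ∧ (S ∩ U).Countable} with hbad
  have hbadc : bad.Countable := by
    have : bad ⊆ ⋃ U ∈ {U ∈ B | (S ∩ U).Countable}, (S ∩ U) := by
      rintro x ⟨hxS, U, hU, hxU, hc⟩
      exact Set.mem_biUnion ⟨hU, hc⟩ ⟨hxS, hxU⟩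
    refine Set.Countable.mono this (Set.Countable.biUnion ?_ ?_)
    · exact (TopologicalSpace.countable_countableBasis X).mono (Set.sep_subset _ _)
    · rintro U ⟨_, hc⟩; exact hc
  have hgood : ¬ (S \ bad).Countable := by
    intro h
    exact hS (Set.Countable.mono (fun x hx => by
      by_cases hxb : x ∈ bad
      · exact Set.mem_union_right _ hxb
      · exact Set.mem_union_left _ ⟨hx, hxb⟩) (h.union hbadc))
  obtain ⟨p, hpS, hpb⟩ : (S \ bad).Nonempty := Set.nonempty_iff_ne_empty.mpr (by
    intro h; rw [h] at hgood; exact hgood Set.countable_empty)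
  refine ⟨p, hpS, fun r hr hc => ?_⟩
  obtain ⟨U, hU, hpU, hUb⟩ := (TopologicalSpace.isBasis_countableBasis X).exists_subset_of_mem_open
    (Metric.mem_ball_self hr) Metric.isOpen_ball
  apply hpb
  rw [hbad]
  have hsub : S ∩ U ⊆ S ∩ Metric.ball p r := fun x hx => ⟨hx.1, hUb hx.2⟩
  exact ⟨hpS, U, hU, hpU, Set.Countable.mono hsub hc⟩

lemma half_pow_succ (k : ℕ) : (2⁻¹:ℝ≥0∞)^(k+1) + (2⁻¹:ℝ≥0∞)^(k+1) = (2⁻¹:ℝ≥0∞)^k := by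
  have h2 : (2⁻¹:ℝ≥0∞) + 2⁻¹ = 1 := by
    rw [← one_div]; exact ENNReal.add_halves 1
  rw [pow_succ, ← mul_add, h2, mul_one]

lemma half_pow_pos (k : ℕ) : 0 < (2⁻¹:ℝ≥0∞)^k :=
  ENNReal.pow_pos (by norm_num) k

lemma half_pow_lt_top (k : ℕ) : (2⁻¹:ℝ≥0∞)^k < ⊤ :=
  ENNReal.pow_lt_top (by norm_num)

lemma half_pow_anti {n m : ℕ} (h : n ≤ m) : (2⁻¹:ℝ≥0∞)^m ≤ (2⁻¹:ℝ≥0∞)^n :=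
  pow_le_pow_right_of_le_one' (ENNReal.inv_le_one.2 ENNReal.one_lt_two.le) h

lemma half_pow_strict (k : ℕ) : (2⁻¹:ℝ≥0∞)^(k+1) < (2⁻¹:ℝ≥0∞)^k := by
  conv_rhs => rw [← half_pow_succ k]
  exact ENNReal.lt_add_right (half_pow_lt_top _).ne (half_pow_pos _).ne'

lemma key_split (f : X → X) {S : Set X} (hS : ¬ S.Countable)
    (hpos : ∀ u ∈ S, ∀ v ∈ S, u ≠ v → 0 < phi f u v) :
    ∃ (δ : ℝ≥0∞) (A B : Set X), 0 < δ ∧ δ < ⊤ ∧ A ⊆ S ∧ B ⊆ S ∧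
      ¬ A.Countable ∧ ¬ B.Countable ∧ ∀ u ∈ A, ∀ v ∈ B, δ < phi f u v := by
  classical
  by_cases hcase : ∃ δ : ℝ≥0∞, 0 < δ ∧ δ < ⊤ ∧ ∃ T, T ⊆ S ∧ ¬ T.Countable ∧
      T.Pairwise (fun u v => δ < phi f u v)
  · obtain ⟨δ, hδ0, hδt, T, hTS, hTc, hTp⟩ := hcase
    obtain ⟨A, B, hAT, hBT, hdisj, hA, hB⟩ := exists_uncountable_split hTc
    refine ⟨δ, A, B, hδ0, hδt, hAT.trans hTS, hBT.trans hTS, hA, hB, ?_⟩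
    intro u hu v hv
    have hne : u ≠ v := fun h => Set.disjoint_left.mp hdisj hu (h ▸ hv)
    exact hTp (hAT hu) (hBT hv) hne
  · push_neg at hcase
    have hmax : ∀ k : ℕ, ∃ T : Set X, T ⊆ S ∧ T.Countable ∧
        ∀ s ∈ S, ∃ t ∈ T, phi f s t ≤ (2⁻¹:ℝ≥0∞)^k := by
      intro k
      obtain ⟨T, hTmax⟩ := zorn_subset
        {T : Set X | T ⊆ S ∧ T.Pairwise (fun u v => (2⁻¹:ℝ≥0∞)^k < phi f u v)} (by
          intro c hc hchain
          refine ⟨⋃₀ c, ⟨Set.sUnion_subset fun T hT => (hc hT).1, ?_⟩,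
            fun T hT => Set.subset_sUnion_of_mem hT⟩
          intro u hu v hv huv
          obtain ⟨T1, hT1, hu1⟩ := hu
          obtain ⟨T2, hT2, hv2⟩ := hv
          rcases hchain.total hT1 hT2 with h12 | h21
          · exact (hc hT2).2 (h12 hu1) hv2 huv
          · exact (hc hT1).2 hu1 (h21 hv2) huv)
      have hTc : T.Countable := by
        by_contra hTc
        exact absurd hTmax.prop.2
          (hcase _ (half_pow_pos k) (half_pow_lt_top k) T hTmax.prop.1 hTc)
      refine ⟨T, hTmax.prop.1, hTc, ?_⟩
      intro s hs
      by_contra hcon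
      push_neg at hcon
      have hsT : s ∉ T := fun hsT => by
        have h1 := hcon s hsT
        rw [phi_self] at h1
        exact (not_lt.mpr zero_le) h1
      have hins : insert s T ∈
          {T : Set X | T ⊆ S ∧ T.Pairwise (fun u v => (2⁻¹:ℝ≥0∞)^k < phi f u v)} := by
        refine ⟨Set.insert_subset hs hTmax.prop.1, hTmax.prop.2.insert ?_⟩
        intro b hb _
        exact ⟨hcon b hb, by rw [phi_comm]; exact hcon b hb⟩
      have := hTmax.2 hins (Set.subset_insert s T)
      exact hsT (this (Set.mem_insert s T))
    choose T hTS hTc hTcov using hmax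
    set Good := {s ∈ S | ∀ k : ℕ, ¬ (S ∩ {u | phi f s u < (2⁻¹:ℝ≥0∞)^k}).Countable}
      with hGoodDef
    have hcover : (S \ Good).Countable := by
      have hsub : S \ Good ⊆ ⋃ (k : ℕ), ⋃ d ∈ T (k+2),
          (if (S ∩ {u | phi f d u < (2⁻¹:ℝ≥0∞)^(k+1)}).Countable
           then (S ∩ {u | phi f d u < (2⁻¹:ℝ≥0∞)^(k+1)}) else ∅) := by
        intro s hsb
        obtain ⟨hs, hns⟩ := hsb
        have hk : ∃ k : ℕ, (S ∩ {u | phi f s u < (2⁻¹:ℝ≥0∞)^k}).Countable := by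
          by_contra hno
          push_neg at hno
          exact hns ⟨hs, hno⟩
        obtain ⟨k, hk⟩ := hk
        obtain ⟨d, hd, hφ⟩ := hTcov (k+2) s hs
        have hball : (S ∩ {u | phi f d u < (2⁻¹:ℝ≥0∞)^(k+1)}).Countable := by
          refine Set.Countable.mono ?_ hk
          rintro u ⟨huS, hu⟩
          refine ⟨huS, ?_⟩
          have h1 : phi f s u ≤ phi f s d + phi f d u := phi_triangle f s d u
          have h2 : phi f s d + phi f d u < (2⁻¹:ℝ≥0∞)^(k+2) + (2⁻¹:ℝ≥0∞)^(k+1) :=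
            ENNReal.add_lt_add_of_le_of_lt (lt_of_le_of_lt hφ (half_pow_lt_top _)).ne hφ hu
          have h3 : (2⁻¹:ℝ≥0∞)^(k+2) + (2⁻¹:ℝ≥0∞)^(k+1) ≤ (2⁻¹:ℝ≥0∞)^k := by
            calc (2⁻¹:ℝ≥0∞)^(k+2) + (2⁻¹:ℝ≥0∞)^(k+1)
                ≤ (2⁻¹:ℝ≥0∞)^(k+1) + (2⁻¹:ℝ≥0∞)^(k+1) :=
                  add_le_add_left (half_pow_anti (by omega)) _
              _ = (2⁻¹:ℝ≥0∞)^k := half_pow_succ k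
          exact lt_of_lt_of_le (h1.trans_lt h2) h3
        refine Set.mem_iUnion.mpr ⟨k, Set.mem_biUnion hd ?_⟩
        rw [if_pos hball]
        refine ⟨hs, ?_⟩
        show phi f d s < (2⁻¹:ℝ≥0∞)^(k+1)
        rw [phi_comm]
        exact lt_of_le_of_lt hφ (half_pow_strict (k+1))
      refine Set.Countable.mono hsub ?_
      refine Set.countable_iUnion fun k => Set.Countable.biUnion (hTc (k+2)) fun d _ => ?_
      split_ifs with h
      · exact h
      · exact Set.countable_empty
    have hGoodUnc : ¬ Good.Countable := by
      intro hG
      refine hS (Set.Countable.mono ?_ (hG.union hcover))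
      intro x hx
      by_cases hxg : x ∈ Good
      · exact Set.mem_union_left _ hxg
      · exact Set.mem_union_right _ ⟨hx, hxg⟩
    obtain ⟨p, hp⟩ : Good.Nonempty := Set.nonempty_iff_ne_empty.mpr (by
      intro h; rw [h] at hGoodUnc; exact hGoodUnc Set.countable_empty)
    have hq : (Good \ {p}).Nonempty := Set.nonempty_iff_ne_empty.mpr (by
      intro h
      have : Good ⊆ {p} := fun x hx => by
        by_contra hxp
        have : x ∈ Good \ {p} := ⟨hx, hxp⟩
        rw [h] at this; exact this
      exact hGoodUnc ((Set.countable_singleton p).mono this))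
    obtain ⟨q, hqG, hqp⟩ := hq
    have hpq : 0 < phi f p q :=
      hpos p hp.1 q hqG.1 (fun h => hqp (by rw [Set.mem_singleton_iff]; exact h.symm))
    obtain ⟨k, hkδ⟩ := ENNReal.exists_inv_two_pow_lt hpq.ne'
    refine ⟨(2⁻¹:ℝ≥0∞)^(k+1), S ∩ {u | phi f p u < (2⁻¹:ℝ≥0∞)^(k+2)},
      S ∩ {u | phi f q u < (2⁻¹:ℝ≥0∞)^(k+2)}, half_pow_pos _, half_pow_lt_top _,
      Set.inter_subset_left, Set.inter_subset_left, hp.2 (k+2), hqG.2 (k+2), ?_⟩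
    rintro u ⟨huS, hu⟩ v ⟨hvS, hv⟩
    by_contra hle
    push_neg at hle
    have h1 : phi f p q ≤ phi f p u + (phi f u v + phi f v q) :=
      (phi_triangle f p u q).trans (add_le_add_right (phi_triangle f u v q) _)
    have hvq : phi f v q < (2⁻¹:ℝ≥0∞)^(k+2) := by rw [phi_comm]; exact hv
    have h2 : phi f p u + (phi f u v + phi f v q) ≤
        (2⁻¹:ℝ≥0∞)^(k+2) + ((2⁻¹:ℝ≥0∞)^(k+1) + (2⁻¹:ℝ≥0∞)^(k+2)) :=
      add_le_add hu.le (add_le_add hle hvq.le)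
    have h3 : (2⁻¹:ℝ≥0∞)^(k+2) + ((2⁻¹:ℝ≥0∞)^(k+1) + (2⁻¹:ℝ≥0∞)^(k+2)) = (2⁻¹:ℝ≥0∞)^k := by
      rw [add_comm ((2⁻¹:ℝ≥0∞)^(k+1)), ← add_assoc, half_pow_succ (k+1), half_pow_succ k]
    exact absurd hkδ (not_lt.mpr (h1.trans (h2.trans_eq h3)))
structure SD (X : Type*) [MetricSpace X] where
  c : ∀ n : ℕ, (Fin n → Bool) → X
  Q : ∀ n : ℕ, (Fin n → Bool) → Set X
  D : ∀ n : ℕ, (Fin n → Bool) → (Fin n → Bool) → ℝ≥0∞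
  r : ℕ → ℝ

structure Inv (f : X → X) (Y : Set X) (N : ℕ) (d : SD X) : Prop where
  rpos : ∀ n ≤ N, 0 < d.r n
  rle : ∀ n ≤ N, d.r n ≤ (2⁻¹:ℝ)^n
  nest : ∀ n, n + 1 ≤ N → ∀ s : Fin (n+1) → Bool,
    Metric.closedBall (d.c (n+1) s) (d.r (n+1)) ⊆
      Metric.closedBall (d.c n (Fin.init s)) (d.r n)
  disj : ∀ n ≤ N, ∀ s t : Fin n → Bool, s ≠ t →
    Disjoint (Metric.closedBall (d.c n s) (d.r n)) (Metric.closedBall (d.c n t) (d.r n))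
  Qunc : ∀ n ≤ N, ∀ s, ¬ (d.Q n s).Countable
  QY : ∀ n ≤ N, ∀ s, d.Q n s ⊆ Y
  Qball : ∀ n ≤ N, ∀ s, d.Q n s ⊆ Metric.ball (d.c n s) (d.r n)
  Dpos : ∀ n ≤ N, ∀ s t, s ≠ t → 0 < d.D n s t
  Dtop : ∀ n ≤ N, ∀ s t, s ≠ t → d.D n s t < ⊤
  Dsep : ∀ n ≤ N, ∀ s t, s ≠ t → ∀ u ∈ d.Q n s, ∀ v ∈ d.Q n t, d.D n s t < phi f u v
  Dkeep : ∀ n, n + 1 ≤ N → ∀ s t : Fin (n+1) → Bool, Fin.init s ≠ Fin.init t →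
    d.D (n+1) s t = d.D n (Fin.init s) (Fin.init t)
  prox : ∀ n ≤ N, ∀ s t, s ≠ t → ∃ m, n ≤ m ∧
    ∀ x ∈ Metric.closedBall (d.c n s) (d.r n), ∀ y ∈ Metric.closedBall (d.c n t) (d.r n),
      edist (f^[m] x) (f^[m] y) ≤ (2⁻¹:ℝ≥0∞)^n
  sep : ∀ n ≤ N, ∀ s t, s ≠ t → ∃ m, n ≤ m ∧
    ∀ x ∈ Metric.closedBall (d.c n s) (d.r n), ∀ y ∈ Metric.closedBall (d.c n t) (d.r n),
      d.D n s t / 2 ≤ edist (f^[m] x) (f^[m] y)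

lemma base_exists [TopologicalSpace.SeparableSpace X] (f : X → X) {Y : Set X}
    (hYunc : ¬ Y.Countable) : ∃ d : SD X, Inv f Y 0 d := by
  obtain ⟨p, hp, hcond⟩ := exists_condensation_point hYunc
  have hsing : ∀ s t : Fin 0 → Bool, s = t := fun s t => funext fun i => i.elim0
  have hzero : ∀ n : ℕ, n ≤ 0 → n = 0 := fun n hn => Nat.le_zero.mp hn
  refine ⟨⟨fun _ _ => p, fun _ _ => Y ∩ Metric.ball p 1, fun _ _ _ => 1, fun _ => 1⟩,
    ?_, ?_, ?_, ?_, ?_, ?_, ?_, ?_, ?_, ?_, ?_, ?_, ?_⟩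
  · intro n _; exact one_pos
  · intro n hn; obtain rfl := hzero n hn; norm_num
  · intro n hn; omega
  · intro n hn s t hst; obtain rfl := hzero n hn; exact absurd (hsing s t) hst
  · intro n _ s; exact hcond 1 one_pos
  · intro n _ s; exact Set.inter_subset_left
  · intro n _ s; exact Set.inter_subset_right
  · intro n hn s t hst; obtain rfl := hzero n hn; exact absurd (hsing s t) hst
  · intro n hn s t hst; obtain rfl := hzero n hn; exact absurd (hsing s t) hst
  · intro n hn s t hst; obtain rfl := hzero n hn; exact absurd (hsing s t) hst
  · intro n hn; omega
  · intro n hn s t hst; obtain rfl := hzero n hn; exact absurd (hsing s t) hst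
  · intro n hn s t hst; obtain rfl := hzero n hn; exact absurd (hsing s t) hst


lemma three_half_pow (k : ℕ) :
    (2⁻¹:ℝ≥0∞)^(k+2) + (2⁻¹:ℝ≥0∞)^(k+2) + (2⁻¹:ℝ≥0∞)^(k+2) ≤ (2⁻¹:ℝ≥0∞)^k := by
  calc (2⁻¹:ℝ≥0∞)^(k+2) + (2⁻¹:ℝ≥0∞)^(k+2) + (2⁻¹:ℝ≥0∞)^(k+2)
      ≤ ((2⁻¹:ℝ≥0∞)^(k+2) + (2⁻¹:ℝ≥0∞)^(k+2)) + ((2⁻¹:ℝ≥0∞)^(k+2) + (2⁻¹:ℝ≥0∞)^(k+2)) :=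
        add_le_add_right le_self_add _
    _ = (2⁻¹:ℝ≥0∞)^(k+1) + (2⁻¹:ℝ≥0∞)^(k+1) := by rw [half_pow_succ (k+1)]
    _ = (2⁻¹:ℝ≥0∞)^k := half_pow_succ k

lemma step_exists [TopologicalSpace.SeparableSpace X] (f : X → X) (hf : Continuous f)
    {Y : Set X}
    (hprox : ∀ u ∈ Y, ∀ v ∈ Y, u ≠ v →
      Filter.liminf (fun n => edist (f^[n] u) (f^[n] v)) Filter.atTop = 0)
    (hpos : ∀ u ∈ Y, ∀ v ∈ Y, u ≠ v → 0 < phi f u v)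
    (N : ℕ) (d : SD X) (hd : Inv f Y N d) :
    ∃ d' : SD X, Inv f Y (N+1) d' ∧ (∀ n ≤ N, d'.c n = d.c n) ∧
      (∀ n ≤ N, d'.Q n = d.Q n) ∧ (∀ n ≤ N, d'.D n = d.D n) ∧ (∀ n ≤ N, d'.r n = d.r n) := by
  classical
  have hsplit : ∀ s : Fin N → Bool, ∃ (δ : ℝ≥0∞) (A B : Set X), 0 < δ ∧ δ < ⊤ ∧
      A ⊆ d.Q N s ∧ B ⊆ d.Q N s ∧ ¬ A.Countable ∧ ¬ B.Countable ∧
      ∀ u ∈ A, ∀ v ∈ B, δ < phi f u v := fun s =>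
    key_split f (hd.Qunc N le_rfl s) (fun u hu v hv huv =>
      hpos u (hd.QY N le_rfl s hu) v (hd.QY N le_rfl s hv) huv)
  choose δ A B hδ0 hδt hAQ hBQ hAunc hBunc hcross using hsplit
  choose a ha hacond using fun s => exists_condensation_point (hAunc s)
  choose b hb hbcond using fun s => exists_condensation_point (hBunc s)
  obtain ⟨c', hc'def⟩ : ∃ g : (Fin (N+1) → Bool) → X,
      g = fun σ => if σ (Fin.last N) then b (Fin.init σ) else a (Fin.init σ) := ⟨_, rfl⟩
  obtain ⟨P, hPdef⟩ : ∃ g : (Fin (N+1) → Bool) → Set X,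
      g = fun σ => if σ (Fin.last N) then B (Fin.init σ) else A (Fin.init σ) := ⟨_, rfl⟩
  obtain ⟨D', hD'def⟩ : ∃ g : (Fin (N+1) → Bool) → (Fin (N+1) → Bool) → ℝ≥0∞,
      g = fun σ τ => if Fin.init σ = Fin.init τ then δ (Fin.init σ)
        else d.D N (Fin.init σ) (Fin.init τ) := ⟨_, rfl⟩
  have hc'P : ∀ σ, c' σ ∈ P σ := by
    intro σ
    by_cases h : σ (Fin.last N) <;> simp [hc'def, hPdef, h, ha, hb]
  have hPQ : ∀ σ, P σ ⊆ d.Q N (Fin.init σ) := by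
    intro σ
    by_cases h : σ (Fin.last N) <;> simp [hPdef, h, hAQ, hBQ]
  have hPY : ∀ σ, P σ ⊆ Y := fun σ => (hPQ σ).trans (hd.QY N le_rfl _)
  have hsnoc : ∀ σ τ : Fin (N+1) → Bool, Fin.init σ = Fin.init τ →
      σ (Fin.last N) = τ (Fin.last N) → σ = τ := by
    intro σ τ h1 h2
    rw [← Fin.snoc_init_self σ, ← Fin.snoc_init_self τ, h1, h2]
  have hPsep : ∀ σ τ, σ ≠ τ → ∀ u ∈ P σ, ∀ v ∈ P τ, D' σ τ < phi f u v := by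
    intro σ τ hne u hu v hv
    by_cases hinit : Fin.init σ = Fin.init τ
    · have hlast : σ (Fin.last N) ≠ τ (Fin.last N) := fun h => hne (hsnoc σ τ hinit h)
      rw [hD'def]
      simp only [if_pos hinit]
      rw [hPdef] at hu hv
      dsimp only at hu hv
      cases hσl : σ (Fin.last N) <;> cases hτl : τ (Fin.last N)
      · exact absurd (hσl.trans hτl.symm) hlast
      · rw [hσl] at hu; rw [hτl] at hv
        simp only [Bool.false_eq_true, if_false, if_true] at hu hv
        have hres := hcross (Fin.init τ) u (hinit ▸ hu) v hv
        rw [hinit]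
        exact hres
      · rw [hσl] at hu; rw [hτl] at hv
        simp only [Bool.false_eq_true, if_false, if_true] at hu hv
        have hres := hcross (Fin.init τ) v hv u (hinit ▸ hu)
        rw [hinit, phi_comm]
        exact hres
      · exact absurd (hσl.trans hτl.symm) hlast
    · rw [hD'def]
      simp only [if_neg hinit]
      exact hd.Dsep N le_rfl _ _ hinit u (hPQ σ hu) v (hPQ τ hv)
  have hc'ne : ∀ σ τ, σ ≠ τ → c' σ ≠ c' τ := by
    intro σ τ hne heq
    have h := hPsep σ τ hne (c' σ) (hc'P σ) (c' τ) (hc'P τ)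
    rw [heq, phi_self] at h
    exact (not_lt.mpr zero_le) h
  have hc'Y : ∀ σ, c' σ ∈ Y := fun σ => hPY σ (hc'P σ)
  have hD'pos : ∀ σ τ, σ ≠ τ → 0 < D' σ τ := by
    intro σ τ hne
    rw [hD'def]
    by_cases hinit : Fin.init σ = Fin.init τ
    · simp only [if_pos hinit]; exact hδ0 _
    · simp only [if_neg hinit]; exact hd.Dpos N le_rfl _ _ hinit
  have hD'top : ∀ σ τ, σ ≠ τ → D' σ τ < ⊤ := by
    intro σ τ hne
    rw [hD'def]
    by_cases hinit : Fin.init σ = Fin.init τ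
    · simp only [if_pos hinit]; exact hδt _
    · simp only [if_neg hinit]; exact hd.Dtop N le_rfl _ _ hinit
  have htimes1 : ∀ σ τ, σ ≠ τ → ∃ m, N+1 ≤ m ∧
      edist (f^[m] (c' σ)) (f^[m] (c' τ)) < (2⁻¹:ℝ≥0∞)^(N+3) := by
    intro σ τ hne
    have hfreq := frequently_small_of_liminf_zero
      (hprox _ (hc'Y σ) _ (hc'Y τ) (hc'ne σ τ hne)) (half_pow_pos (N+3))
    obtain ⟨m, hm⟩ := (hfreq.and_eventually (eventually_ge_atTop (N+1))).exists
    exact ⟨m, hm.2, hm.1⟩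
  have htimes2 : ∀ σ τ, σ ≠ τ → ∃ m, N+1 ≤ m ∧
      D' σ τ < edist (f^[m] (c' σ)) (f^[m] (c' τ)) := by
    intro σ τ hne
    have hfreq : ∃ᶠ n in Filter.atTop, D' σ τ < edist (f^[n] (c' σ)) (f^[n] (c' τ)) :=
      frequently_big_of_lt_limsup (hPsep σ τ hne _ (hc'P σ) _ (hc'P τ))
    obtain ⟨m, hm⟩ := (hfreq.and_eventually (eventually_ge_atTop (N+1))).exists
    exact ⟨m, hm.2, hm.1⟩
  choose m1 hm1ge hm1lt using htimes1
  choose m2 hm2ge hm2lt using htimes2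
  have hrad : ∀ (m : ℕ) (z : X) (ε : ℝ≥0∞), ∃ rr : ℝ, 0 < rr ∧
      (0 < ε → ∀ x : X, dist x z < rr → edist (f^[m] x) (f^[m] z) < ε) := by
    intro m z ε
    by_cases hε : 0 < ε
    · have hcont : Continuous (f^[m]) := hf.iterate m
      have hopen : IsOpen {x : X | edist (f^[m] x) (f^[m] z) < ε} :=
        isOpen_lt (hcont.edist continuous_const) continuous_const
      have hz : z ∈ {x : X | edist (f^[m] x) (f^[m] z) < ε} := by
        simp only [Set.mem_setOf_eq, edist_self]; exact hε
      obtain ⟨rr, hrr, hball⟩ := Metric.isOpen_iff.mp hopen z hz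
      exact ⟨rr, hrr, fun _ x hx => hball hx⟩
    · exact ⟨1, one_pos, fun h => absurd h hε⟩
  choose rad radpos radspec using hrad
  obtain ⟨gN, hgNdef⟩ : ∃ g : (Fin (N+1) → Bool) → ℝ,
      g = fun σ => d.r N - dist (c' σ) (d.c N (Fin.init σ)) := ⟨_, rfl⟩
  have hgNpos : ∀ σ, 0 < gN σ := by
    intro σ
    have h1 := hd.Qball N le_rfl (Fin.init σ) (hPQ σ (hc'P σ))
    rw [Metric.mem_ball] at h1
    rw [hgNdef]
    simp only
    linarith
  obtain ⟨g, hgdef⟩ : ∃ g : (Fin (N+1) → Bool) × (Fin (N+1) → Bool) → ℝ,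
      g = fun p =>
        if h : p.1 = p.2 then 1 else
          min (min (rad (m1 p.1 p.2 h) (c' p.1) ((2⁻¹:ℝ≥0∞)^(N+3)) / 2)
                   (rad (m1 p.1 p.2 h) (c' p.2) ((2⁻¹:ℝ≥0∞)^(N+3)) / 2))
              (min (min (rad (m2 p.1 p.2 h) (c' p.1) (D' p.1 p.2 / 2 / 2) / 2)
                        (rad (m2 p.1 p.2 h) (c' p.2) (D' p.1 p.2 / 2 / 2) / 2))
                   (dist (c' p.1) (c' p.2) / 3)) := ⟨_, rfl⟩
  have hgpos : ∀ p, 0 < g p := by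
    intro p
    rw [hgdef]
    simp only
    split_ifs with h
    · exact one_pos
    · exact lt_min (lt_min (half_pos (radpos _ _ _)) (half_pos (radpos _ _ _)))
        (lt_min (lt_min (half_pos (radpos _ _ _)) (half_pos (radpos _ _ _)))
          (div_pos (dist_pos.mpr (hc'ne _ _ h)) (by norm_num)))
  obtain ⟨ρ', hρ'def⟩ : ∃ x : ℝ, x = min ((2⁻¹:ℝ)^(N+1))
      (min (Finset.univ.inf' Finset.univ_nonempty gN)
           (Finset.univ.inf' Finset.univ_nonempty g)) := ⟨_, rfl⟩
  have hρ'pos : 0 < ρ' := by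
    rw [hρ'def]
    refine lt_min (by positivity) (lt_min ?_ ?_)
    · exact (Finset.lt_inf'_iff _).mpr fun i _ => hgNpos i
    · exact (Finset.lt_inf'_iff _).mpr fun i _ => hgpos i
  have hρ'le : ρ' ≤ (2⁻¹:ℝ)^(N+1) := by rw [hρ'def]; exact min_le_left _ _
  have hρ'gN : ∀ σ, ρ' ≤ gN σ := by
    intro σ
    rw [hρ'def]
    exact (min_le_right _ _).trans ((min_le_left _ _).trans
      (Finset.inf'_le _ (Finset.mem_univ σ)))
  have hρ'g : ∀ σ τ, ρ' ≤ g (σ, τ) := by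
    intro σ τ
    rw [hρ'def]
    exact (min_le_right _ _).trans ((min_le_right _ _).trans
      (Finset.inf'_le _ (Finset.mem_univ _)))
  have hgbits : ∀ σ τ (h : σ ≠ τ),
      ρ' ≤ rad (m1 σ τ h) (c' σ) ((2⁻¹:ℝ≥0∞)^(N+3)) / 2 ∧
      ρ' ≤ rad (m1 σ τ h) (c' τ) ((2⁻¹:ℝ≥0∞)^(N+3)) / 2 ∧
      ρ' ≤ rad (m2 σ τ h) (c' σ) (D' σ τ / 2 / 2) / 2 ∧
      ρ' ≤ rad (m2 σ τ h) (c' τ) (D' σ τ / 2 / 2) / 2 ∧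
      ρ' ≤ dist (c' σ) (c' τ) / 3 := by
    intro σ τ h
    have hb := hρ'g σ τ
    rw [hgdef] at hb
    simp only [dif_neg h] at hb
    exact ⟨hb.trans ((min_le_left _ _).trans (min_le_left _ _)),
      hb.trans ((min_le_left _ _).trans (min_le_right _ _)),
      hb.trans ((min_le_right _ _).trans ((min_le_left _ _).trans (min_le_left _ _))),
      hb.trans ((min_le_right _ _).trans ((min_le_left _ _).trans (min_le_right _ _))),
      hb.trans ((min_le_right _ _).trans (min_le_right _ _))⟩
  obtain ⟨Q', hQ'def⟩ : ∃ g : (Fin (N+1) → Bool) → Set X,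
      g = fun σ => P σ ∩ Metric.ball (c' σ) ρ' := ⟨_, rfl⟩
  refine ⟨⟨Function.update d.c (N+1) c', Function.update d.Q (N+1) Q',
    Function.update d.D (N+1) D', Function.update d.r (N+1) ρ'⟩, ?_,
    fun n hn => Function.update_of_ne (by omega) _ _,
    fun n hn => Function.update_of_ne (by omega) _ _,
    fun n hn => Function.update_of_ne (by omega) _ _,
    fun n hn => Function.update_of_ne (by omega) _ _⟩
  constructor
  case rpos =>
    intro n hn
    dsimp only
    by_cases hn' : n ≤ N
    · rw [Function.update_of_ne (by omega)]; exact hd.rpos n hn'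
    · obtain rfl : n = N+1 := by omega
      rw [Function.update_self]; exact hρ'pos
  case rle =>
    intro n hn
    dsimp only
    by_cases hn' : n ≤ N
    · rw [Function.update_of_ne (by omega)]; exact hd.rle n hn'
    · obtain rfl : n = N+1 := by omega
      rw [Function.update_self]; exact hρ'le
  case nest =>
    intro n hn s
    dsimp only
    by_cases hn' : n + 1 ≤ N
    · simp only [Function.update_of_ne (show n + 1 ≠ N + 1 by omega),
        Function.update_of_ne (show n ≠ N + 1 by omega)]
      exact hd.nest n hn' s
    · have hnn : N = n := by omega
      subst hnn
      simp only [Function.update_self, Function.update_of_ne (show N ≠ N + 1 by omega)]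
      intro x hx
      rw [Metric.mem_closedBall] at hx ⊢
      have h2 := hρ'gN s
      rw [hgNdef] at h2
      simp only at h2
      have h3 := dist_triangle x (c' s) (d.c N (Fin.init s))
      linarith
  case disj =>
    intro n hn s t hst
    dsimp only
    by_cases hn' : n ≤ N
    · simp only [Function.update_of_ne (show n ≠ N + 1 by omega)]
      exact hd.disj n hn' s t hst
    · obtain rfl : n = N+1 := by omega
      simp only [Function.update_self]
      rw [Set.disjoint_left]
      intro x hx hx'
      rw [Metric.mem_closedBall] at hx hx'
      have h5 := (hgbits s t hst).2.2.2.2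
      have h6 := dist_triangle (c' s) x (c' t)
      have h7 : (0:ℝ) < dist (c' s) (c' t) := dist_pos.mpr (hc'ne s t hst)
      rw [dist_comm (c' s) x] at h6
      linarith
  case Qunc =>
    intro n hn s
    dsimp only
    by_cases hn' : n ≤ N
    · rw [Function.update_of_ne (by omega : n ≠ N + 1)]; exact hd.Qunc n hn' s
    · obtain rfl : n = N+1 := by omega
      rw [Function.update_self, hQ'def]
      simp only
      by_cases hσ : s (Fin.last N)
      · have hres := hbcond (Fin.init s) ρ' hρ'pos
        rw [hPdef, hc'def]
        simp only [hσ, if_true]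
        exact hres
      · have hres := hacond (Fin.init s) ρ' hρ'pos
        rw [hPdef, hc'def]
        simp only [hσ, if_false]
        exact hres
  case QY =>
    intro n hn s
    dsimp only
    by_cases hn' : n ≤ N
    · rw [Function.update_of_ne (by omega : n ≠ N + 1)]; exact hd.QY n hn' s
    · obtain rfl : n = N+1 := by omega
      rw [Function.update_self, hQ'def]
      exact Set.inter_subset_left.trans (hPY s)
  case Qball =>
    intro n hn s
    dsimp only
    by_cases hn' : n ≤ N
    · simp only [Function.update_of_ne (show n ≠ N + 1 by omega)]
      exact hd.Qball n hn' s
    · obtain rfl : n = N+1 := by omega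
      simp only [Function.update_self]
      rw [hQ'def]
      exact Set.inter_subset_right
  case Dpos =>
    intro n hn s t hst
    dsimp only
    by_cases hn' : n ≤ N
    · rw [Function.update_of_ne (by omega : n ≠ N + 1)]; exact hd.Dpos n hn' s t hst
    · obtain rfl : n = N+1 := by omega
      rw [Function.update_self]; exact hD'pos s t hst
  case Dtop =>
    intro n hn s t hst
    dsimp only
    by_cases hn' : n ≤ N
    · rw [Function.update_of_ne (by omega : n ≠ N + 1)]; exact hd.Dtop n hn' s t hst
    · obtain rfl : n = N+1 := by omega
      rw [Function.update_self]; exact hD'top s t hst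
  case Dsep =>
    intro n hn s t hst u hu v hv
    dsimp only at hu hv ⊢
    by_cases hn' : n ≤ N
    · rw [Function.update_of_ne (by omega : n ≠ N + 1)] at hu hv ⊢
      exact hd.Dsep n hn' s t hst u hu v hv
    · obtain rfl : n = N+1 := by omega
      rw [Function.update_self] at hu hv ⊢
      rw [hQ'def] at hu hv
      exact hPsep s t hst u hu.1 v hv.1
  case Dkeep =>
    intro n hn s t hinit
    dsimp only
    by_cases hn' : n + 1 ≤ N
    · simp only [Function.update_of_ne (show n + 1 ≠ N + 1 by omega),
        Function.update_of_ne (show n ≠ N + 1 by omega)]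
      exact hd.Dkeep n hn' s t hinit
    · have hnn : N = n := by omega
      subst hnn
      simp only [Function.update_self, Function.update_of_ne (show N ≠ N + 1 by omega)]
      rw [hD'def]
      simp only [if_neg hinit]
  case prox =>
    intro n hn s t hst
    dsimp only
    by_cases hn' : n ≤ N
    · simp only [Function.update_of_ne (show n ≠ N + 1 by omega)]
      exact hd.prox n hn' s t hst
    · obtain rfl : n = N+1 := by omega
      simp only [Function.update_self]
      refine ⟨m1 s t hst, hm1ge s t hst, ?_⟩
      intro x hx y hy
      rw [Metric.mem_closedBall] at hx hy
      have hbits := hgbits s t hst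
      have hx' : dist x (c' s) < rad (m1 s t hst) (c' s) ((2⁻¹:ℝ≥0∞)^(N+3)) :=
        lt_of_le_of_lt (hx.trans hbits.1) (half_lt_self (radpos _ _ _))
      have hy' : dist y (c' t) < rad (m1 s t hst) (c' t) ((2⁻¹:ℝ≥0∞)^(N+3)) :=
        lt_of_le_of_lt (hy.trans hbits.2.1) (half_lt_self (radpos _ _ _))
      have e1 := radspec _ _ _ (half_pow_pos (N+3)) x hx'
      have e2 := hm1lt s t hst
      have e3 := radspec _ _ _ (half_pow_pos (N+3)) y hy'
      calc edist (f^[m1 s t hst] x) (f^[m1 s t hst] y)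
          ≤ edist (f^[m1 s t hst] x) (f^[m1 s t hst] (c' s)) +
            edist (f^[m1 s t hst] (c' s)) (f^[m1 s t hst] (c' t)) +
            edist (f^[m1 s t hst] (c' t)) (f^[m1 s t hst] y) := edist_triangle4 _ _ _ _
        _ ≤ (2⁻¹:ℝ≥0∞)^(N+3) + (2⁻¹:ℝ≥0∞)^(N+3) + (2⁻¹:ℝ≥0∞)^(N+3) := by
            refine add_le_add (add_le_add e1.le e2.le) ?_
            rw [edist_comm]
            exact e3.le
        _ ≤ (2⁻¹:ℝ≥0∞)^(N+1) := three_half_pow (N+1)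
  case sep =>
    intro n hn s t hst
    dsimp only
    by_cases hn' : n ≤ N
    · simp only [Function.update_of_ne (show n ≠ N + 1 by omega)]
      exact hd.sep n hn' s t hst
    · obtain rfl : n = N+1 := by omega
      simp only [Function.update_self]
      refine ⟨m2 s t hst, hm2ge s t hst, ?_⟩
      intro x hx y hy
      rw [Metric.mem_closedBall] at hx hy
      by_contra hcon
      push_neg at hcon
      have hbits := hgbits s t hst
      have hq : 0 < D' s t / 2 / 2 :=
        ENNReal.div_pos (ENNReal.div_pos (hD'pos s t hst).ne' (by norm_num)).ne' (by norm_num)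
      have hx' : dist x (c' s) < rad (m2 s t hst) (c' s) (D' s t / 2 / 2) :=
        lt_of_le_of_lt (hx.trans hbits.2.2.1) (half_lt_self (radpos _ _ _))
      have hy' : dist y (c' t) < rad (m2 s t hst) (c' t) (D' s t / 2 / 2) :=
        lt_of_le_of_lt (hy.trans hbits.2.2.2.1) (half_lt_self (radpos _ _ _))
      have e1 := radspec _ _ _ hq x hx'
      have e3 := radspec _ _ _ hq y hy'
      have harr : D' s t / 2 / 2 + D' s t / 2 + D' s t / 2 / 2 = D' s t := by
        rw [add_right_comm, ENNReal.add_halves, ENNReal.add_halves]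
      have hlt : edist (f^[m2 s t hst] (c' s)) (f^[m2 s t hst] (c' t)) < D' s t := by
        calc edist (f^[m2 s t hst] (c' s)) (f^[m2 s t hst] (c' t))
            ≤ edist (f^[m2 s t hst] (c' s)) (f^[m2 s t hst] x) +
              edist (f^[m2 s t hst] x) (f^[m2 s t hst] y) +
              edist (f^[m2 s t hst] y) (f^[m2 s t hst] (c' t)) := edist_triangle4 _ _ _ _
          _ < D' s t / 2 / 2 + D' s t / 2 + D' s t / 2 / 2 := by
              refine ENNReal.add_lt_add (ENNReal.add_lt_add ?_ hcon) ?_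
              · rw [edist_comm]; exact e1
              · exact e3
          _ = D' s t := harr
      exact lt_irrefl _ ((hm2lt s t hst).trans hlt)

def res (n : ℕ) (a : ℕ → Bool) : Fin n → Bool := fun i => a i

lemma res_init (a : ℕ → Bool) (n : ℕ) : Fin.init (res (n+1) a) = res n a := by
  funext i
  simp [Fin.init, res]

lemma res_ne {a b : ℕ → Bool} {i0 : ℕ} (hi0 : a i0 ≠ b i0) {n : ℕ} (hn : i0 + 1 ≤ n) :
    res n a ≠ res n b := by
  intro h
  exact hi0 (congrFun h ⟨i0, by omega⟩)

theorem main_aux {X : Type*} [MetricSpace X] [TopologicalSpace.SeparableSpace X]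
    [CompleteSpace X]
    (f : X → X) (hf : Continuous f)
    (Y : Set X) (hYunc : ¬ Y.Countable) (hY : Scrambled f Y) :
    ∃ C : Set X, Nonempty ((ℕ → Bool) ≃ₜ C) ∧ Scrambled f C := by
  classical
  have hprox : ∀ u ∈ Y, ∀ v ∈ Y, u ≠ v →
      Filter.liminf (fun n => edist (f^[n] u) (f^[n] v)) Filter.atTop = 0 :=
    fun u hu v hv huv => (hY u hu v hv huv).1
  have hpos : ∀ u ∈ Y, ∀ v ∈ Y, u ≠ v → 0 < phi f u v := by
    intro u hu v hv huv
    exact pos_iff_ne_zero.mpr (fun h => (hY u hu v hv huv).2 h)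
  obtain ⟨d0, hd0⟩ := base_exists f hYunc
  have hstep := fun (N : ℕ) (dd : SD X) (hdd : Inv f Y N dd) =>
    step_exists f hf hprox hpos N dd hdd
  let g : ∀ N : ℕ, {d : SD X // Inv f Y N d} := fun N =>
    Nat.rec (motive := fun N => {d : SD X // Inv f Y N d}) ⟨d0, hd0⟩
      (fun n p => ⟨(hstep n p.1 p.2).choose, (hstep n p.1 p.2).choose_spec.1⟩) N
  have hagree : ∀ N : ℕ, (∀ n ≤ N, (g (N+1)).1.c n = (g N).1.c n) ∧
      (∀ n ≤ N, (g (N+1)).1.D n = (g N).1.D n) ∧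
      (∀ n ≤ N, (g (N+1)).1.r n = (g N).1.r n) := by
    intro N
    have hspec := (hstep N (g N).1 (g N).2).choose_spec
    exact ⟨hspec.2.1, hspec.2.2.2.1, hspec.2.2.2.2⟩
  let CC : ∀ n : ℕ, (Fin n → Bool) → X := fun n => (g n).1.c n
  let RR : ℕ → ℝ := fun n => (g n).1.r n
  let DD : ∀ n : ℕ, (Fin n → Bool) → (Fin n → Bool) → ℝ≥0∞ := fun n => (g n).1.D n
  have hcoh : ∀ N n, n ≤ N → (g N).1.c n = CC n ∧ (g N).1.D n = DD n ∧ (g N).1.r n = RR n := by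
    intro N
    induction N with
    | zero =>
      intro n hn
      obtain rfl : n = 0 := Nat.le_zero.mp hn
      exact ⟨rfl, rfl, rfl⟩
    | succ N ih =>
      intro n hn
      by_cases h : n ≤ N
      · obtain ⟨h1, h2, h3⟩ := ih n h
        have ha := hagree N
        exact ⟨(ha.1 n h).trans h1, (ha.2.1 n h).trans h2, (ha.2.2 n h).trans h3⟩
      · obtain rfl : n = N+1 := by omega
        exact ⟨rfl, rfl, rfl⟩
  have Hrpos : ∀ n, 0 < RR n := fun n => (g n).2.rpos n le_rfl
  have Hrle : ∀ n, RR n ≤ (2⁻¹:ℝ)^n := fun n => (g n).2.rle n le_rfl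
  have Hnest : ∀ n (s : Fin (n+1) → Bool),
      Metric.closedBall (CC (n+1) s) (RR (n+1)) ⊆
        Metric.closedBall (CC n (Fin.init s)) (RR n) := by
    intro n s
    have h := (g (n+1)).2.nest n le_rfl s
    rw [(hcoh (n+1) n (by omega)).1, (hcoh (n+1) n (by omega)).2.2] at h
    exact h
  have Hdisj : ∀ n (s t : Fin n → Bool), s ≠ t →
      Disjoint (Metric.closedBall (CC n s) (RR n)) (Metric.closedBall (CC n t) (RR n)) :=
    fun n s t hst => (g n).2.disj n le_rfl s t hst
  have HDpos : ∀ n (s t : Fin n → Bool), s ≠ t → 0 < DD n s t :=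
    fun n s t h => (g n).2.Dpos n le_rfl s t h
  have HDkeep : ∀ n (s t : Fin (n+1) → Bool), Fin.init s ≠ Fin.init t →
      DD (n+1) s t = DD n (Fin.init s) (Fin.init t) := by
    intro n s t h
    have hh := (g (n+1)).2.Dkeep n le_rfl s t h
    rw [(hcoh (n+1) n (by omega)).2.1] at hh
    exact hh
  have Hprox : ∀ n (s t : Fin n → Bool), s ≠ t → ∃ m, n ≤ m ∧
      ∀ x ∈ Metric.closedBall (CC n s) (RR n), ∀ y ∈ Metric.closedBall (CC n t) (RR n),
        edist (f^[m] x) (f^[m] y) ≤ (2⁻¹:ℝ≥0∞)^n :=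
    fun n s t h => (g n).2.prox n le_rfl s t h
  have Hsep : ∀ n (s t : Fin n → Bool), s ≠ t → ∃ m, n ≤ m ∧
      ∀ x ∈ Metric.closedBall (CC n s) (RR n), ∀ y ∈ Metric.closedBall (CC n t) (RR n),
        DD n s t / 2 ≤ edist (f^[m] x) (f^[m] y) :=
    fun n s t h => (g n).2.sep n le_rfl s t h
  -- limits along branches
  let u : (ℕ → Bool) → ℕ → X := fun a n => CC n (res n a)
  have hKmono : ∀ (a : ℕ → Bool) (n m : ℕ), n ≤ m →
      Metric.closedBall (u a m) (RR m) ⊆ Metric.closedBall (u a n) (RR n) := by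
    intro a n m h
    induction m with
    | zero =>
      obtain rfl : n = 0 := Nat.le_zero.mp h
      exact subset_rfl
    | succ m ih =>
      by_cases hm : n ≤ m
      · refine Set.Subset.trans ?_ (ih hm)
        have hh := Hnest m (res (m+1) a)
        rw [res_init a m] at hh
        exact hh
      · obtain rfl : n = m+1 := by omega
        exact subset_rfl
  have humem : ∀ a n m, n ≤ m → u a m ∈ Metric.closedBall (u a n) (RR n) := fun a n m h =>
    hKmono a n m h (Metric.mem_closedBall_self (Hrpos m).le)
  have hcauchy : ∀ a, CauchySeq (u a) := by
    intro a
    refine cauchySeq_of_le_geometric_two (C := 2) ?_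
    intro n
    have hh := humem a n (n+1) (by omega)
    rw [Metric.mem_closedBall] at hh
    calc dist (u a n) (u a (n+1)) = dist (u a (n+1)) (u a n) := dist_comm _ _
      _ ≤ RR n := hh
      _ ≤ (2⁻¹:ℝ)^n := Hrle n
      _ = 2 / 2 / 2^n := by rw [inv_pow]; norm_num
  choose e he using fun a => cauchySeq_tendsto_of_complete (hcauchy a)
  have hemem : ∀ a n, e a ∈ Metric.closedBall (u a n) (RR n) := by
    intro a n
    refine Metric.isClosed_closedBall.mem_of_tendsto (he a) ?_
    exact eventually_atTop.mpr ⟨n, fun m hm => humem a n m hm⟩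
  have heinj : Function.Injective e := by
    intro a b hab
    by_contra hne
    obtain ⟨i, hi⟩ := Function.ne_iff.mp hne
    have hrne : res (i+1) a ≠ res (i+1) b := res_ne hi le_rfl
    have hd := Hdisj (i+1) _ _ hrne
    have h1 := hemem a (i+1)
    have h2 := hemem b (i+1)
    rw [hab] at h1
    exact (Set.disjoint_left.mp hd h1) h2
  have hcont : Continuous e := by
    rw [continuous_iff_continuousAt]
    intro a
    rw [ContinuousAt, Metric.tendsto_nhds]
    intro ε hε
    obtain ⟨n, hn⟩ : ∃ n : ℕ, 2*(2⁻¹:ℝ)^n < ε := by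
      obtain ⟨n, hn⟩ := exists_pow_lt_of_lt_one (half_pos hε) (by norm_num : (2⁻¹:ℝ) < 1)
      exact ⟨n, by linarith⟩
    have hcyl : {b : ℕ → Bool | ∀ i ∈ Finset.range n, b i = a i} ∈ 𝓝 a := by
      have heq : {b : ℕ → Bool | ∀ i ∈ Finset.range n, b i = a i} =
          ⋂ i ∈ (Finset.range n : Finset ℕ), {b : ℕ → Bool | b i = a i} := by
        ext b; simp
      rw [heq]
      refine (Filter.biInter_mem (Finset.range n).finite_toSet).mpr ?_
      intro i _
      refine IsOpen.mem_nhds ?_ rfl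
      have hpre : {b : ℕ → Bool | b i = a i} = (fun b : ℕ → Bool => b i) ⁻¹' {a i} := rfl
      rw [hpre]
      exact IsOpen.preimage (continuous_apply i) (isOpen_discrete _)
    filter_upwards [hcyl] with b hb
    have hbn : res n b = res n a := by
      funext i
      exact hb i (Finset.mem_range.mpr i.2)
    have h1 := hemem a n
    have h2 := hemem b n
    rw [Metric.mem_closedBall] at h1 h2
    have h2' : dist (e b) (u a n) ≤ RR n := by
      have : u b n = u a n := congrArg (CC n) hbn
      rw [← this]
      exact h2
    have htri := dist_triangle (e b) (u a n) (e a)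
    have hra := Hrle n
    rw [dist_comm (u a n) (e a)] at htri
    calc dist (e b) (e a) ≤ dist (e b) (u a n) + dist (e a) (u a n) := htri
      _ ≤ RR n + RR n := add_le_add h2' h1
      _ ≤ (2⁻¹:ℝ)^n + (2⁻¹:ℝ)^n := add_le_add hra hra
      _ = 2*(2⁻¹:ℝ)^n := by ring
      _ < ε := hn
  refine ⟨Set.range e, ?_, ?_⟩
  · have hEcont : Continuous ((Equiv.ofInjective e heinj : (ℕ → Bool) ≃ Set.range e) :
        (ℕ → Bool) → Set.range e) := Continuous.subtype_mk hcont _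
    exact ⟨Continuous.homeoOfEquivCompactToT2 hEcont⟩
  · rintro x ⟨aa, rfl⟩ y ⟨bb, rfl⟩ hxy
    have hab : aa ≠ bb := fun h => hxy (by rw [h])
    obtain ⟨i0, hi0⟩ := Function.ne_iff.mp hab
    have hresne : ∀ n, i0 + 1 ≤ n → res n aa ≠ res n bb := fun n hn => res_ne hi0 hn
    have hDconst : ∀ n, i0 + 1 ≤ n →
        DD n (res n aa) (res n bb) = DD (i0+1) (res (i0+1) aa) (res (i0+1) bb) := by
      intro n hn
      induction n with
      | zero => omega
      | succ n ih =>
        by_cases h : i0 + 1 ≤ n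
        · have hk := HDkeep n (res (n+1) aa) (res (n+1) bb)
            (by rw [res_init, res_init]; exact hresne n h)
          rw [hk, res_init, res_init, ih h]
        · have h' : n = i0 := by omega
          subst h'
          rfl
    have hδpos : 0 < DD (i0+1) (res (i0+1) aa) (res (i0+1) bb) :=
      HDpos (i0+1) _ _ (hresne (i0+1) le_rfl)
    constructor
    · show Filter.liminf (fun n => edist (f^[n] (e aa)) (f^[n] (e bb))) Filter.atTop = 0
      refine le_antisymm ?_ zero_le
      have hbound : ∀ n, i0 + 1 ≤ n →
          Filter.liminf (fun m => edist (f^[m] (e aa)) (f^[m] (e bb))) Filter.atTop ≤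
            (2⁻¹:ℝ≥0∞)^n := by
        intro n hn
        refine Filter.liminf_le_of_frequently_le' ?_
        rw [Filter.frequently_atTop]
        intro N0
        obtain ⟨m, hm1, hm2⟩ := Hprox (max n N0) (res _ aa) (res _ bb)
          (hresne _ (by omega))
        refine ⟨m, by omega, ?_⟩
        have hh := hm2 _ (hemem aa (max n N0)) _ (hemem bb (max n N0))
        exact hh.trans (half_pow_anti (le_max_left n N0))
      by_contra h0
      obtain ⟨k, hk⟩ := ENNReal.exists_inv_two_pow_lt (not_le.mp h0).ne'
      have hb := hbound (max k (i0+1)) (le_max_right _ _)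
      have hmono : (2⁻¹:ℝ≥0∞)^(max k (i0+1)) ≤ (2⁻¹:ℝ≥0∞)^k :=
        half_pow_anti (le_max_left _ _)
      exact absurd (hb.trans hmono) (not_le.mpr hk)
    · intro hasym
      have hasym' : Filter.limsup (fun n => edist (f^[n] (e aa)) (f^[n] (e bb)))
          Filter.atTop = 0 := hasym
      have hfreq : ∃ᶠ m in Filter.atTop,
          DD (i0+1) (res (i0+1) aa) (res (i0+1) bb) / 2 ≤
            edist (f^[m] (e aa)) (f^[m] (e bb)) := by
        rw [Filter.frequently_atTop]
        intro N0
        obtain ⟨m, hm1, hm2⟩ := Hsep (max (i0+1) N0) (res _ aa) (res _ bb)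
          (hresne _ (le_max_left _ _))
        refine ⟨m, by omega, ?_⟩
        have hh := hm2 _ (hemem aa _) _ (hemem bb _)
        rw [hDconst (max (i0+1) N0) (le_max_left _ _)] at hh
        exact hh
      have hle := Filter.le_limsup_of_frequently_le' hfreq
      rw [hasym'] at hle
      have hpos2 : 0 < DD (i0+1) (res (i0+1) aa) (res (i0+1) bb) / 2 :=
        ENNReal.div_pos hδpos.ne' (by norm_num)
      exact absurd hle (not_le.mpr hpos2)


end LY

/-- Every Li–Yorke chaotic Polish dynamical system has a scrambled Cantor set. -/
theorem stmt_4 {X : Type*} [MetricSpace X] [TopologicalSpace.SeparableSpace X]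
    [CompleteSpace X]
    (f : X → X) (hf : Continuous f)
    (Y : Set X) (hYunc : ¬ Y.Countable) (hY : Scrambled f Y) :
    ∃ C : Set X, Nonempty ((ℕ → Bool) ≃ₜ C) ∧ Scrambled f C := by
  exact LY.main_aux f hf Y hYunc hY
end

section
/- Every Li–Yorke chaotic analytic dynamical system admits a scrambled Cantor set: if (X, f) is a dynamical system on an analytic metric space X with an uncountable scrambled set, then there is a Cantor set C ⊆ X that is scrambled. -/
open Filter Topology

namespace LYAux

open scoped ENNReal

open Set

/-! ### Generic countability / condensation lemmas -/

lemma nonempty_of_not_countable {α : Type*} {s : Set α} (h : ¬ s.Countable) : s.Nonempty := by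
  rcases s.eq_empty_or_nonempty with rfl | hne
  · exact absurd Set.countable_empty h
  · exact hne

lemma not_countable_diff {α : Type*} {s t : Set α} (hs : ¬ s.Countable) (ht : t.Countable) :
    ¬ (s \ t).Countable := by
  intro h
  exact hs ((h.union ht).mono (fun x hx => by
    by_cases hxt : x ∈ t
    · exact Or.inr hxt
    · exact Or.inl ⟨hx, hxt⟩))

/-- In a second countable space, the set of points of `A` having a neighborhood meeting `A` in a
countable set is countable. -/
lemma shy_countable {α : Type*} [TopologicalSpace α] [SecondCountableTopology α]
    (A : Set α) : {a | a ∈ A ∧ ∃ U ∈ 𝓝 a, (A ∩ U).Countable}.Countable := by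
  set B := TopologicalSpace.countableBasis α with hBdef
  have hB := TopologicalSpace.isBasis_countableBasis α
  have hBc := TopologicalSpace.countable_countableBasis α
  have hsub : {a | a ∈ A ∧ ∃ U ∈ 𝓝 a, (A ∩ U).Countable}
      ⊆ ⋃ s ∈ {s ∈ B | (A ∩ s).Countable}, A ∩ s := by
    rintro a ⟨haA, U, hU, hUc⟩
    obtain ⟨s, hsB, has, hsU⟩ := hB.mem_nhds_iff.mp hU
    exact Set.mem_biUnion ⟨hsB, hUc.mono (Set.inter_subset_inter_right A hsU)⟩ ⟨haA, has⟩
  refine Set.Countable.mono hsub ?_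
  exact Set.Countable.biUnion (hBc.mono (Set.sep_subset _ _)) (fun s hs => hs.2)

/-- In a second countable space, an uncountable set has two distinct condensation points
belonging to it. -/
lemma exists_two_cond {α : Type*} [TopologicalSpace α]
    [SecondCountableTopology α] {A : Set α} (hA : ¬ A.Countable) :
    ∃ a ∈ A, ∃ b ∈ A, a ≠ b ∧ (∀ U ∈ 𝓝 a, ¬ (A ∩ U).Countable) ∧
      (∀ U ∈ 𝓝 b, ¬ (A ∩ U).Countable) := by
  classical
  set S := {a | a ∈ A ∧ ∃ U ∈ 𝓝 a, (A ∩ U).Countable} with hSdef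
  have hSc : S.Countable := shy_countable A
  have hG : ¬ (A \ S).Countable := not_countable_diff hA hSc
  have hGnt : (A \ S).Nontrivial := by
    by_contra h
    rw [Set.not_nontrivial_iff] at h
    exact hG h.countable
  obtain ⟨a, ha, b, hb, hab⟩ := hGnt
  refine ⟨a, ha.1, b, hb.1, hab, ?_, ?_⟩
  · intro U hU hc
    exact ha.2 ⟨ha.1, U, hU, hc⟩
  · intro U hU hc
    exact hb.2 ⟨hb.1, U, hU, hc⟩

lemma exists_cond {α : Type*} [TopologicalSpace α]
    [SecondCountableTopology α] {A : Set α} (hA : ¬ A.Countable) :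
    ∃ a ∈ A, ∀ U ∈ 𝓝 a, ¬ (A ∩ U).Countable := by
  obtain ⟨a, ha, _, _, _, h, _⟩ := exists_two_cond hA
  exact ⟨a, ha, h⟩

/-! ### ENNReal limsup lemmas -/

lemma ennreal_limsup_add_le (u v : ℕ → ℝ≥0∞) :
    limsup (fun n => u n + v n) atTop ≤ limsup u atTop + limsup v atTop := by
  rcases eq_top_or_lt_top (limsup u atTop) with h | hu
  · rw [h, top_add]; exact le_top
  rcases eq_top_or_lt_top (limsup v atTop) with h | hv
  · rw [h, add_top]; exact le_top
  refine ENNReal.le_of_forall_pos_le_add fun ε hε _ => ?_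
  have hε2 : ((ε : ℝ≥0∞) / 2) ≠ 0 := by
    simp only [ne_eq, ENNReal.div_eq_zero_iff, ENNReal.coe_eq_zero, ENNReal.ofNat_ne_top,
      or_false]
    exact fun h => absurd h (by exact_mod_cast hε.ne')
  have hu' : ∀ᶠ n in atTop, u n < limsup u atTop + (ε : ℝ≥0∞) / 2 :=
    eventually_lt_of_limsup_lt (ENNReal.lt_add_right hu.ne hε2)
  have hv' : ∀ᶠ n in atTop, v n < limsup v atTop + (ε : ℝ≥0∞) / 2 :=
    eventually_lt_of_limsup_lt (ENNReal.lt_add_right hv.ne hε2)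
  have hb : ∀ᶠ n in atTop,
      u n + v n ≤ limsup u atTop + limsup v atTop + (ε : ℝ≥0∞) := by
    filter_upwards [hu', hv'] with n h1 h2
    calc u n + v n ≤ (limsup u atTop + (ε : ℝ≥0∞) / 2) + (limsup v atTop + (ε : ℝ≥0∞) / 2) :=
          add_le_add h1.le h2.le
      _ = limsup u atTop + limsup v atTop + (ε : ℝ≥0∞) := by
          rw [add_add_add_comm, ENNReal.add_halves]
  exact limsup_le_of_le (by isBoundedDefault) hb

lemma ennreal_eq_zero_of_le_inv {a : ℝ≥0∞}
    (h : ∀ k : ℕ, 1 ≤ k → a ≤ (k : ℝ≥0∞)⁻¹) : a = 0 := by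
  by_contra hne
  obtain ⟨n, hn⟩ := ENNReal.exists_inv_nat_lt hne
  have h1 : a ≤ ((n + 1 : ℕ) : ℝ≥0∞)⁻¹ := h (n + 1) (Nat.le_add_left 1 n)
  have h2 : ((n + 1 : ℕ) : ℝ≥0∞)⁻¹ ≤ ((n : ℕ) : ℝ≥0∞)⁻¹ := by
    apply ENNReal.inv_le_inv'
    exact_mod_cast Nat.le_succ n
  exact absurd (lt_of_le_of_lt (h1.trans h2) hn) (lt_irrefl a)

/-! ### The setting -/

variable {Z : Type*} {X : Type*} [MetricSpace Z] [MetricSpace X]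

/-- The sequence of iterated distances between the images of `a` and `b`. -/
def uu (f : X → X) (g : Z → X) (a b : Z) : ℕ → ℝ≥0∞ :=
  fun n => edist (f^[n] (g a)) (f^[n] (g b))

/-- The asymptotic pseudo-distance. -/
noncomputable def DD (f : X → X) (g : Z → X) (a b : Z) : ℝ≥0∞ := limsup (uu f g a b) atTop

lemma uu_comm (f : X → X) (g : Z → X) (a b : Z) : uu f g a b = uu f g b a := by
  funext n; exact edist_comm _ _

lemma DD_comm (f : X → X) (g : Z → X) (a b : Z) : DD f g a b = DD f g b a := by
  rw [DD, DD, uu_comm]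

lemma DD_self (f : X → X) (g : Z → X) (a : Z) : DD f g a a = 0 := by
  have : uu f g a a = fun _ => (0 : ℝ≥0∞) := by
    funext n; simp [uu]
  rw [DD, this, limsup_const]

lemma DD_triangle (f : X → X) (g : Z → X) (a b c : Z) :
    DD f g a c ≤ DD f g a b + DD f g b c := by
  refine le_trans ?_ (ennreal_limsup_add_le (uu f g a b) (uu f g b c))
  exact limsup_le_limsup (Eventually.of_forall (fun n => edist_triangle _ _ _))

/-- The standing hypothesis : `T` maps to a scrambled set, injectively. -/
def PairHyp (f : X → X) (g : Z → X) (T : Set Z) : Prop :=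
  ∀ a ∈ T, ∀ b ∈ T, a ≠ b →
    liminf (uu f g a b) atTop = 0 ∧ limsup (uu f g a b) atTop ≠ 0

lemma PairHyp.DD_pos {f : X → X} {g : Z → X} {T : Set Z} (hT : PairHyp f g T)
    {a b : Z} (ha : a ∈ T) (hb : b ∈ T) (hab : a ≠ b) : 0 < DD f g a b :=
  pos_iff_ne_zero.mpr (hT a ha b hb hab).2

/-! ### Agreement of binary sequences -/

/-- Two binary sequences agree below `m`. -/
def agree (m : ℕ) (σ τ : ℕ → Bool) : Prop := ∀ i, i < m → σ i = τ i

lemma agree_refl (m : ℕ) (σ : ℕ → Bool) : agree m σ σ := fun _ _ => rfl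

lemma agree_symm {m : ℕ} {σ τ : ℕ → Bool} (h : agree m σ τ) : agree m τ σ :=
  fun i hi => (h i hi).symm

lemma agree_trans {m : ℕ} {σ τ ρ : ℕ → Bool} (h : agree m σ τ) (h' : agree m τ ρ) :
    agree m σ ρ := fun i hi => (h i hi).trans (h' i hi)

lemma agree_zero (σ τ : ℕ → Bool) : agree 0 σ τ := fun i hi => absurd hi (Nat.not_lt_zero i)

lemma agree_mono {m n : ℕ} (hmn : m ≤ n) {σ τ : ℕ → Bool} (h : agree n σ τ) : agree m σ τ :=
  fun i hi => h i (lt_of_lt_of_le hi hmn)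

lemma not_agree_mono {m n : ℕ} (hmn : m ≤ n) {σ τ : ℕ → Bool} (h : ¬ agree m σ τ) :
    ¬ agree n σ τ := fun h' => h (agree_mono hmn h')

lemma agree_succ_iff {m : ℕ} {σ τ : ℕ → Bool} :
    agree (m + 1) σ τ ↔ agree m σ τ ∧ σ m = τ m := by
  constructor
  · intro h
    exact ⟨agree_mono (Nat.le_succ m) h, h m (Nat.lt_succ_self m)⟩
  · rintro ⟨h1, h2⟩ i hi
    rcases Nat.lt_succ_iff_lt_or_eq.mp hi with h | rfl
    · exact h1 i h
    · exact h2

/-- The canonical representative of a prefix. -/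
def res (m : ℕ) (σ : ℕ → Bool) : ℕ → Bool := fun i => if i < m then σ i else false

lemma agree_res (m : ℕ) (σ : ℕ → Bool) : agree m σ (res m σ) := by
  intro i hi; simp [res, hi]

lemma res_eq_of_agree {m : ℕ} {σ τ : ℕ → Bool} (h : agree m σ τ) : res m σ = res m τ := by
  funext i
  by_cases hi : i < m
  · simp [res, hi, h i hi]
  · simp [res, hi]

/-- Extension of a `Fin`-indexed prefix. -/
def extF {n : ℕ} (p : Fin n → Bool) : ℕ → Bool :=
  fun i => if h : i < n then p ⟨i, h⟩ else false

/-- Restriction to a `Fin`-indexed prefix. -/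
def resF (n : ℕ) (σ : ℕ → Bool) : Fin n → Bool := fun i => σ i

lemma agree_extF_resF (n : ℕ) (σ : ℕ → Bool) : agree n σ (extF (resF n σ)) := by
  intro i hi; simp [extF, resF, hi]

lemma not_agree_extF {n : ℕ} {p q : Fin n → Bool} (h : p ≠ q) :
    ¬ agree n (extF p) (extF q) := by
  intro hagree
  apply h
  funext i
  have := hagree i.1 i.2
  simpa [extF, i.2] using this

lemma resF_ne_of_not_agree {n : ℕ} {σ τ : ℕ → Bool} (h : ¬ agree n σ τ) :
    resF n σ ≠ resF n τ := by
  intro he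
  apply h
  intro i hi
  have := congrFun he ⟨i, hi⟩
  simpa [resF] using this

/-! ### The fusion structures -/

variable (f : X → X) (g : Z → X) (T : Set Z)

/-- The invariants carried along the fusion construction, apart from the stagewise
guarantees. -/
structure Pre (n : ℕ) (A : (ℕ → Bool) → Set Z) (δ : (ℕ → Bool) → (ℕ → Bool) → ℝ≥0∞) :
    Prop where
  subT : ∀ σ, A σ ⊆ T
  unc : ∀ σ, ¬ (A σ).Countable
  factorA : ∀ σ τ, agree n σ τ → A σ = A τ
  factorδ : ∀ σ τ σ' τ', agree n σ σ' → agree n τ τ' → δ σ τ = δ σ' τ'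
  pos : ∀ σ τ, ¬ agree n σ τ → 0 < δ σ τ
  sep : ∀ σ τ, ¬ agree n σ τ → ∀ a ∈ A σ, ∀ b ∈ A τ, δ σ τ < DD f g a b

/-- Full invariant at stage `n`. -/
structure Good (n : ℕ) (A : (ℕ → Bool) → Set Z) (δ : (ℕ → Bool) → (ℕ → Bool) → ℝ≥0∞) :
    Prop where
  pre : Pre f g T n A δ
  guar : n ≠ 0 → ∀ σ τ, ¬ agree n σ τ → ∀ a ∈ closure (A σ), ∀ b ∈ closure (A τ),
      (∃ j, n ≤ j ∧ uu f g a b j < (n : ℝ≥0∞)⁻¹) ∧ (∃ j, n ≤ j ∧ δ σ τ < uu f g a b j)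
  small : n ≠ 0 → ∀ σ, EMetric.diam (A σ) ≤ (2 : ℝ≥0∞)⁻¹ ^ n

variable {f g T}

/-! ### The splitting lemma -/

lemma split_lemma [SecondCountableTopology Z] (hT : PairHyp f g T)
    {A : Set Z} (hA1 : A ⊆ T) (hA2 : ¬ A.Countable) :
    ∃ (ε : ℝ≥0∞) (B : Bool → Set Z), 0 < ε ∧ (∀ i, B i ⊆ A) ∧ (∀ i, ¬ (B i).Countable) ∧
      ∀ a ∈ B false, ∀ b ∈ B true, ε < DD f g a b := by
  classical
  by_cases hG : ∃ a₀ ∈ A, ∃ a₁ ∈ A, a₀ ≠ a₁ ∧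
      (∀ q : ℝ≥0∞, 0 < q → ¬ {b | b ∈ A ∧ DD f g a₀ b < q}.Countable) ∧
      (∀ q : ℝ≥0∞, 0 < q → ¬ {b | b ∈ A ∧ DD f g a₁ b < q}.Countable)
  · obtain ⟨a₀, ha₀, a₁, ha₁, hne, h₀, h₁⟩ := hG
    set ε0 := min (DD f g a₀ a₁) 1 with hε0def
    have hε0pos : 0 < ε0 := lt_min (hT.DD_pos (hA1 ha₀) (hA1 ha₁) hne) one_pos
    have hε0top : ε0 ≠ ⊤ := ((min_le_right _ _).trans_lt ENNReal.one_lt_top).ne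
    have hq : 0 < ε0 / 4 := ENNReal.div_pos hε0pos.ne' (by norm_num)
    have hqtop : ε0 / 4 ≠ ⊤ :=
      (ENNReal.div_lt_top hε0top (by norm_num)).ne
    refine ⟨ε0 / 4,
      fun i => if i then {b | b ∈ A ∧ DD f g a₁ b < ε0 / 4}
        else {b | b ∈ A ∧ DD f g a₀ b < ε0 / 4}, hq, ?_, ?_, ?_⟩
    · intro i; cases i <;> exact fun b hb => hb.1
    · intro i; cases i
      · exact h₀ _ hq
      · exact h₁ _ hq
    · rintro b₀ hb₀ b₁ hb₁
      simp only [if_true, if_false, Bool.false_eq_true] at hb₀ hb₁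
      obtain ⟨hb₀A, hb₀d⟩ := hb₀
      obtain ⟨hb₁A, hb₁d⟩ := hb₁
      by_contra hcon
      push_neg at hcon
      have tri : DD f g a₀ a₁ ≤ DD f g a₀ b₀ + (DD f g b₀ b₁ + DD f g b₁ a₁) :=
        le_trans (DD_triangle f g a₀ b₀ a₁) (add_le_add le_rfl (DD_triangle f g b₀ b₁ a₁))
      have hb₁' : DD f g b₁ a₁ ≤ ε0 / 4 := by rw [DD_comm]; exact hb₁d.le
      have hsum : DD f g a₀ a₁ ≤ ε0 / 4 + (ε0 / 4 + ε0 / 4) :=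
        le_trans tri (add_le_add hb₀d.le (add_le_add hcon hb₁'))
      have h3 : ε0 / 4 + (ε0 / 4 + ε0 / 4) = 3 * (ε0 / 4) := by ring
      have h4 : (3 : ℝ≥0∞) * (ε0 / 4) < 4 * (ε0 / 4) := by
        rw [ENNReal.mul_lt_mul_iff_left hq.ne' hqtop]
        norm_num
      have h5 : (4 : ℝ≥0∞) * (ε0 / 4) = ε0 := by
        rw [ENNReal.mul_div_cancel' (by norm_num) (by norm_num)]
      have : ε0 < ε0 := by
        calc ε0 ≤ DD f g a₀ a₁ := min_le_left _ _
          _ ≤ 3 * (ε0 / 4) := by rw [← h3]; exact hsum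
          _ < 4 * (ε0 / 4) := h4
          _ = ε0 := h5
      exact absurd this (lt_irrefl ε0)
  · -- no two condensation points for `DD` : find a uniformly separated uncountable set
    set G := {a | a ∈ A ∧ ∀ q : ℝ≥0∞, 0 < q → ¬ {b | b ∈ A ∧ DD f g a b < q}.Countable}
      with hGdef
    have hGsub : G.Subsingleton := by
      intro x hx y hy
      by_contra hxy
      exact hG ⟨x, hx.1, y, hy.1, hxy, hx.2, hy.2⟩
    have hA' : ¬ (A \ G).Countable := not_countable_diff hA2 hGsub.countable
    have key : ∀ a ∈ A \ G, ∃ k : ℕ,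
        {b | b ∈ A ∧ DD f g a b < ((k : ℝ≥0∞) + 1)⁻¹}.Countable := by
      rintro a ⟨haA, haG⟩
      have : ¬ (∀ q : ℝ≥0∞, 0 < q → ¬ {b | b ∈ A ∧ DD f g a b < q}.Countable) := by
        intro hq; exact haG ⟨haA, hq⟩
      push_neg at this
      obtain ⟨q, hq, hqc⟩ := this
      obtain ⟨k, hk⟩ := ENNReal.exists_inv_nat_lt hq.ne'
      have hlek : ((k : ℝ≥0∞) + 1)⁻¹ ≤ q :=
        le_trans (ENNReal.inv_le_inv' le_self_add) hk.le
      have hsubset : {b | b ∈ A ∧ DD f g a b < ((k : ℝ≥0∞) + 1)⁻¹}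
          ⊆ {b | b ∈ A ∧ DD f g a b < q} :=
        fun b hb => ⟨hb.1, lt_of_lt_of_le hb.2 hlek⟩
      exact ⟨k, hqc.mono hsubset⟩
    have hpig : ¬ ∀ k : ℕ, {a | a ∈ A \ G ∧
        {b | b ∈ A ∧ DD f g a b < ((k : ℝ≥0∞) + 1)⁻¹}.Countable}.Countable := by
      intro hall
      apply hA'
      have hcover : A \ G ⊆ ⋃ k : ℕ, {a | a ∈ A \ G ∧
          {b | b ∈ A ∧ DD f g a b < ((k : ℝ≥0∞) + 1)⁻¹}.Countable} := by
        intro a ha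
        obtain ⟨k, hk⟩ := key a ha
        exact Set.mem_iUnion.mpr ⟨k, ha, hk⟩
      exact (Set.countable_iUnion hall).mono hcover
    push_neg at hpig
    obtain ⟨k, hk⟩ := hpig
    set r : ℝ≥0∞ := ((k : ℝ≥0∞) + 1)⁻¹ with hrdef
    have hrpos : 0 < r := ENNReal.inv_pos.mpr (by
      exact ENNReal.add_ne_top.mpr ⟨ENNReal.natCast_ne_top k, ENNReal.one_ne_top⟩)
    have hrtop : r ≠ ⊤ := ENNReal.inv_ne_top.mpr (lt_of_lt_of_le one_pos le_add_self).ne'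
    set A₂ := {a | a ∈ A \ G ∧ {b | b ∈ A ∧ DD f g a b < r}.Countable} with hA₂def
    -- Zorn's lemma : maximal r-separated subset of A₂
    have hchains : ∀ c ⊆ {M : Set Z | M ⊆ A₂ ∧ M.Pairwise fun x y => r ≤ DD f g x y},
        IsChain (· ⊆ ·) c →
        ∃ ub ∈ {M : Set Z | M ⊆ A₂ ∧ M.Pairwise fun x y => r ≤ DD f g x y},
          ∀ s ∈ c, s ⊆ ub := by
      intro c hc hchain
      refine ⟨⋃₀ c, ⟨?_, ?_⟩, fun s hs => Set.subset_sUnion_of_mem hs⟩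
      · exact Set.sUnion_subset (fun s hs => (hc hs).1)
      · rintro x ⟨s, hs, hxs⟩ y ⟨t, ht, hyt⟩ hxy
        rcases eq_or_ne s t with rfl | hst
        · exact (hc hs).2 hxs hyt hxy
        · rcases hchain hs ht hst with h | h
          · exact (hc ht).2 (h hxs) hyt hxy
          · exact (hc hs).2 hxs (h hyt) hxy
    obtain ⟨M, hMmax⟩ := zorn_subset
        {M : Set Z | M ⊆ A₂ ∧ M.Pairwise fun x y => r ≤ DD f g x y} hchains
    have hMA₂ : M ⊆ A₂ := hMmax.prop.1
    have hMpair : M.Pairwise fun x y => r ≤ DD f g x y := hMmax.prop.2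
    have hMunc : ¬ M.Countable := by
      intro hMc
      apply hk
      have hcov : A₂ ⊆ M ∪ ⋃ x ∈ M, {b | b ∈ A ∧ DD f g x b < r} := by
        intro a ha
        by_cases haM : a ∈ M
        · exact Or.inl haM
        · right
          have hnotpair : ¬ (insert a M).Pairwise (fun x y => r ≤ DD f g x y) := by
            intro hp
            exact haM ((hMmax.2 ⟨Set.insert_subset ha hMA₂, hp⟩
              (Set.subset_insert a M)) (Set.mem_insert a M))
          have hex : ∃ x ∈ M, DD f g x a < r := by
            by_contra hcon
            push_neg at hcon
            apply hnotpair
            rw [Set.pairwise_insert]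
            refine ⟨hMpair, ?_⟩
            intro b hb hab
            have h1 : r ≤ DD f g b a := hcon b hb
            refine ⟨?_, h1⟩
            rw [DD_comm]
            exact h1
          obtain ⟨x, hxM, hDD⟩ := hex
          exact Set.mem_biUnion hxM ⟨ha.1.1, hDD⟩
      refine (Set.Countable.mono hcov ?_)
      exact hMc.union (Set.Countable.biUnion hMc (fun x hx => (hMA₂ hx).2))
    obtain ⟨p, hpM, q, hqM, hpq, hp, hqcond⟩ := exists_two_cond hMunc
    obtain ⟨U, V, hUo, hVo, hpU, hqV, hUV⟩ := t2_separation hpq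
    refine ⟨r / 2, fun i => if i then M ∩ V else M ∩ U,
      ENNReal.div_pos hrpos.ne' (by norm_num), ?_, ?_, ?_⟩
    · intro i
      cases i <;> exact fun x hx => (hMA₂ hx.1).1.1
    · intro i
      cases i
      · exact hp U (hUo.mem_nhds hpU)
      · exact hqcond V (hVo.mem_nhds hqV)
    · rintro b₀ hb₀ b₁ hb₁
      simp only [if_true, if_false, Bool.false_eq_true] at hb₀ hb₁
      have hne : b₀ ≠ b₁ := by
        rintro rfl
        exact (Set.disjoint_left.mp hUV hb₀.2) hb₁.2
      have : r ≤ DD f g b₀ b₁ := hMpair hb₀.1 hb₁.1 hne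
      exact lt_of_lt_of_le (ENNReal.half_lt_self hrpos.ne' hrtop) this

/-! ### Shrinking one pair -/

lemma shrink_pair [SecondCountableTopology Z]
    (hf : Continuous f) (hg : Continuous g) (hT : PairHyp f g T)
    {n : ℕ} (hn : n ≠ 0) {B : (ℕ → Bool) → Set Z} {δ' : (ℕ → Bool) → (ℕ → Bool) → ℝ≥0∞}
    (hB : Pre f g T n B δ') {σ₁ σ₂ : ℕ → Bool} (hd : ¬ agree n σ₁ σ₂) :
    ∃ B' : (ℕ → Bool) → Set Z, (∀ σ, B' σ ⊆ B σ) ∧ Pre f g T n B' δ' ∧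
      (∀ a ∈ closure (B' σ₁), ∀ b ∈ closure (B' σ₂),
        (∃ j, n ≤ j ∧ uu f g a b j < (n : ℝ≥0∞)⁻¹) ∧
        (∃ j, n ≤ j ∧ δ' σ₁ σ₂ < uu f g a b j)) ∧
      EMetric.diam (B' σ₁) ≤ (2 : ℝ≥0∞)⁻¹ ^ n ∧ EMetric.diam (B' σ₂) ≤ (2 : ℝ≥0∞)⁻¹ ^ n := by
  classical
  obtain ⟨a₀, ha₀, hgood_a⟩ := exists_cond (hB.unc σ₁)
  obtain ⟨b₀, hb₀, hgood_b⟩ := exists_cond (hB.unc σ₂)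
  have hsep : δ' σ₁ σ₂ < DD f g a₀ b₀ := hB.sep σ₁ σ₂ hd a₀ ha₀ b₀ hb₀
  have hne : a₀ ≠ b₀ := by
    rintro rfl
    rw [DD_self] at hsep
    exact absurd hsep (not_lt.mpr zero_le)
  have hprox : liminf (uu f g a₀ b₀) atTop = 0 :=
    (hT a₀ (hB.subT σ₁ ha₀) b₀ (hB.subT σ₂ hb₀) hne).1
  have hinv : (0 : ℝ≥0∞) < (n : ℝ≥0∞)⁻¹ := ENNReal.inv_pos.mpr (ENNReal.natCast_ne_top n)
  have h1 : ∃ j, n ≤ j ∧ uu f g a₀ b₀ j < (n : ℝ≥0∞)⁻¹ := by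
    have hfreq : ∃ᶠ j in atTop, uu f g a₀ b₀ j < (n : ℝ≥0∞)⁻¹ :=
      frequently_lt_of_liminf_lt (h := by rw [hprox]; exact hinv)
    obtain ⟨j, hj1, hj2⟩ := (hfreq.and_eventually (eventually_ge_atTop n)).exists
    exact ⟨j, hj2, hj1⟩
  have h2 : ∃ j, n ≤ j ∧ δ' σ₁ σ₂ < uu f g a₀ b₀ j := by
    have hfreq : ∃ᶠ j in atTop, δ' σ₁ σ₂ < uu f g a₀ b₀ j :=
      frequently_lt_of_lt_limsup (h := hsep)
    obtain ⟨j, hj1, hj2⟩ := (hfreq.and_eventually (eventually_ge_atTop n)).exists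
    exact ⟨j, hj2, hj1⟩
  obtain ⟨j₁, hj₁n, hj₁⟩ := h1
  obtain ⟨j₂, hj₂n, hj₂⟩ := h2
  have hc1 : Continuous fun z : Z => f^[j₁] (g z) := (hf.iterate j₁).comp hg
  have hc2 : Continuous fun z : Z => f^[j₂] (g z) := (hf.iterate j₂).comp hg
  set O : Set (Z × Z) := {y | uu f g y.1 y.2 j₁ < (n : ℝ≥0∞)⁻¹ ∧ δ' σ₁ σ₂ < uu f g y.1 y.2 j₂}
    with hOdef
  have hO : IsOpen O := by
    apply IsOpen.inter
    · exact isOpen_Iio.preimage ((hc1.comp continuous_fst).edist (hc1.comp continuous_snd))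
    · exact isOpen_Ioi.preimage ((hc2.comp continuous_fst).edist (hc2.comp continuous_snd))
  have hmem : (a₀, b₀) ∈ O := ⟨hj₁, hj₂⟩
  obtain ⟨r, hr0, hrball⟩ := EMetric.isOpen_iff.mp hO (a₀, b₀) hmem
  set ρ : ℝ≥0∞ := min (min r 1 / 2) ((2 : ℝ≥0∞)⁻¹ ^ (n + 2)) with hρdef
  have hmin1 : (0 : ℝ≥0∞) < min r 1 := lt_min hr0 one_pos
  have hρ0 : 0 < ρ :=
    lt_min (ENNReal.div_pos hmin1.ne' (by norm_num))
      (ENNReal.pow_pos (ENNReal.inv_pos.mpr (by norm_num)) _)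
  have hρr : ρ < r := by
    calc ρ ≤ min r 1 / 2 := min_le_left _ _
      _ < min r 1 := ENNReal.half_lt_self hmin1.ne'
          ((min_le_right _ _).trans_lt ENNReal.one_lt_top).ne
      _ ≤ r := min_le_left _ _
  have hball : ∀ x : Z, closure (EMetric.ball x ρ) ⊆ EMetric.ball x r := by
    intro x
    have hclosed : IsClosed {y : Z | edist y x ≤ ρ} :=
      isClosed_le (continuous_id.edist continuous_const) continuous_const
    have h1 : closure (EMetric.ball x ρ) ⊆ {y : Z | edist y x ≤ ρ} :=
      closure_minimal (fun y hy => (EMetric.mem_ball.mp hy).le) hclosed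
    intro y hy
    exact EMetric.mem_ball.mpr (lt_of_le_of_lt (h1 hy) hρr)
  set B' : (ℕ → Bool) → Set Z := fun σ =>
    if agree n σ σ₁ then B σ₁ ∩ EMetric.ball a₀ ρ
    else if agree n σ σ₂ then B σ₂ ∩ EMetric.ball b₀ ρ
    else B σ with hB'def
  have hd21 : ¬ agree n σ₂ σ₁ := fun h => hd (agree_symm h)
  have hB'σ₁ : B' σ₁ = B σ₁ ∩ EMetric.ball a₀ ρ := by
    simp [hB'def, agree_refl]
  have hB'σ₂ : B' σ₂ = B σ₂ ∩ EMetric.ball b₀ ρ := by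
    simp [hB'def, hd21, agree_refl]
  have hsub : ∀ σ, B' σ ⊆ B σ := by
    intro σ
    by_cases h1 : agree n σ σ₁
    · rw [hB'def]
      simp only [if_pos h1]
      rw [hB.factorA σ σ₁ h1]
      exact Set.inter_subset_left
    · by_cases h2 : agree n σ σ₂
      · rw [hB'def]
        simp only [if_neg h1, if_pos h2]
        rw [hB.factorA σ σ₂ h2]
        exact Set.inter_subset_left
      · rw [hB'def]; simp only [if_neg h1, if_neg h2]
        exact subset_rfl
  have hPre' : Pre f g T n B' δ' := by
    refine ⟨fun σ => (hsub σ).trans (hB.subT σ), ?_, ?_, hB.factorδ, hB.pos, ?_⟩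
    · intro σ
      by_cases h1 : agree n σ σ₁
      · rw [hB'def]; simp only [if_pos h1]
        exact hgood_a _ (EMetric.isOpen_ball.mem_nhds (EMetric.mem_ball_self hρ0))
      · by_cases h2 : agree n σ σ₂
        · rw [hB'def]; simp only [if_neg h1, if_pos h2]
          exact hgood_b _ (EMetric.isOpen_ball.mem_nhds (EMetric.mem_ball_self hρ0))
        · rw [hB'def]; simp only [if_neg h1, if_neg h2]
          exact hB.unc σ
    · intro σ τ hστ
      have e1 : agree n σ σ₁ ↔ agree n τ σ₁ :=
        ⟨fun h => agree_trans (agree_symm hστ) h, fun h => agree_trans hστ h⟩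
      have e2 : agree n σ σ₂ ↔ agree n τ σ₂ :=
        ⟨fun h => agree_trans (agree_symm hστ) h, fun h => agree_trans hστ h⟩
      rw [hB'def]
      simp only
      by_cases h1 : agree n σ σ₁
      · rw [if_pos h1, if_pos (e1.mp h1)]
      · rw [if_neg h1, if_neg (fun h => h1 (e1.mpr h))]
        by_cases h2 : agree n σ σ₂
        · rw [if_pos h2, if_pos (e2.mp h2)]
        · rw [if_neg h2, if_neg (fun h => h2 (e2.mpr h)), hB.factorA σ τ hστ]
    · intro σ τ hστ a ha b hb
      exact hB.sep σ τ hστ a (hsub σ ha) b (hsub τ hb)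
  have hguar : ∀ a ∈ closure (B' σ₁), ∀ b ∈ closure (B' σ₂),
      (∃ j, n ≤ j ∧ uu f g a b j < (n : ℝ≥0∞)⁻¹) ∧
      (∃ j, n ≤ j ∧ δ' σ₁ σ₂ < uu f g a b j) := by
    intro a ha b hb
    have ha' : a ∈ EMetric.ball a₀ r := by
      apply hball a₀
      refine closure_mono ?_ ha
      rw [hB'σ₁]; exact Set.inter_subset_right
    have hb' : b ∈ EMetric.ball b₀ r := by
      apply hball b₀
      refine closure_mono ?_ hb
      rw [hB'σ₂]; exact Set.inter_subset_right
    have : (a, b) ∈ Metric.eball (a₀, b₀) r := by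
      rw [← Metric.eball_prod_same]
      exact ⟨ha', hb'⟩
    have hO' := hrball this
    exact ⟨⟨j₁, hj₁n, hO'.1⟩, ⟨j₂, hj₂n, hO'.2⟩⟩
  have hdiam : ∀ (x : Z) (S : Set Z),
      EMetric.diam (S ∩ EMetric.ball x ρ) ≤ (2 : ℝ≥0∞)⁻¹ ^ n := by
    intro x S
    calc EMetric.diam (S ∩ EMetric.ball x ρ)
        ≤ EMetric.diam (EMetric.ball x ρ) := EMetric.diam_mono Set.inter_subset_right
      _ ≤ 2 * ρ := EMetric.diam_ball
      _ ≤ 2 * ((2 : ℝ≥0∞)⁻¹ ^ (n + 2)) := mul_le_mul_right (min_le_right _ _) 2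
      _ = (2 : ℝ≥0∞)⁻¹ ^ (n + 1) := by
          rw [pow_succ, mul_comm ((2 : ℝ≥0∞)⁻¹ ^ (n + 1)) _, ← mul_assoc,
            ENNReal.mul_inv_cancel (by norm_num) (by norm_num), one_mul]
      _ ≤ (2 : ℝ≥0∞)⁻¹ ^ n := by
          rw [pow_succ]
          calc (2 : ℝ≥0∞)⁻¹ ^ n * 2⁻¹ ≤ (2 : ℝ≥0∞)⁻¹ ^ n * 1 :=
                mul_le_mul_right (ENNReal.inv_le_one.mpr one_le_two) _
            _ = (2 : ℝ≥0∞)⁻¹ ^ n := mul_one _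
  refine ⟨B', hsub, hPre', hguar, ?_, ?_⟩
  · rw [hB'σ₁]; exact hdiam a₀ (B σ₁)
  · rw [hB'σ₂]; exact hdiam b₀ (B σ₂)

/-! ### Shrinking along a list of pairs -/

lemma shrink_loop [SecondCountableTopology Z]
    (hf : Continuous f) (hg : Continuous g) (hT : PairHyp f g T)
    {n : ℕ} (hn : n ≠ 0) (L : List ((Fin n → Bool) × (Fin n → Bool)))
    {B : (ℕ → Bool) → Set Z} {δ' : (ℕ → Bool) → (ℕ → Bool) → ℝ≥0∞}
    (hB : Pre f g T n B δ') :
    ∃ B' : (ℕ → Bool) → Set Z, (∀ σ, B' σ ⊆ B σ) ∧ Pre f g T n B' δ' ∧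
      ∀ pq ∈ L, pq.1 ≠ pq.2 →
        (∀ a ∈ closure (B' (extF pq.1)), ∀ b ∈ closure (B' (extF pq.2)),
          (∃ j, n ≤ j ∧ uu f g a b j < (n : ℝ≥0∞)⁻¹) ∧
          (∃ j, n ≤ j ∧ δ' (extF pq.1) (extF pq.2) < uu f g a b j)) ∧
        EMetric.diam (B' (extF pq.1)) ≤ (2 : ℝ≥0∞)⁻¹ ^ n ∧
        EMetric.diam (B' (extF pq.2)) ≤ (2 : ℝ≥0∞)⁻¹ ^ n := by
  induction L generalizing B with
  | nil =>
      exact ⟨B, fun σ => le_refl _, hB, by simp⟩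
  | cons hd tl ih =>
      by_cases hne : hd.1 = hd.2
      · obtain ⟨B', hsub, hPre', htl⟩ := ih hB
        refine ⟨B', hsub, hPre', ?_⟩
        intro pq hpq hpqne
        rcases List.mem_cons.mp hpq with rfl | hmem
        · exact absurd hne hpqne
        · exact htl pq hmem hpqne
      · have hd' : ¬ agree n (extF hd.1) (extF hd.2) := not_agree_extF hne
        obtain ⟨B₁, hsub₁, hPre₁, hguar₁, hd1, hd2⟩ := shrink_pair hf hg hT hn hB hd'
        obtain ⟨B₂, hsub₂, hPre₂, htl⟩ := ih hPre₁
        refine ⟨B₂, fun σ => (hsub₂ σ).trans (hsub₁ σ), hPre₂, ?_⟩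
        intro pq hpq hpqne
        rcases List.mem_cons.mp hpq with rfl | hmem
        · refine ⟨?_, ?_, ?_⟩
          · intro a ha b hb
            exact hguar₁ a (closure_mono (hsub₂ _) ha) b (closure_mono (hsub₂ _) hb)
          · exact le_trans (EMetric.diam_mono (hsub₂ _)) hd1
          · exact le_trans (EMetric.diam_mono (hsub₂ _)) hd2
        · exact htl pq hmem hpqne

/-! ### The step lemma -/

lemma step_lemma [SecondCountableTopology Z]
    (hf : Continuous f) (hg : Continuous g) (hT : PairHyp f g T)
    {m : ℕ} {A : (ℕ → Bool) → Set Z} {δ : (ℕ → Bool) → (ℕ → Bool) → ℝ≥0∞}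
    (h : Good f g T m A δ) :
    ∃ (A' : (ℕ → Bool) → Set Z) (δ' : (ℕ → Bool) → (ℕ → Bool) → ℝ≥0∞),
      (∀ σ, A' σ ⊆ A σ) ∧ (∀ σ τ, ¬ agree m σ τ → δ' σ τ = δ σ τ) ∧
      Good f g T (m + 1) A' δ' := by
  classical
  choose ε Bs hε hBsub hBunc hBsep using
    fun p : ℕ → Bool => split_lemma hT (h.pre.subT p) (h.pre.unc p)
  set A₀ : (ℕ → Bool) → Set Z := fun σ => Bs (res m σ) (σ m) with hA₀def
  set δ₀ : (ℕ → Bool) → (ℕ → Bool) → ℝ≥0∞ := fun σ τ =>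
    if agree m σ τ then ε (res m σ) else δ σ τ with hδ₀def
  have hA₀A : ∀ σ, A₀ σ ⊆ A σ := by
    intro σ
    have h1 : Bs (res m σ) (σ m) ⊆ A (res m σ) := hBsub (res m σ) (σ m)
    have h2 : A (res m σ) = A σ := h.pre.factorA _ _ (agree_symm (agree_res m σ))
    rw [hA₀def]
    simp only
    rw [← h2]
    exact h1
  have hPre₀ : Pre f g T (m + 1) A₀ δ₀ := by
    refine ⟨fun σ => (hA₀A σ).trans (h.pre.subT σ), fun σ => hBunc _ _, ?_, ?_, ?_, ?_⟩
    · intro σ τ hστ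
      have h1 : res m σ = res m τ := res_eq_of_agree (agree_mono (Nat.le_succ m) hστ)
      have h2 : σ m = τ m := hστ m (Nat.lt_succ_self m)
      rw [hA₀def]; simp only [h1, h2]
    · intro σ τ σ' τ' hσ hτ
      have hσm : agree m σ σ' := agree_mono (Nat.le_succ m) hσ
      have hτm : agree m τ τ' := agree_mono (Nat.le_succ m) hτ
      have e1 : agree m σ τ ↔ agree m σ' τ' :=
        ⟨fun hh => agree_trans (agree_symm hσm) (agree_trans hh hτm),
         fun hh => agree_trans hσm (agree_trans hh (agree_symm hτm))⟩
      rw [hδ₀def]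
      simp only
      by_cases hc : agree m σ τ
      · rw [if_pos hc, if_pos (e1.mp hc), res_eq_of_agree hσm]
      · rw [if_neg hc, if_neg (fun hh => hc (e1.mpr hh)), h.pre.factorδ σ τ σ' τ' hσm hτm]
    · intro σ τ hστ
      rw [hδ₀def]
      simp only
      by_cases hc : agree m σ τ
      · rw [if_pos hc]; exact hε _
      · rw [if_neg hc]; exact h.pre.pos σ τ hc
    · intro σ τ hστ a ha b hb
      rw [hδ₀def]
      simp only
      by_cases hc : agree m σ τ
      · rw [if_pos hc]
        have hres : res m σ = res m τ := res_eq_of_agree hc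
        have hσm : σ m ≠ τ m := by
          intro heq
          exact hστ (agree_succ_iff.mpr ⟨hc, heq⟩)
        rw [hA₀def] at ha hb
        simp only at ha hb
        cases hσb : σ m <;> cases hτb : τ m
        · rw [hσb, hτb] at hσm; exact absurd rfl hσm
        · rw [hσb] at ha; rw [hτb, ← hres] at hb
          exact hBsep (res m σ) a ha b hb
        · rw [hσb] at ha; rw [hτb, ← hres] at hb
          rw [DD_comm]
          exact hBsep (res m σ) b hb a ha
        · rw [hσb, hτb] at hσm; exact absurd rfl hσm
      · rw [if_neg hc]
        exact h.pre.sep σ τ hc a (hA₀A σ ha) b (hA₀A τ hb)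
  set L := ((Finset.univ : Finset ((Fin (m + 1) → Bool) × (Fin (m + 1) → Bool)))).toList
    with hLdef
  obtain ⟨A', hsub', hPre', hguar'⟩ :=
    shrink_loop hf hg hT (Nat.succ_ne_zero m) L hPre₀
  have hmemL : ∀ pq : (Fin (m + 1) → Bool) × (Fin (m + 1) → Bool), pq ∈ L :=
    fun pq => Finset.mem_toList.mpr (Finset.mem_univ pq)
  refine ⟨A', δ₀, fun σ => (hsub' σ).trans (hA₀A σ), ?_, ?_⟩
  · intro σ τ hστ
    rw [hδ₀def]; simp only [if_neg hστ]
  · refine ⟨hPre', ?_, ?_⟩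
    · intro _ σ τ hστ a ha b hb
      set p := resF (m + 1) σ with hpdef
      set q := resF (m + 1) τ with hqdef
      have hpq : p ≠ q := resF_ne_of_not_agree hστ
      have hAp : A' σ = A' (extF p) := hPre'.factorA _ _ (agree_extF_resF (m + 1) σ)
      have hAq : A' τ = A' (extF q) := hPre'.factorA _ _ (agree_extF_resF (m + 1) τ)
      have hδpq : δ₀ σ τ = δ₀ (extF p) (extF q) :=
        hPre'.factorδ _ _ _ _ (agree_extF_resF (m + 1) σ) (agree_extF_resF (m + 1) τ)
      have hspec := (hguar' (p, q) (hmemL (p, q)) hpq).1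
      rw [hAp] at ha
      rw [hAq] at hb
      have := hspec a ha b hb
      rw [hδpq]
      exact this
    · intro _ σ
      set p := resF (m + 1) σ with hpdef
      set q : Fin (m + 1) → Bool := fun i => !(p i) with hqdef
      have hpq : p ≠ q := by
        intro heq
        have := congrFun heq ⟨0, Nat.succ_pos m⟩
        exact absurd this (Bool.self_ne_not _)
      have hAp : A' σ = A' (extF p) := hPre'.factorA _ _ (agree_extF_resF (m + 1) σ)
      rw [hAp]
      exact (hguar' (p, q) (hmemL (p, q)) hpq).2.1

/-! ### The base case -/

lemma good_zero (hTunc : ¬ T.Countable) :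
    Good f g T 0 (fun _ => T) (fun _ _ => 1) := by
  refine ⟨⟨fun _ => le_refl _, fun _ => hTunc, fun _ _ _ => rfl, fun _ _ _ _ _ _ => rfl,
    ?_, ?_⟩, ?_, ?_⟩
  · intro σ τ hστ; exact absurd (agree_zero σ τ) hστ
  · intro σ τ hστ; exact absurd (agree_zero σ τ) hστ
  · intro h0; exact absurd rfl h0
  · intro h0; exact absurd rfl h0

/-! ### The chain of states -/

variable [SecondCountableTopology Z]

/-- State space for the fusion recursion. -/
abbrev FState (Z : Type*) : Type _ :=
  ((ℕ → Bool) → Set Z) × ((ℕ → Bool) → (ℕ → Bool) → ℝ≥0∞)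

variable (f g T)

open Classical in
noncomputable def nextS (hf : Continuous f) (hg : Continuous g) (hT : PairHyp f g T)
    (m : ℕ) (p : FState Z) : FState Z :=
  if h : Good f g T m p.1 p.2 then
    ⟨(step_lemma hf hg hT h).choose, (step_lemma hf hg hT h).choose_spec.choose⟩
  else p

noncomputable def chainS (hf : Continuous f) (hg : Continuous g) (hT : PairHyp f g T) :
    ℕ → FState Z :=
  fun m => Nat.rec (⟨fun _ => T, fun _ _ => 1⟩ : FState Z)
    (fun k p => nextS f g T hf hg hT k p) m

variable {f g T}

section Chain

variable (hf : Continuous f) (hg : Continuous g) (hT : PairHyp f g T) (hTunc : ¬ T.Countable)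

include hTunc

lemma chain_good : ∀ m, Good f g T m (chainS f g T hf hg hT m).1 (chainS f g T hf hg hT m).2 := by
  intro m
  induction m with
  | zero => exact good_zero hTunc
  | succ k ih =>
      show Good f g T (k + 1) (nextS f g T hf hg hT k (chainS f g T hf hg hT k)).1
        (nextS f g T hf hg hT k (chainS f g T hf hg hT k)).2
      rw [nextS, dif_pos ih]
      exact (step_lemma hf hg hT ih).choose_spec.choose_spec.2.2

lemma chain_sub (m : ℕ) :
    ∀ σ, (chainS f g T hf hg hT (m + 1)).1 σ ⊆ (chainS f g T hf hg hT m).1 σ := by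
  have hgm := chain_good hf hg hT hTunc m
  show ∀ σ, (nextS f g T hf hg hT m (chainS f g T hf hg hT m)).1 σ ⊆ _
  rw [nextS, dif_pos hgm]
  exact (step_lemma hf hg hT hgm).choose_spec.choose_spec.1

lemma chain_stable (m : ℕ) :
    ∀ σ τ, ¬ agree m σ τ →
      (chainS f g T hf hg hT (m + 1)).2 σ τ = (chainS f g T hf hg hT m).2 σ τ := by
  have hgm := chain_good hf hg hT hTunc m
  show ∀ σ τ, _ → (nextS f g T hf hg hT m (chainS f g T hf hg hT m)).2 σ τ = _
  rw [nextS, dif_pos hgm]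
  exact (step_lemma hf hg hT hgm).choose_spec.choose_spec.2.1

lemma chain_le {m m' : ℕ} (hmm : m ≤ m') :
    ∀ σ, (chainS f g T hf hg hT m').1 σ ⊆ (chainS f g T hf hg hT m).1 σ := by
  induction m' with
  | zero =>
      have : m = 0 := Nat.le_zero.mp hmm
      subst this; exact fun σ => le_refl _
  | succ k ih =>
      rcases eq_or_lt_of_le hmm with rfl | hlt
      · exact fun σ => le_refl _
      · have hle : m ≤ k := Nat.lt_succ_iff.mp hlt
        exact fun σ => (chain_sub hf hg hT hTunc k σ).trans (ih hle σ)

lemma chain_stable_ge {m m' : ℕ} (hmm : m ≤ m') {σ τ : ℕ → Bool} (hστ : ¬ agree m σ τ) :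
    (chainS f g T hf hg hT m').2 σ τ = (chainS f g T hf hg hT m).2 σ τ := by
  induction m' with
  | zero =>
      have : m = 0 := Nat.le_zero.mp hmm
      subst this; rfl
  | succ k ih =>
      rcases eq_or_lt_of_le hmm with rfl | hlt
      · rfl
      · have hle : m ≤ k := Nat.lt_succ_iff.mp hlt
        rw [chain_stable hf hg hT hTunc k σ τ (not_agree_mono hle hστ)]
        exact ih hle

end Chain

/-! ### The limit construction -/

theorem core {Z X : Type*} [MetricSpace Z] [MetricSpace X] [CompleteSpace Z]
    [SecondCountableTopology Z]
    {f : X → X} {g : Z → X} (hf : Continuous f) (hg : Continuous g)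
    {T : Set Z} (hTunc : ¬ T.Countable) (hT : PairHyp f g T) :
    ∃ c : (ℕ → Bool) → X, Continuous c ∧ Function.Injective c ∧
      ∀ σ τ : ℕ → Bool, σ ≠ τ →
        liminf (fun n => edist (f^[n] (c σ)) (f^[n] (c τ))) atTop = 0 ∧
        limsup (fun n => edist (f^[n] (c σ)) (f^[n] (c τ))) atTop ≠ 0 := by
  classical
  set AA : ℕ → (ℕ → Bool) → Set Z := fun m => (chainS f g T hf hg hT m).1 with hAAdef
  set dd : ℕ → (ℕ → Bool) → (ℕ → Bool) → ℝ≥0∞ := fun m => (chainS f g T hf hg hT m).2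
    with hdddef
  have hgood : ∀ m, Good f g T m (AA m) (dd m) := chain_good hf hg hT hTunc
  have hle : ∀ {m m' : ℕ}, m ≤ m' → ∀ σ, AA m' σ ⊆ AA m σ :=
    fun {m m'} h => chain_le hf hg hT hTunc h
  have hstab : ∀ {m m' : ℕ}, m ≤ m' → ∀ {σ τ : ℕ → Bool}, ¬ agree m σ τ →
      dd m' σ τ = dd m σ τ := fun {m m'} h {σ τ} h2 => chain_stable_ge hf hg hT hTunc h h2
  -- choose points
  have hne : ∀ m σ, (AA m σ).Nonempty := fun m σ =>
    nonempty_of_not_countable ((hgood m).pre.unc σ)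
  set pt : (ℕ → Bool) → ℕ → Z := fun σ j => (hne (j + 1) σ).some with hptdef
  have hpt_mem : ∀ σ j, pt σ j ∈ AA (j + 1) σ := fun σ j => (hne (j + 1) σ).some_mem
  have hpt_mem' : ∀ σ {m j}, m ≤ j + 1 → pt σ j ∈ AA m σ := by
    intro σ m j hmj
    exact hle hmj σ (hpt_mem σ j)
  have hsmall : ∀ {m : ℕ}, m ≠ 0 → ∀ σ, EMetric.diam (AA m σ) ≤ (2 : ℝ≥0∞)⁻¹ ^ m :=
    fun {m} hm σ => (hgood m).small hm σ
  -- Cauchy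
  have hcauchy : ∀ σ, CauchySeq (pt σ) := by
    intro σ
    apply cauchySeq_of_edist_le_geometric (2 : ℝ≥0∞)⁻¹ (2 : ℝ≥0∞)⁻¹
      (ENNReal.inv_lt_one.mpr ENNReal.one_lt_two) (ENNReal.inv_ne_top.mpr (by norm_num))
    intro j
    have h1 : pt σ j ∈ AA (j + 1) σ := hpt_mem σ j
    have h2 : pt σ (j + 1) ∈ AA (j + 1) σ := hpt_mem' σ (Nat.le_succ (j + 1))
    calc edist (pt σ j) (pt σ (j + 1)) ≤ EMetric.diam (AA (j + 1) σ) :=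
          EMetric.edist_le_diam_of_mem h1 h2
      _ ≤ (2 : ℝ≥0∞)⁻¹ ^ (j + 1) := hsmall (Nat.succ_ne_zero j) σ
      _ = (2 : ℝ≥0∞)⁻¹ * (2 : ℝ≥0∞)⁻¹ ^ j := by rw [pow_succ, mul_comm]
  have hlim : ∀ σ, ∃ z : Z, Tendsto (pt σ) atTop (𝓝 z) :=
    fun σ => cauchySeq_tendsto_of_complete (hcauchy σ)
  set cl : (ℕ → Bool) → Z := fun σ => (hlim σ).choose with hcldef
  have hcl : ∀ σ, Tendsto (pt σ) atTop (𝓝 (cl σ)) := fun σ => (hlim σ).choose_spec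
  have hcl_mem : ∀ σ m, cl σ ∈ closure (AA m σ) := by
    intro σ m
    apply mem_closure_of_tendsto (hcl σ)
    filter_upwards [eventually_ge_atTop m] with j hj
    exact hpt_mem' σ (hj.trans (Nat.le_succ j))
  -- continuity of `cl`
  have hcl_dist : ∀ {σ τ : ℕ → Bool} {m : ℕ}, m ≠ 0 → agree m σ τ →
      edist (cl σ) (cl τ) ≤ (2 : ℝ≥0∞)⁻¹ ^ m := by
    intro σ τ m hm hστ
    have h1 : cl σ ∈ closure (AA m σ) := hcl_mem σ m
    have h2 : cl τ ∈ closure (AA m σ) := by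
      rw [(hgood m).pre.factorA σ τ hστ]; exact hcl_mem τ m
    calc edist (cl σ) (cl τ) ≤ EMetric.diam (closure (AA m σ)) :=
          EMetric.edist_le_diam_of_mem h1 h2
      _ = EMetric.diam (AA m σ) := EMetric.diam_closure _
      _ ≤ (2 : ℝ≥0∞)⁻¹ ^ m := hsmall hm σ
  have hcl_cont : Continuous cl := by
    rw [continuous_iff_continuousAt]
    intro σ
    rw [ContinuousAt, EMetric.tendsto_nhds]
    intro e he
    have htend : Tendsto (fun m : ℕ => ((2 : ℝ≥0∞)⁻¹) ^ m) atTop (𝓝 0) :=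
      ENNReal.tendsto_pow_atTop_nhds_zero_of_lt_one (ENNReal.inv_lt_one.mpr ENNReal.one_lt_two)
    obtain ⟨m, hm1, hm2⟩ :=
      ((htend.eventually_lt_const he).and (eventually_ge_atTop 1)).exists
    have hV : IsOpen {τ : ℕ → Bool | agree m τ σ} := by
      have : {τ : ℕ → Bool | agree m τ σ}
          = ⋂ i ∈ Finset.range m, (fun τ : ℕ → Bool => τ i) ⁻¹' {σ i} := by
        ext τ
        simp only [Set.mem_setOf_eq, Set.mem_iInter, Set.mem_preimage, Set.mem_singleton_iff,
          Finset.mem_range]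
        exact ⟨fun h i hi => h i hi, fun h i hi => h i hi⟩
      rw [this]
      exact isOpen_biInter_finset (fun i _ => (continuous_apply i).isOpen_preimage _
        (isOpen_discrete _))
    have hmemV : σ ∈ {τ : ℕ → Bool | agree m τ σ} := agree_refl m σ
    filter_upwards [hV.mem_nhds hmemV] with τ hτ
    calc edist (cl τ) (cl σ) ≤ (2 : ℝ≥0∞)⁻¹ ^ m :=
          hcl_dist (by omega) hτ
      _ < e := hm1
  -- pair properties
  have hpair : ∀ σ τ : ℕ → Bool, σ ≠ τ →
      liminf (uu f g (cl σ) (cl τ)) atTop = 0 ∧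
      limsup (uu f g (cl σ) (cl τ)) atTop ≠ 0 := by
    intro σ τ hστ
    have hdis : ∃ i, σ i ≠ τ i := by
      by_contra hcon
      push_neg at hcon
      exact hστ (funext hcon)
    obtain ⟨i₀, hi₀⟩ := hdis
    set m₀ := i₀ + 1 with hm₀def
    have hnag : ¬ agree m₀ σ τ := fun h => hi₀ (h i₀ (Nat.lt_succ_self i₀))
    have hm₀pos : m₀ ≠ 0 := Nat.succ_ne_zero i₀
    set δstar := dd m₀ σ τ with hδstardef
    have hδpos : 0 < δstar := (hgood m₀).pre.pos σ τ hnag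
    have hmain : ∀ m, m₀ ≤ m →
        (∃ j, m ≤ j ∧ uu f g (cl σ) (cl τ) j < (m : ℝ≥0∞)⁻¹) ∧
        (∃ j, m ≤ j ∧ δstar < uu f g (cl σ) (cl τ) j) := by
      intro m hm
      have hnagm : ¬ agree m σ τ := not_agree_mono hm hnag
      have hmne : m ≠ 0 := by omega
      have := (hgood m).guar hmne σ τ hnagm (cl σ) (hcl_mem σ m) (cl τ) (hcl_mem τ m)
      rw [hstab hm hnag] at this
      exact this
    constructor
    · apply ennreal_eq_zero_of_le_inv
      intro k hk
      apply liminf_le_of_frequently_le'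
      rw [frequently_atTop]
      intro N
      set m := max (max k N) m₀ with hmdef
      obtain ⟨j, hj1, hj2⟩ := (hmain m (le_max_right _ _)).1
      refine ⟨j, le_trans (le_trans (le_max_right k N) (le_max_left _ _)) hj1, ?_⟩
      refine le_trans hj2.le ?_
      apply ENNReal.inv_le_inv'
      exact_mod_cast le_trans (le_max_left k N) (le_max_left _ _)
    · have hfreq : ∃ᶠ j in atTop, δstar ≤ uu f g (cl σ) (cl τ) j := by
        rw [frequently_atTop]
        intro N
        obtain ⟨j, hj1, hj2⟩ := (hmain (max N m₀) (le_max_right _ _)).2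
        exact ⟨j, le_trans (le_max_left N m₀) hj1, hj2.le⟩
      have : δstar ≤ limsup (uu f g (cl σ) (cl τ)) atTop :=
        le_limsup_of_frequently_le' hfreq
      exact fun h0 => absurd (lt_of_lt_of_le hδpos this) (by rw [h0]; exact lt_irrefl 0)
  -- conclusion
  refine ⟨fun σ => g (cl σ), hg.comp hcl_cont, ?_, ?_⟩
  · intro σ τ heq
    by_contra hστ
    have h2 := (hpair σ τ hστ).2
    apply h2
    have heq' : g (cl σ) = g (cl τ) := heq
    have : uu f g (cl σ) (cl τ) = fun _ => (0 : ℝ≥0∞) := by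
      funext n
      show edist (f^[n] (g (cl σ))) (f^[n] (g (cl τ))) = 0
      rw [heq']
      simp
    rw [this, limsup_const]
  · intro σ τ hστ
    exact hpair σ τ hστ

end LYAux

/-- Every Li–Yorke chaotic analytic dynamical system has a scrambled Cantor set. -/
theorem stmt_7 {X : Type*} [MetricSpace X]
    (hX : ∃ C : Set (ℕ → ℕ), IsClosed C ∧
      ∃ g : (ℕ → ℕ) → X, ContinuousOn g C ∧ g '' C = Set.univ)
    (f : X → X) (hf : Continuous f)
    (Y : Set X) (hYunc : ¬ Y.Countable) (hY : Scrambled f Y) :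
    ∃ C : Set X, Nonempty ((ℕ → Bool) ≃ₜ C) ∧ Scrambled f C := by
  classical
  obtain ⟨C, hCcl, g, hgc, hgsurj⟩ := hX
  haveI hCpolish : PolishSpace (↥C) := IsClosed.polishSpace hCcl
  letI := TopologicalSpace.upgradeIsCompletelyMetrizable (↥C)
  set g' : ↥C → X := C.restrict g with hg'def
  have hg' : Continuous g' := hgc.restrict
  -- build the lifted scrambled set
  have hsur : ∀ y : X, ∃ z : ↥C, g' z = y := by
    intro y
    have hy : y ∈ g '' C := by rw [hgsurj]; trivial
    obtain ⟨z, hz, hzy⟩ := hy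
    exact ⟨⟨z, hz⟩, hzy⟩
  choose t ht using hsur
  set T : Set ↥C := t '' Y with hTdef
  have hYT : g' '' T = Y := by
    rw [hTdef, Set.image_image]
    have : ∀ y ∈ Y, g' (t y) = y := fun y _ => ht y
    rw [Set.image_congr this, Set.image_id']
  have hTunc : ¬ T.Countable := by
    intro h
    apply hYunc
    rw [← hYT]
    exact h.image g'
  have hT : LYAux.PairHyp f g' T := by
    rintro a ⟨y₁, hy₁, rfl⟩ b ⟨y₂, hy₂, rfl⟩ hab
    have hy12 : y₁ ≠ y₂ := fun h => hab (by rw [h])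
    have hp := hY y₁ hy₁ y₂ hy₂ hy12
    constructor
    · show Filter.liminf
        (fun n => edist (f^[n] (g' (t y₁))) (f^[n] (g' (t y₂)))) Filter.atTop = 0
      rw [ht y₁, ht y₂]
      exact hp.1
    · show Filter.limsup
        (fun n => edist (f^[n] (g' (t y₁))) (f^[n] (g' (t y₂)))) Filter.atTop ≠ 0
      rw [ht y₁, ht y₂]
      exact hp.2
  obtain ⟨c, hc_cont, hc_inj, hc_pairs⟩ := LYAux.core hf hg' hTunc hT
  refine ⟨Set.range c, ⟨?_⟩, ?_⟩
  · have hcont : Continuous fun σ : ℕ → Bool =>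
        ((Equiv.ofInjective c hc_inj) σ : ↥(Set.range c)) := by
      apply Continuous.subtype_mk hc_cont
    exact Continuous.homeoOfEquivCompactToT2 (f := Equiv.ofInjective c hc_inj) hcont
  · rintro x ⟨σ, rfl⟩ y ⟨τ, rfl⟩ hxy
    have hστ : σ ≠ τ := fun h => hxy (by rw [h])
    obtain ⟨h1, h2⟩ := hc_pairs σ τ hστ
    exact ⟨h1, h2⟩
end

section
/- Let F be a meager equivalence relation on Cantor space 2^ℕ (meager as a subset of 2^ℕ × 2^ℕ). Then there is a continuous injection ψ : 2^ℕ → 2^ℕ sending distinct points to F-inequivalent points; in particular, F has a perfect partial transversal. -/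
open Filter Topology

namespace Myc

abbrev X := ℕ → Bool

/-- The cylinder set determined by a finite string. -/
def cyl (u : List Bool) : Set X := {x | ∀ i < u.length, x i = u.getD i false}

lemma getD_prefix {u v : List Bool} (h : u <+: v) {i : ℕ} (hi : i < u.length) :
    v.getD i false = u.getD i false := by
  rw [List.getD_eq_getElem _ _ (lt_of_lt_of_le hi h.length_le),
    List.getD_eq_getElem _ _ hi, h.getElem hi]

lemma cyl_anti {u v : List Bool} (h : u <+: v) : cyl v ⊆ cyl u := by
  intro x hx i hi
  rw [← getD_prefix h hi]
  exact hx i (lt_of_lt_of_le hi h.length_le)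

lemma mem_cyl_self (u : List Bool) : (fun i => u.getD i false) ∈ cyl u := fun i _ => rfl

lemma isOpen_cyl (u : List Bool) : IsOpen (cyl u) := by
  have : cyl u = ⋂ i : Fin u.length, (fun x : X => x i) ⁻¹' {u.getD i false} := by
    ext x
    simp only [cyl, Set.mem_iInter, Set.mem_preimage, Set.mem_singleton_iff, Set.mem_setOf_eq,
      Fin.forall_iff]
  rw [this]
  exact isOpen_iInter_of_finite fun i =>
    (continuous_apply (i : ℕ)).isOpen_preimage _ (isOpen_discrete _)

lemma mem_cyl_ofFn (x : X) (m : ℕ) : x ∈ cyl (List.ofFn fun i : Fin m => x i) := by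
  intro i hi
  rw [List.length_ofFn] at hi
  rw [List.getD_eq_getElem _ _ (by simpa using hi), List.getElem_ofFn]

lemma cyl_ofFn_subset {U : Set X} (hU : IsOpen U) {x : X} (hx : x ∈ U) :
    ∃ m, cyl (List.ofFn fun i : Fin m => x i) ⊆ U := by
  obtain ⟨I, u, hIu, hsub⟩ := isOpen_pi_iff.mp hU x hx
  refine ⟨(I.sup id) + 1, fun y hy => hsub fun i hiI => ?_⟩
  have hi : i < I.sup id + 1 := Nat.lt_succ_of_le (Finset.le_sup (f := id) hiI)
  have := hy i (by simpa using hi)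
  rw [List.getD_eq_getElem _ _ (by simpa using hi), List.getElem_ofFn] at this
  rw [this]
  exact (hIu i hiI).2

lemma prefix_ofFn {u : List Bool} {x : X} (hx : x ∈ cyl u) {m : ℕ} (hm : u.length ≤ m) :
    u <+: List.ofFn fun i : Fin m => x i := by
  have : u = (List.ofFn fun i : Fin m => x i).take u.length := by
    apply List.ext_getElem
    · simp [List.length_take, List.length_ofFn, Nat.min_eq_left hm]
    · intro i hi _
      rw [List.getElem_take, List.getElem_ofFn]
      have := hx i hi
      rw [List.getD_eq_getElem _ _ hi] at this
      exact this.symm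
  rw [this]
  exact List.take_prefix _ _

lemma cyl_ofFn_mono (x : X) {m₁ m : ℕ} (h : m₁ ≤ m) :
    cyl (List.ofFn fun i : Fin m => x i) ⊆ cyl (List.ofFn fun i : Fin m₁ => x i) :=
  cyl_anti (prefix_ofFn (mem_cyl_ofFn x m₁) (by simpa using h))

end Myc
namespace Myc

/-- Density step: extend two strings so the product cylinder enters a dense open set. -/
lemma densityStep {D : Set (X × X)} (hDo : IsOpen D) (hDd : Dense D) (u v : List Bool) :
    ∃ u' v' : List Bool, u <+: u' ∧ v <+: v' ∧ cyl u' ×ˢ cyl v' ⊆ D := by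
  have hne : (cyl u ×ˢ cyl v).Nonempty :=
    ⟨(_, _), mem_cyl_self u, mem_cyl_self v⟩
  have hop : IsOpen (cyl u ×ˢ cyl v) := (isOpen_cyl u).prod (isOpen_cyl v)
  obtain ⟨p, hpD, hpc⟩ := hDd.exists_mem_open hop hne
  have hop2 : IsOpen (D ∩ cyl u ×ˢ cyl v) := hDo.inter hop
  obtain ⟨U, V, hU, hV, hp1, hp2, hUV⟩ := isOpen_prod_iff.mp hop2 p.1 p.2 ⟨hpD, hpc⟩
  obtain ⟨m₁, hm₁⟩ := cyl_ofFn_subset hU hp1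
  obtain ⟨m₂, hm₂⟩ := cyl_ofFn_subset hV hp2
  set m := max (max m₁ m₂) (max u.length v.length) with hm
  refine ⟨List.ofFn fun i : Fin m => p.1 i, List.ofFn fun i : Fin m => p.2 i,
    prefix_ofFn hpc.1 ((le_max_left _ _).trans (le_max_right _ _)),
    prefix_ofFn hpc.2 ((le_max_right _ _).trans (le_max_right _ _)), ?_⟩
  intro q hq
  have h1 : q.1 ∈ U := hm₁ (cyl_ofFn_mono p.1 (le_trans (le_max_left _ _) (le_max_left _ _)) hq.1)
  have h2 : q.2 ∈ V := hm₂ (cyl_ofFn_mono p.2 (le_trans (le_max_right _ _) (le_max_left _ _)) hq.2)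
  exact (hUV ⟨h1, h2⟩).1

/-- Iterate the density step over a list of pairs of nodes. -/
lemma listStep {D : Set (X × X)} (hDo : IsOpen D) (hDd : Dense D) {T : Type} [DecidableEq T]
    (u : T → List Bool) (L : List (T × T)) :
    ∃ u' : T → List Bool, (∀ t, u t <+: u' t) ∧
      ∀ p ∈ L, p.1 ≠ p.2 → cyl (u' p.1) ×ˢ cyl (u' p.2) ⊆ D := by
  induction L with
  | nil => exact ⟨u, fun t => List.prefix_refl _, by simp⟩
  | cons hd tl ih =>
    obtain ⟨u', hpre, hL⟩ := ih
    by_cases hst : hd.1 = hd.2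
    · exact ⟨u', hpre, by
        intro p hp hne
        rcases List.mem_cons.mp hp with rfl | hp
        · exact absurd hst hne
        · exact hL p hp hne⟩
    · obtain ⟨a, b, ha, hb, hab⟩ := densityStep hDo hDd (u' hd.1) (u' hd.2)
      set u'' := Function.update (Function.update u' hd.1 a) hd.2 b with hu''
      have hpre' : ∀ t, u' t <+: u'' t := by
        intro t
        rw [hu'']
        by_cases h2 : t = hd.2
        · subst h2; rw [Function.update_self]; exact hb
        · rw [Function.update_of_ne h2]
          by_cases h1 : t = hd.1
          · subst h1; rw [Function.update_self]; exact ha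
          · rw [Function.update_of_ne h1]
      refine ⟨u'', fun t => (hpre t).trans (hpre' t), ?_⟩
      intro p hp hne
      rcases List.mem_cons.mp hp with rfl | hp
      · have e1 : u'' p.1 = a := by
          rw [hu'', Function.update_of_ne hst, Function.update_self]
        have e2 : u'' p.2 = b := by rw [hu'', Function.update_self]
        rw [e1, e2]; exact hab
      · exact fun q hq => hL p hp hne ⟨cyl_anti (hpre' p.1) hq.1, cyl_anti (hpre' p.2) hq.2⟩

/-- Extend a family of strings (finite index) so all distinct product cylinders enter D. -/
lemma multiStep {D : Set (X × X)} (hDo : IsOpen D) (hDd : Dense D) {T : Type} [Fintype T]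
    [DecidableEq T] (u : T → List Bool) :
    ∃ u' : T → List Bool, (∀ t, u t <+: u' t) ∧
      ∀ s t : T, s ≠ t → cyl (u' s) ×ˢ cyl (u' t) ⊆ D := by
  obtain ⟨u', h1, h2⟩ := listStep hDo hDd u (Finset.univ : Finset (T × T)).toList
  exact ⟨u', h1, fun s t hst => h2 (s, t) (by simp) hst⟩

end Myc

/-- Mycielski's theorem for a meager equivalence relation on Cantor space: there is a
continuous injection sending distinct points to inequivalent points; in particular a
perfect partial transversal. -/
theorem stmt_12 (F : (ℕ → Bool) → (ℕ → Bool) → Prop) (hF : Equivalence F)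
    (hmeager : IsMeagre {p : (ℕ → Bool) × (ℕ → Bool) | F p.1 p.2}) :
    ∃ ψ : (ℕ → Bool) → (ℕ → Bool), Continuous ψ ∧ Function.Injective ψ ∧
      (∀ c d : ℕ → Bool, c ≠ d → ¬ F (ψ c) (ψ d)) ∧
      Perfect (Set.range ψ) ∧
      (∀ x ∈ Set.range ψ, ∀ y ∈ Set.range ψ, x ≠ y → ¬ F x y) := by
  classical
  obtain ⟨S, hSo, hSd, hScnt, hSsub⟩ := mem_residual_iff.mp hmeager
  obtain ⟨f, hf⟩ := (hScnt.insert Set.univ).exists_eq_range ⟨Set.univ, Set.mem_insert _ _⟩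
  have hmemS : ∀ n, f n ∈ insert Set.univ S := fun n => hf ▸ Set.mem_range_self n
  have hDo : ∀ n, IsOpen (f n) := by
    intro n
    rcases Set.mem_insert_iff.mp (hmemS n) with h | h
    · rw [h]; exact isOpen_univ
    · exact hSo _ h
  have hDd : ∀ n, Dense (f n) := by
    intro n
    rcases Set.mem_insert_iff.mp (hmemS n) with h | h
    · rw [h]; exact dense_univ
    · exact hSd _ h
  have hDsub : ∀ p : Myc.X × Myc.X, (∀ n, p ∈ f n) → ¬ F p.1 p.2 := by
    intro p hp hFp
    have hpS : p ∈ ⋂₀ S := by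
      intro t ht
      have : t ∈ Set.range f := hf ▸ Set.mem_insert_of_mem _ ht
      obtain ⟨n, rfl⟩ := this
      exact hp n
    exact hSsub hpS hFp
  -- finite intersections
  set E : ℕ → Set (Myc.X × Myc.X) := fun n => ⋂ k ∈ Set.Iic n, f k with hE
  have hEo : ∀ n, IsOpen (E n) :=
    fun n => (Set.finite_Iic n).isOpen_biInter fun k _ => hDo k
  have hEd : ∀ n, Dense (E n) :=
    fun n => dense_biInter_of_isOpen (fun k _ => hDo k) (Set.to_countable _) fun k _ => hDd k
  have hEsub : ∀ k n, k ≤ n → E n ⊆ f k := fun k n hk => Set.biInter_subset_of_mem hk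
  -- the scheme
  have hstep : ∀ n (g : (Fin n → Bool) → List Bool),
      ∃ g' : (Fin (n + 1) → Bool) → List Bool,
        (∀ v, g (v ∘ Fin.castSucc) ++ [v (Fin.last n)] <+: g' v) ∧
        ∀ v w, v ≠ w → Myc.cyl (g' v) ×ˢ Myc.cyl (g' w) ⊆ E n := fun n g =>
    Myc.multiStep (hEo n) (hEd n) fun v => g (v ∘ Fin.castSucc) ++ [v (Fin.last n)]
  choose step h1 h2 using hstep
  set Φ : ∀ n, (Fin n → Bool) → List Bool :=
    fun n => Nat.rec (motive := fun n => (Fin n → Bool) → List Bool) (fun _ => []) step n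
    with hΦ
  set σ : Myc.X → ℕ → List Bool := fun x n => Φ n (fun i : Fin n => x i) with hσ
  have hchain1 : ∀ (x : Myc.X) n, σ x n ++ [x n] <+: σ x (n + 1) := by
    intro x n
    have h := h1 n (Φ n) (fun i : Fin (n + 1) => x i)
    have e : ((fun i : Fin (n + 1) => x i) ∘ Fin.castSucc) = fun i : Fin n => x i := by
      funext i; simp
    rw [e] at h
    simpa using h
  have hchain : ∀ (x : Myc.X) m n, m ≤ n → σ x m <+: σ x n := by
    intro x m n hmn
    induction n, hmn using Nat.le_induction with
    | base => exact List.prefix_refl _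
    | succ n hmn ih => exact ih.trans ((List.prefix_append _ _).trans (hchain1 x n))
  have hlen : ∀ (x : Myc.X) n, n ≤ (σ x n).length := by
    intro x n
    induction n with
    | zero => exact Nat.zero_le _
    | succ n ih =>
      have := (hchain1 x n).length_le
      simp only [List.length_append, List.length_cons, List.length_nil] at this
      omega
  set ψ : Myc.X → Myc.X := fun x k => (σ x (k + 1)).getD k false with hψ
  have hmem : ∀ (x : Myc.X) n, ψ x ∈ Myc.cyl (σ x n) := by
    intro x n i hi
    rcases le_total (i + 1) n with h | h
    · exact (Myc.getD_prefix (hchain x _ _ h)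
        (lt_of_lt_of_le (Nat.lt_succ_self i) (hlen x (i + 1)))).symm
    · exact Myc.getD_prefix (hchain x n (i + 1) h) hi
  have hkey : ∀ c d : Myc.X, c ≠ d → ∀ k, (ψ c, ψ d) ∈ f k := by
    intro c d hcd k
    obtain ⟨n₀, hn₀⟩ : ∃ n, c n ≠ d n := by
      by_contra h
      push_neg at h
      exact hcd (funext h)
    set M := max n₀ k with hM
    have hvw : (fun i : Fin (M + 1) => c i) ≠ (fun i : Fin (M + 1) => d i) := by
      intro h
      apply hn₀
      have := congrFun h ⟨n₀, by omega⟩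
      simpa using this
    have hsub := h2 M (Φ M) _ _ hvw
    have hpair : (ψ c, ψ d) ∈ Myc.cyl (σ c (M + 1)) ×ˢ Myc.cyl (σ d (M + 1)) :=
      Set.mk_mem_prod (hmem c (M + 1)) (hmem d (M + 1))
    exact hEsub k M (le_max_right _ _) (hsub hpair)
  have hne : ∀ c d : Myc.X, c ≠ d → ¬ F (ψ c) (ψ d) :=
    fun c d h => hDsub (ψ c, ψ d) (hkey c d h)
  have hinj : Function.Injective ψ := by
    intro c d h
    by_contra hcd
    exact hne c d hcd (h ▸ hF.refl (ψ c))
  have hcont : Continuous ψ := by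
    apply continuous_pi
    intro k
    have e : (fun x => ψ x k) =
        (fun v : Fin (k + 1) → Bool => (Φ (k + 1) v).getD k false) ∘
          (fun (x : Myc.X) (i : Fin (k + 1)) => x i) := rfl
    rw [e]
    exact continuous_of_discreteTopology.comp (continuous_pi fun i => continuous_apply _)
  have hloc : ∀ (z x : Myc.X) k, (∀ i < k + 1, z i = x i) → ψ z k = ψ x k := by
    intro z x k h
    have e : (fun i : Fin (k + 1) => z i) = fun i : Fin (k + 1) => x i := by
      funext i; exact h i i.isLt
    show (Φ (k + 1) fun i : Fin (k + 1) => z i).getD k false = _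
    rw [e]
  refine ⟨ψ, hcont, hinj, hne, ⟨(isCompact_range hcont).isClosed, ?_⟩, ?_⟩
  · rw [preperfect_iff_nhds]
    rintro y ⟨x, rfl⟩ U hU
    set xs : ℕ → Myc.X := fun n => Function.update x n (!x n) with hxs
    have htd : Tendsto (fun n => ψ (xs n)) atTop (𝓝 (ψ x)) := by
      rw [tendsto_pi_nhds]
      intro k
      have hev : ∀ᶠ n in atTop, ψ (xs n) k = ψ x k :=
        eventually_atTop.2 ⟨k + 1, fun n hn =>
          hloc _ _ k fun i hi => Function.update_of_ne (by omega) _ _⟩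
      exact Tendsto.congr' (hev.mono fun n h => h.symm) tendsto_const_nhds
    have hevU : ∀ᶠ n in atTop, ψ (xs n) ∈ U := htd hU
    obtain ⟨n, hn⟩ := hevU.exists
    have hxsne : xs n ≠ x := by
      intro h
      have := congrFun h n
      rw [hxs] at this
      simp at this
    exact ⟨ψ (xs n), ⟨hn, Set.mem_range_self _⟩, hinj.ne hxsne⟩
  · rintro _ ⟨c, rfl⟩ _ ⟨d, rfl⟩ hxy
    exact hne c d fun h => hxy (h ▸ rfl)
end
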